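/- arXiv:2408.02851 — 13 statements merged into one kernel-verified Lean document; each statement's English description precedes it below -/
import Mathlib

section
/- Let A be the set of P-positions of an altered Wythoff game with alteration sets 𝒫, 𝒩 contained in the box [0, m_x−1] × [0, m_y−1], and let t ≥ m_x be a natural column. Then for all y with 0 ≤ y < ℓ_t, row_t[y] is TRUE (i.e., there exists x ≤ t with (x,y) ∈ A), and for all y > u_t, row_t[y] is FALSE (i.e., there is no x ≤ t with (x,y) ∈ A). -/
/-- A Wythoff move from `p` to `q`: remove stones from the first pile, from the
second pile, or the same positive number from both piles. -/
def WMove (p q : ℕ × ℕ) : Prop :=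
  (q.1 < p.1 ∧ q.2 = p.2) ∨ (q.1 = p.1 ∧ q.2 < p.2) ∨
    (∃ k : ℕ, 0 < k ∧ k ≤ p.1 ∧ k ≤ p.2 ∧ q.1 = p.1 - k ∧ q.2 = p.2 - k)

/-- `diag A t y` : the diagonal ending at `(t, y)` contains a P-position,
i.e. `(t - k, y - k) ∈ A` for some `k ≥ 0`. -/
def diag (A : Set (ℕ × ℕ)) (t y : ℕ) : Prop :=
  ∃ k : ℕ, k ≤ t ∧ k ≤ y ∧ (t - k, y - k) ∈ A

/-- `ℓ_t` : the minimum `y` such that `diag A t y` holds. -/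
noncomputable def ell (A : Set (ℕ × ℕ)) (t : ℕ) : ℕ := sInf {y | diag A t y}

/-- `u_t` : the maximum `y` such that `diag A t y` holds. -/
noncomputable def uu (A : Set (ℕ × ℕ)) (t : ℕ) : ℕ := sSup {y | diag A t y}

/-- Lemma 1 (row fill property): after a natural column `t` is computed,
`row_t[y]` is TRUE for all `y < ℓ_t` and FALSE for all `y > u_t`. -/
theorem row_fill_property (P N A : Set (ℕ × ℕ)) (mx my : ℕ)
    (hPfin : P.Finite) (hNfin : N.Finite) (hdisj : Disjoint P N)
    (hbox : P ∪ N ⊆ Set.Iio mx ×ˢ Set.Iio my)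
    (hA : ∀ p : ℕ × ℕ, p ∈ A ↔ (p ∈ P ∨ (p ∉ N ∧ ∀ q, WMove p q → q ∉ A)))
    (t : ℕ) (ht : mx ≤ t) :
    (∀ y, y < ell A t → ∃ x ≤ t, (x, y) ∈ A) ∧
    (∀ y, uu A t < y → ¬ ∃ x ≤ t, (x, y) ∈ A) := by
  classical
  -- each column of A is bounded above
  have colB : ∀ x : ℕ, ∃ B : ℕ, ∀ y, (x, y) ∈ A → y ≤ B := by
    intro x
    have key : ∀ y1 y2, (x, y1) ∈ A → (x, y2) ∈ A → my ≤ y2 → y1 < y2 → False := by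
      intro y1 y2 h1 h2 hmy hlt
      have hnp : (x, y2) ∉ P := by
        intro hp
        have := (hbox (Set.mem_union_left _ hp)).2
        simp only [Set.mem_Iio] at this
        omega
      rcases (hA (x, y2)).mp h2 with hp | ⟨_, hmoves⟩
      · exact hnp hp
      · exact hmoves (x, y1) (Or.inr (Or.inl ⟨rfl, hlt⟩)) h1
    have hsub : {y | (x, y) ∈ A ∧ my ≤ y}.Subsingleton := by
      intro y1 h1 y2 h2
      by_contra hne
      rcases Nat.lt_or_ge y1 y2 with h | h
      · exact key y1 y2 h1.1 h2.1 h2.2 h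
      · have h' : y2 < y1 := lt_of_le_of_ne h (fun e => hne e.symm)
        exact key y2 y1 h2.1 h1.1 h1.2 h'
    obtain ⟨B0, hB0⟩ := hsub.finite.bddAbove
    refine ⟨max B0 my, fun y hy => ?_⟩
    rcases le_or_gt my y with h | h
    · exact le_trans (hB0 ⟨hy, h⟩) (le_max_left _ _)
    · exact le_trans h.le (le_max_right _ _)
  choose B hB using colB
  have hbdd : BddAbove {y | diag A t y} := by
    refine ⟨(Finset.range (t + 1)).sup B + t, fun y hy => ?_⟩
    obtain ⟨k, hk, hky, hmem⟩ := hy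
    have h1 : y - k ≤ B (t - k) := hB _ _ hmem
    have h2 : B (t - k) ≤ (Finset.range (t + 1)).sup B :=
      Finset.le_sup (by simp only [Finset.mem_range]; omega)
    omega
  have hout : ∀ y, (t, y) ∉ P ∪ N := by
    intro y h
    have := (hbox h).1
    simp only [Set.mem_Iio] at this
    omega
  constructor
  · intro y hy
    by_cases hmem : (t, y) ∈ A
    · exact ⟨t, le_refl t, hmem⟩
    have hnN : (t, y) ∉ N := fun h => hout y (Set.mem_union_right _ h)
    have hex : ∃ q, WMove (t, y) q ∧ q ∈ A := by
      by_contra hno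
      push_neg at hno
      exact hmem ((hA _).mpr (Or.inr ⟨hnN, fun q hq => hno q hq⟩))
    obtain ⟨⟨a, b⟩, hq, hqA⟩ := hex
    rcases hq with ⟨h1, h2⟩ | ⟨h1, h2⟩ | ⟨k, hk0, hk1, hk2, hq1, hq2⟩
    · simp only at h1 h2
      exact ⟨a, h1.le, h2 ▸ hqA⟩
    · simp only at h1 h2
      have hd : diag A t b := ⟨0, Nat.zero_le _, Nat.zero_le _, by
        simpa using h1 ▸ hqA⟩
      have h3 : ell A t ≤ b := Nat.sInf_le hd
      omega
    · simp only at hk1 hk2 hq1 hq2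
      have hd : diag A t y := ⟨k, hk1, hk2, by rw [← hq1, ← hq2]; exact hqA⟩
      have h3 : ell A t ≤ y := Nat.sInf_le hd
      omega
  · rintro y hy ⟨x, hx, hxA⟩
    have hd : diag A t (y + (t - x)) := by
      refine ⟨t - x, by omega, by omega, ?_⟩
      rw [show t - (t - x) = x from by omega,
        show y + (t - x) - (t - x) = y from by omega]
      exact hxA
    have h3 : y + (t - x) ≤ uu A t := le_csSup hbdd hd
    omega
end

section
/- For any altered Wythoff game, there exists a natural column t such that column t and every column after it is saturated, i.e., for every t′ ≥ t, diag_{t′}[y] holds if and only if ℓ_{t′} ≤ y ≤ u_{t′}. -/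
/-- Column `t` is saturated if `diag_t[y]` holds exactly when `ℓ_t ≤ y ≤ u_t`. -/
def Saturated (A : Set (ℕ × ℕ)) (t : ℕ) : Prop :=
  ∀ y, diag A t y ↔ (ell A t ≤ y ∧ y ≤ uu A t)

namespace SatAux

variable (A : Set (ℕ × ℕ))

def Rset (t : ℕ) : Set ℕ := {y | ∃ x < t, (x, y) ∈ A}
def Dlow (t y : ℕ) : Prop := ∃ k, 1 ≤ k ∧ k ≤ t ∧ k ≤ y ∧ (t - k, y - k) ∈ A
def Dset (t : ℕ) : Set ℕ := {y | diag A t y}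
def Uset (t : ℕ) : Set ℕ := {y | y ∉ Rset A t ∧ ¬ Dlow A t y}
noncomputable def cc (t : ℕ) : ℕ := sInf (Uset A t)
def Gset (t : ℕ) : Set ℕ := {y | ell A t < y ∧ y < uu A t ∧ y ∉ Dset A t}

variable {A}

/-- hypothesis names used throughout:
  hnat : ∀ x y, mx ≤ x → ((x,y) ∈ A ↔ ∀ q, WMove (x,y) q → q ∉ A)
  hcol : ∀ x, {y | (x,y) ∈ A}.Finite -/

lemma afin (hcol : ∀ x, {y | (x, y) ∈ A}.Finite) (t : ℕ) :
    {p : ℕ × ℕ | p ∈ A ∧ p.1 < t}.Finite := by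
  have : {p : ℕ × ℕ | p ∈ A ∧ p.1 < t} ⊆
      ⋃ x ∈ Set.Iio t, ({x} ×ˢ {y | (x, y) ∈ A}) := by
    rintro ⟨a, b⟩ ⟨hab, hlt⟩
    exact Set.mem_biUnion hlt ⟨rfl, hab⟩
  exact Set.Finite.subset ((Set.finite_Iio t).biUnion
    (fun x _ => (Set.finite_singleton x).prod (hcol x))) this

lemma rfin (hcol : ∀ x, {y | (x, y) ∈ A}.Finite) (t : ℕ) : (Rset A t).Finite := by
  have : Rset A t ⊆ Prod.snd '' {p : ℕ × ℕ | p ∈ A ∧ p.1 < t} := by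
    rintro y ⟨x, hx, hm⟩
    exact ⟨(x, y), ⟨hm, hx⟩, rfl⟩
  exact Set.Finite.subset ((afin hcol t).image _) this

lemma dlowfin (hcol : ∀ x, {y | (x, y) ∈ A}.Finite) (t : ℕ) : {y | Dlow A t y}.Finite := by
  have : {y | Dlow A t y} ⊆
      (fun p : ℕ × ℕ => p.2 + (t - p.1)) '' {p : ℕ × ℕ | p ∈ A ∧ p.1 < t} := by
    rintro y ⟨k, hk1, hkt, hky, hm⟩
    refine ⟨(t - k, y - k), ⟨hm, by omega⟩, by simp; omega⟩
  exact Set.Finite.subset ((afin hcol t).image _) this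

lemma dfin (hcol : ∀ x, {y | (x, y) ∈ A}.Finite) (t : ℕ) : (Dset A t).Finite := by
  have : Dset A t ⊆ {y | (t, y) ∈ A} ∪ {y | Dlow A t y} := by
    rintro y ⟨k, hkt, hky, hm⟩
    rcases Nat.eq_zero_or_pos k with rfl | hk
    · left; simpa using hm
    · right; exact ⟨k, hk, hkt, hky, hm⟩
  exact Set.Finite.subset ((hcol t).union (dlowfin hcol t)) this

lemma usetNonempty (hcol : ∀ x, {y | (x, y) ∈ A}.Finite) (t : ℕ) : (Uset A t).Nonempty := by
  obtain ⟨y, hy⟩ := (((rfin hcol t).union (dlowfin hcol t)).infinite_compl).nonempty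
  exact ⟨y, fun h => hy (Or.inl h), fun h => hy (Or.inr h)⟩

lemma cc_mem_U (hcol : ∀ x, {y | (x, y) ∈ A}.Finite) (t : ℕ) : cc A t ∈ Uset A t :=
  Nat.sInf_mem (usetNonempty hcol t)

lemma dlow_diag {t y : ℕ} (h : Dlow A t y) : diag A t y := by
  obtain ⟨k, _, hkt, hky, hm⟩ := h; exact ⟨k, hkt, hky, hm⟩

lemma diag_iff (t y : ℕ) : diag A t y ↔ (t, y) ∈ A ∨ Dlow A t y := by
  constructor
  · rintro ⟨k, hkt, hky, hm⟩
    rcases Nat.eq_zero_or_pos k with rfl | hk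
    · left; simpa using hm
    · right; exact ⟨k, hk, hkt, hky, hm⟩
  · rintro (h | h)
    · exact ⟨0, by simpa using h⟩
    · exact dlow_diag h

section Nat

variable {mx : ℕ}
variable (hnat : ∀ x y, mx ≤ x → ((x, y) ∈ A ↔ ∀ q, WMove (x, y) q → q ∉ A))
variable (hcol : ∀ x, {y | (x, y) ∈ A}.Finite)
include hnat

lemma memA_iff {t : ℕ} (ht : mx ≤ t) (y : ℕ) :
    (t, y) ∈ A ↔ (y ∉ Rset A t ∧ ¬ Dlow A t y ∧ ∀ y' < y, (t, y') ∉ A) := by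
  rw [hnat t y ht]
  constructor
  · intro h
    refine ⟨?_, ?_, ?_⟩
    · rintro ⟨x, hx, hm⟩
      exact h (x, y) (Or.inl ⟨hx, rfl⟩) hm
    · rintro ⟨k, hk1, hkt, hky, hm⟩
      exact h (t - k, y - k) (Or.inr (Or.inr ⟨k, hk1, hkt, hky, rfl, rfl⟩)) hm
    · intro y' hy' hm
      exact h (t, y') (Or.inr (Or.inl ⟨rfl, hy'⟩)) hm
  · rintro ⟨h1, h2, h3⟩ ⟨a, b⟩ hq hmem
    rcases hq with ⟨hlt, heq⟩ | ⟨heq, hlt⟩ | ⟨k, hk, hkt, hky, e1, e2⟩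
    · simp only at hlt heq; subst heq; exact h1 ⟨a, hlt, hmem⟩
    · simp only at hlt heq; subst heq; exact h3 b hlt hmem
    · simp only at e1 e2; subst e1; subst e2; exact h2 ⟨k, hk, hkt, hky, hmem⟩

include hcol

lemma colA {t : ℕ} (ht : mx ≤ t) (y : ℕ) : (t, y) ∈ A ↔ y = cc A t := by
  obtain ⟨hR, hD⟩ := cc_mem_U hcol t
  have hcA : (t, cc A t) ∈ A := by
    rw [memA_iff hnat ht]
    refine ⟨hR, hD, fun y' hy' hm => ?_⟩
    have : y' ∈ Uset A t := by
      rw [memA_iff hnat ht] at hm; exact ⟨hm.1, hm.2.1⟩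
    have hle : cc A t ≤ y' := Nat.sInf_le this
    omega
  constructor
  · intro h
    have hyU : y ∈ Uset A t := by
      rw [memA_iff hnat ht] at h; exact ⟨h.1, h.2.1⟩
    have h1 : cc A t ≤ y := Nat.sInf_le hyU
    rcases eq_or_lt_of_le h1 with h2 | h2
    · omega
    · rw [memA_iff hnat ht] at h
      exact absurd hcA (h.2.2 _ h2)
  · rintro rfl; exact hcA


omit hnat hcol in
lemma dlow_succ (t y : ℕ) : Dlow A (t + 1) y ↔ ∃ z, diag A t z ∧ z + 1 = y := by
  constructor
  · rintro ⟨k, hk1, hkt, hky, hm⟩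
    refine ⟨y - 1, ⟨k - 1, by omega, by omega, ?_⟩, by omega⟩
    have e1 : t - (k - 1) = t + 1 - k := by omega
    have e2 : y - 1 - (k - 1) = y - k := by omega
    rw [e1, e2]; exact hm
  · rintro ⟨z, ⟨k, hkt, hkz, hm⟩, rfl⟩
    refine ⟨k + 1, by omega, by omega, by omega, ?_⟩
    have e1 : t + 1 - (k + 1) = t - k := by omega
    have e2 : z + 1 - (k + 1) = z - k := by omega
    rw [e1, e2]; exact hm

lemma cc_mem_D {t : ℕ} (ht : mx ≤ t) : cc A t ∈ Dset A t := by
  have : (t, cc A t) ∈ A := (colA hnat hcol ht _).mpr rfl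
  exact ⟨0, by simpa using this⟩

lemma dne {t : ℕ} (ht : mx ≤ t) : (Dset A t).Nonempty := ⟨_, cc_mem_D hnat hcol ht⟩

lemma ell_mem {t : ℕ} (ht : mx ≤ t) : ell A t ∈ Dset A t :=
  Nat.sInf_mem (dne hnat hcol ht)

lemma uu_mem {t : ℕ} (ht : mx ≤ t) : uu A t ∈ Dset A t :=
  Nat.sSup_mem (dne hnat hcol ht) ((dfin hcol t).bddAbove)

omit hnat hcol in
lemma ell_le {t y : ℕ} (h : y ∈ Dset A t) : ell A t ≤ y := Nat.sInf_le h

omit hnat in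
lemma le_uu {t y : ℕ} (h : y ∈ Dset A t) : y ≤ uu A t :=
  le_csSup ((dfin hcol t).bddAbove) h

lemma Drec {t : ℕ} (ht : mx ≤ t) :
    Dset A (t + 1) = insert (cc A (t + 1)) ((· + 1) '' Dset A t) := by
  ext y
  have h1 : y ∈ Dset A (t + 1) ↔ (t + 1, y) ∈ A ∨ Dlow A (t + 1) y := diag_iff _ _
  rw [Set.mem_insert_iff, h1, colA hnat hcol (show mx ≤ t + 1 by omega) y, dlow_succ]
  constructor
  · rintro (h | ⟨z, hz, he⟩)
    · exact Or.inl h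
    · exact Or.inr ⟨z, hz, he⟩
  · rintro (h | ⟨z, hz, he⟩)
    · exact Or.inl h
    · exact Or.inr ⟨z, hz, he⟩

lemma Rrec {t : ℕ} (ht : mx ≤ t) : Rset A (t + 1) = insert (cc A t) (Rset A t) := by
  ext y
  simp only [Rset, Set.mem_setOf_eq, Set.mem_insert_iff]
  constructor
  · rintro ⟨x, hx, hm⟩
    rcases Nat.lt_succ_iff_lt_or_eq.mp hx with h | rfl
    · exact Or.inr ⟨x, h, hm⟩
    · exact Or.inl ((colA hnat hcol ht y).mp hm)
  · rintro (rfl | ⟨x, hx, hm⟩)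
    · exact ⟨t, by omega, (colA hnat hcol ht _).mpr rfl⟩
    · exact ⟨x, by omega, hm⟩

lemma Rsub {T t : ℕ} (hT : mx ≤ T) (h : T ≤ t) :
    Rset A (t + 1) ⊆ Rset A T ∪ {y | ∃ s, T ≤ s ∧ s ≤ t ∧ y = cc A s} := by
  induction t, h using Nat.le_induction with
  | base =>
    rw [Rrec hnat hcol hT]
    rintro y (rfl | hy)
    · exact Or.inr ⟨T, le_rfl, le_rfl, rfl⟩
    · exact Or.inl hy
  | succ t ht ih =>
    rw [Rrec hnat hcol (by omega)]
    rintro y (rfl | hy)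
    · exact Or.inr ⟨t + 1, by omega, le_rfl, rfl⟩
    · rcases ih hy with h | ⟨s, h1, h2, h3⟩
      · exact Or.inl h
      · exact Or.inr ⟨s, h1, by omega, h3⟩

omit hnat hcol in
lemma below_cc {t y : ℕ} (h : y < cc A (t + 1)) :
    y ∈ Rset A (t + 1) ∨ Dlow A (t + 1) y := by
  by_contra h'
  push_neg at h'
  have : cc A (t + 1) ≤ y := Nat.sInf_le ⟨h'.1, h'.2⟩
  omega

lemma cc_ge {t : ℕ} (ht : mx ≤ t) : ell A t ≤ cc A (t + 1) := by
  by_contra h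
  push_neg at h
  obtain ⟨hR, hD⟩ := cc_mem_U hcol (t + 1)
  have hU : cc A (t + 1) ∈ Uset A t := by
    refine ⟨fun ⟨x, hx, hm⟩ => hR ⟨x, by omega, hm⟩, fun hd => ?_⟩
    have : ell A t ≤ cc A (t + 1) := ell_le (dlow_diag hd)
    omega
  have h1 : cc A t ≤ cc A (t + 1) := Nat.sInf_le hU
  have h2 : ell A t ≤ cc A t := ell_le (cc_mem_D hnat hcol ht)
  omega

lemma ell_rec {t : ℕ} (ht : mx ≤ t) :
    ell A (t + 1) = min (cc A (t + 1)) (ell A t + 1) := by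
  apply le_antisymm
  · apply le_min
    · exact ell_le (cc_mem_D hnat hcol (by omega))
    · refine ell_le ?_
      rw [Drec hnat hcol ht]
      exact Set.mem_insert_of_mem _ ⟨_, ell_mem hnat hcol ht, rfl⟩
  · have hm := ell_mem hnat hcol (show mx ≤ t + 1 by omega)
    rw [Drec hnat hcol ht] at hm
    rcases hm with hm | ⟨z, hz, he⟩
    · rw [hm]; exact min_le_left _ _
    · have : ell A t ≤ z := ell_le hz
      have h2 := min_le_right (cc A (t + 1)) (ell A t + 1)
      have he' : z + 1 = ell A (t + 1) := he
      omega

lemma uu_rec {t : ℕ} (ht : mx ≤ t) :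
    uu A (t + 1) = max (cc A (t + 1)) (uu A t + 1) := by
  apply le_antisymm
  · have hm := uu_mem hnat hcol (show mx ≤ t + 1 by omega)
    rw [Drec hnat hcol ht] at hm
    rcases hm with hm | ⟨z, hz, he⟩
    · rw [hm]; exact le_max_left _ _
    · have : z ≤ uu A t := le_uu hcol hz
      have h2 := le_max_right (cc A (t + 1)) (uu A t + 1)
      have he' : z + 1 = uu A (t + 1) := he
      omega
  · apply max_le
    · exact le_uu hcol (cc_mem_D hnat hcol (by omega))
    · refine le_uu hcol ?_
      rw [Drec hnat hcol ht]
      exact Set.mem_insert_of_mem _ ⟨_, uu_mem hnat hcol ht, rfl⟩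

lemma uu_step {t : ℕ} (ht : mx ≤ t) : uu A t + 1 ≤ uu A (t + 1) := by
  rw [uu_rec hnat hcol ht]; omega

lemma umono {s t : ℕ} (hs : mx ≤ s) (h : s ≤ t) : uu A s + (t - s) ≤ uu A t := by
  induction t, h using Nat.le_induction with
  | base => omega
  | succ t ht ih =>
    have := uu_step hnat hcol (show mx ≤ t by omega)
    omega

lemma ellmono {s t : ℕ} (hs : mx ≤ s) (h : s ≤ t) : ell A s ≤ ell A t := by
  induction t, h using Nat.le_induction with
  | base => exact le_refl _
  | succ t ht ih =>
    have h1 := ell_rec hnat hcol (show mx ≤ t by omega)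
    have h2 := cc_ge hnat hcol (show mx ≤ t by omega)
    omega


omit hnat hcol in
lemma gfin (t : ℕ) : (Gset A t).Finite :=
  Set.Finite.subset (Set.finite_Iio (uu A t)) (fun y hy => hy.2.1)

lemma no_create : ∃ T1, mx ≤ T1 ∧ ∀ t, T1 ≤ t → cc A (t + 1) ≤ uu A t + 2 := by
  obtain ⟨B0, hB0⟩ := (rfin hcol mx).bddAbove
  refine ⟨mx + B0 + 1, by omega, fun t htt => ?_⟩
  by_contra hc
  push_neg at hc
  have hut : B0 < uu A t := by
    have := umono hnat hcol (le_refl mx) (show mx ≤ t by omega)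
    omega
  rcases below_cc (show uu A t + 2 < cc A (t + 1) by omega) with hR | hD
  · rcases Rsub hnat hcol (le_refl mx) (show mx ≤ t by omega) hR with h | ⟨s, hs1, hs2, he⟩
    · have := hB0 h
      omega
    · have h1 : cc A s ≤ uu A s := le_uu hcol (cc_mem_D hnat hcol hs1)
      have h2 := umono hnat hcol hs1 hs2
      omega
  · rw [dlow_succ] at hD
    obtain ⟨z, hz, he⟩ := hD
    have : z ≤ uu A t := le_uu hcol hz
    omega

lemma Grec {t : ℕ} (ht : mx ≤ t) (hno : cc A (t + 1) ≤ uu A t + 2) :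
    Gset A (t + 1) = ((· + 1) '' Gset A t) \ {cc A (t + 1)} := by
  have hge := cc_ge hnat hcol ht
  have hellrec := ell_rec hnat hcol ht
  have huurec := uu_rec hnat hcol ht
  ext y
  simp only [Gset, Set.mem_setOf_eq, Set.mem_diff, Set.mem_singleton_iff, Set.mem_image]
  constructor
  · rintro ⟨h1, h2, h3⟩
    have hyne : y ≠ cc A (t + 1) := by
      intro he
      exact h3 (by rw [he]; exact cc_mem_D hnat hcol (show mx ≤ t + 1 by omega))
    have hy1 : ell A t < y := by omega
    have hznd : y - 1 ∉ Dset A t := by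
      intro hzd
      apply h3
      rw [Drec hnat hcol ht]
      exact Set.mem_insert_of_mem _ ⟨y - 1, hzd, by show y - 1 + 1 = y; omega⟩
    have hzne : y - 1 ≠ ell A t := by
      intro he; exact hznd (he ▸ ell_mem hnat hcol ht)
    have hzu : y - 1 ≠ uu A t := by
      intro he; exact hznd (he ▸ uu_mem hnat hcol ht)
    refine ⟨⟨y - 1, ⟨by omega, by omega, hznd⟩, by omega⟩, hyne⟩
  · rintro ⟨⟨z, ⟨hz1, hz2, hz3⟩, he⟩, hne⟩
    have he' : z + 1 = y := he
    refine ⟨by omega, by omega, ?_⟩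
    rw [Drec hnat hcol ht]
    rintro (h | ⟨z', hz', he2⟩)
    · exact hne h
    · have he2' : z' + 1 = y := he2
      have : z' = z := by omega
      exact hz3 (this ▸ hz')

lemma no_fill {t : ℕ} (ht : mx ≤ t) (hno : cc A (t + 1) ≤ uu A t + 2)
    (heq : (Gset A (t + 1)).ncard = (Gset A t).ncard) :
    cc A (t + 1) ∉ (· + 1) '' Gset A t ∧ Gset A (t + 1) = (· + 1) '' Gset A t := by
  have hinj : Function.Injective (· + 1 : ℕ → ℕ) := add_left_injective 1
  have himg : ((· + 1) '' Gset A t).ncard = (Gset A t).ncard :=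
    Set.ncard_image_of_injective _ hinj
  have hifin : ((· + 1) '' Gset A t).Finite := (gfin t).image _
  have hmem : cc A (t + 1) ∉ (· + 1) '' Gset A t := by
    intro hmem
    have := Set.ncard_diff_singleton_of_mem hmem
    rw [Grec hnat hcol ht hno] at heq
    have hpos : 0 < ((· + 1) '' Gset A t).ncard :=
      (Set.ncard_pos hifin).mpr ⟨_, hmem⟩
    omega
  refine ⟨hmem, ?_⟩
  rw [Grec hnat hcol ht hno, Set.diff_singleton_eq_self hmem]

lemma class2 {t : ℕ} (ht : mx ≤ t) (hno : cc A (t + 1) ≤ uu A t + 2)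
    (hnofill : cc A (t + 1) ∉ (· + 1) '' Gset A t) :
    cc A (t + 1) = ell A t ∨ cc A (t + 1) = uu A t + 2 := by
  have hge := cc_ge hnat hcol ht
  have hnd : cc A (t + 1) ∉ (· + 1) '' Dset A t := by
    rintro ⟨z, hz, he⟩
    have he' : z + 1 = cc A (t + 1) := he
    have := (cc_mem_U hcol (t + 1)).2
    exact this ((dlow_succ _ _).mpr ⟨z, hz, he'⟩)
  by_contra hcon
  push_neg at hcon
  obtain ⟨h1, h2⟩ := hcon
  have hlt : ell A t < cc A (t + 1) := by omega
  have hle : cc A (t + 1) ≤ uu A t + 1 := by omega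
  set z := cc A (t + 1) - 1 with hzdef
  have hznd : z ∉ Dset A t := fun h => hnd ⟨z, h, by show z + 1 = cc A (t + 1); omega⟩
  have hz1 : z ≠ ell A t := fun h => hznd (h ▸ ell_mem hnat hcol ht)
  have hz2 : z ≠ uu A t := fun h => hznd (h ▸ uu_mem hnat hcol ht)
  have hzg : z ∈ Gset A t := ⟨by omega, by omega, hznd⟩
  exact hnofill ⟨z, hzg, by show z + 1 = cc A (t + 1); omega⟩

omit hnat hcol in
lemma sInf_image_succ {S : Set ℕ} (hne : S.Nonempty) :
    sInf ((· + 1) '' S) = sInf S + 1 := by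
  apply le_antisymm
  · exact Nat.sInf_le ⟨sInf S, Nat.sInf_mem hne, rfl⟩
  · have h1 : ((· + 1) '' S).Nonempty := hne.image _
    obtain ⟨z, hz, he⟩ := Nat.sInf_mem h1
    have he' : z + 1 = sInf ((· + 1) '' S) := he
    have := Nat.sInf_le hz
    omega

end Nat

end SatAux

open SatAux in
/-- Saturation Lemma: there exists a natural column `t` such that `t` and all
subsequent columns are saturated. -/
theorem saturation_lemma (P N A : Set (ℕ × ℕ)) (mx my : ℕ)
    (hPfin : P.Finite) (hNfin : N.Finite) (hdisj : Disjoint P N)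
    (hbox : P ∪ N ⊆ Set.Iio mx ×ˢ Set.Iio my)
    (hA : ∀ p : ℕ × ℕ, p ∈ A ↔ (p ∈ P ∨ (p ∉ N ∧ ∀ q, WMove p q → q ∉ A))) :
    ∃ t, mx ≤ t ∧ ∀ t', t ≤ t' → Saturated A t' := by
  classical
  -- basic consequences of the box hypothesis
  have hnotPN : ∀ x y : ℕ, (mx ≤ x ∨ my ≤ y) → ((x, y) ∉ P ∧ (x, y) ∉ N) := by
    intro x y h
    constructor <;> intro hm
    · have := hbox (Or.inl hm)
      simp only [Set.mem_prod, Set.mem_Iio] at this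
      omega
    · have := hbox (Or.inr hm)
      simp only [Set.mem_prod, Set.mem_Iio] at this
      omega
  have hAmove : ∀ x y : ℕ, (mx ≤ x ∨ my ≤ y) →
      ((x, y) ∈ A ↔ ∀ q, WMove (x, y) q → q ∉ A) := by
    intro x y h
    obtain ⟨h1, h2⟩ := hnotPN x y h
    rw [hA (x, y)]
    simp [h1, h2]
  have hnat : ∀ x y : ℕ, mx ≤ x → ((x, y) ∈ A ↔ ∀ q, WMove (x, y) q → q ∉ A) :=
    fun x y hx => hAmove x y (Or.inl hx)
  -- each column of A is finite
  have hcol : ∀ x, {y | (x, y) ∈ A}.Finite := by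
    intro x
    have key : ∀ b b' : ℕ, b < b' → (x, b) ∈ A → (x, b') ∈ A → my ≤ b' → False := by
      intro b b' hlt hm hm' hmy
      exact (hAmove x b' (Or.inr hmy)).mp hm' (x, b) (Or.inr (Or.inl ⟨rfl, hlt⟩)) hm
    have hsub : {y | (x, y) ∈ A} ⊆ Set.Iio my ∪ {y | (x, y) ∈ A ∧ my ≤ y} := by
      intro y hy
      rcases Nat.lt_or_ge y my with h | h
      · exact Or.inl h
      · exact Or.inr ⟨hy, h⟩
    refine Set.Finite.subset (Set.Finite.union (Set.finite_Iio my) ?_) hsub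
    apply Set.Subsingleton.finite
    intro b hb b' hb'
    by_contra hne
    rcases lt_trichotomy b b' with h | h | h
    · exact key b b' h hb.1 hb'.1 hb'.2
    · exact hne h
    · exact key b' b h hb'.1 hb.1 hb.2
  -- no creation of gaps after T1
  obtain ⟨T1, hT1mx, hT1⟩ := no_create hnat hcol
  -- gap count is eventually constant
  have gstep : ∀ t, T1 ≤ t → (Gset A (t + 1)).ncard ≤ (Gset A t).ncard := by
    intro t ht'
    rw [Grec hnat hcol (le_trans hT1mx ht') (hT1 t ht')]
    calc ((· + 1) '' Gset A t \ {cc A (t + 1)}).ncard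
        ≤ ((· + 1) '' Gset A t).ncard := Set.ncard_diff_singleton_le _ _
      _ = (Gset A t).ncard := Set.ncard_image_of_injective _ (add_left_injective 1)
  have gmono : ∀ s t, T1 ≤ s → s ≤ t → (Gset A t).ncard ≤ (Gset A s).ncard := by
    intro s t hs h
    induction t, h using Nat.le_induction with
    | base => exact le_refl _
    | succ t ht ih => exact le_trans (gstep t (by omega)) ih
  obtain ⟨N0, hN0⟩ : ∃ n, (Gset A (T1 + n)).ncard = sInf (Set.range fun n => (Gset A (T1 + n)).ncard) := by
    have := Nat.sInf_mem (Set.range_nonempty fun n => (Gset A (T1 + n)).ncard)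
    obtain ⟨n, hn⟩ := this
    exact ⟨n, hn⟩
  set V := sInf (Set.range fun n => (Gset A (T1 + n)).ncard) with hVdef
  set T2 := T1 + N0 with hT2def
  have hT2T1 : T1 ≤ T2 := by omega
  have hT2mx : mx ≤ T2 := by omega
  have hconst : ∀ t, T2 ≤ t → (Gset A t).ncard = V := by
    intro t ht
    apply le_antisymm
    · rw [← hN0]
      exact gmono T2 t (by omega) ht
    · have het : T1 + (t - T1) = t := by omega
      have : (Gset A t).ncard ∈ Set.range fun n => (Gset A (T1 + n)).ncard :=
        ⟨t - T1, by show (Gset A (T1 + (t - T1))).ncard = (Gset A t).ncard; rw [het]⟩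
      exact Nat.sInf_le this
  -- the eventual gap count V must be zero
  have hV0 : V = 0 := by
    by_contra hVne
    have hGne : ∀ t, T2 ≤ t → (Gset A t).Nonempty := by
      intro t ht
      refine (Set.ncard_pos (gfin t)).mp ?_
      rw [hconst t ht]
      omega
    have hnofill : ∀ t, T2 ≤ t →
        cc A (t + 1) ∉ (· + 1) '' Gset A t ∧ Gset A (t + 1) = (· + 1) '' Gset A t := by
      intro t ht
      exact no_fill hnat hcol (by omega) (hT1 t (by omega))
        (by rw [hconst t ht, hconst (t + 1) (by omega)])
    have hclass : ∀ t, T2 ≤ t → cc A (t + 1) = ell A t ∨ cc A (t + 1) = uu A t + 2 := by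
      intro t ht
      exact class2 hnat hcol (by omega) (hT1 t (by omega)) (hnofill t ht).1
    set mm : ℕ → ℕ := fun t => sInf (Gset A t) with hmmdef
    have hmmem : ∀ t, T2 ≤ t → mm t ∈ Gset A t := fun t ht => Nat.sInf_mem (hGne t ht)
    have hmshift : ∀ t, T2 ≤ t → mm (t + 1) = mm t + 1 := by
      intro t ht
      show sInf (Gset A (t + 1)) = sInf (Gset A t) + 1
      rw [(hnofill t ht).2]
      exact sInf_image_succ (hGne t ht)
    have hmlin : ∀ t, T2 ≤ t → mm t = mm T2 + (t - T2) := by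
      intro t ht
      induction t, ht using Nat.le_induction with
      | base => omega
      | succ t ht ih =>
        rw [hmshift t ht]
        omega
    have hab : ∀ t, T2 ≤ t → cc A (t + 1) = ell A t → cc A (t + 2) = uu A (t + 1) + 2 := by
      intro t ht ha
      rcases hclass (t + 1) (by omega) with h | h
      · exfalso
        have hRr : Rset A (t + 2) = insert (cc A (t + 1)) (Rset A (t + 1)) :=
          Rrec hnat hcol (by omega)
        have hcnR : cc A (t + 2) ∉ Rset A (t + 2) := (cc_mem_U hcol (t + 2)).1
        have hne : cc A (t + 2) ≠ cc A (t + 1) := by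
          intro he
          apply hcnR
          rw [hRr, he]
          exact Set.mem_insert _ _
        have hellrec : ell A (t + 1) = min (cc A (t + 1)) (ell A t + 1) :=
          ell_rec hnat hcol (by omega)
        have : ell A (t + 1) = cc A (t + 1) := by
          rw [hellrec, ha]; omega
        exact hne (h.trans this)
      · exact h
    set q : ℕ → Prop := fun s => T2 ≤ s ∧ cc A (s + 1) = uu A s + 2 with hqdef
    haveI hdec : DecidablePred q := Classical.decPred q
    have hq_or : ∀ t, T2 ≤ t → q t ∨ q (t + 1) := by
      intro t ht
      rcases hclass t ht with h | h
      · exact Or.inr ⟨by omega, hab t ht h⟩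
      · exact Or.inl ⟨ht, h⟩
    have hqinf : {s | q s}.Infinite := by
      apply Set.infinite_of_not_bddAbove
      rintro ⟨b, hb⟩
      have hbt : max (b + 1) T2 ≥ T2 := le_max_right _ _
      rcases hq_or _ hbt with h | h
      · have := hb h
        have : max (b + 1) T2 ≤ b := this
        have := le_max_left (b + 1) T2
        omega
      · have := hb h
        have : max (b + 1) T2 + 1 ≤ b := this
        have := le_max_left (b + 1) T2
        omega
    have hlu : ∀ t, mx ≤ t → ell A t ≤ uu A t :=
      fun t ht => le_uu hcol (ell_mem hnat hcol ht)
    have hcnt0 : ∀ s, s ≤ T2 → Nat.count q s = 0 := by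
      intro s hs
      induction s with
      | zero => exact Nat.count_zero q
      | succ s ih =>
        rw [Nat.count_succ, ih (by omega), if_neg]
        intro hqs
        have := hqs.1
        omega
    have ucount : ∀ t, T2 ≤ t → uu A t = uu A T2 + (t - T2) + Nat.count q t := by
      intro t ht
      induction t, ht using Nat.le_induction with
      | base => rw [hcnt0 T2 le_rfl]; omega
      | succ t ht ih =>
        have huurec : uu A (t + 1) = max (cc A (t + 1)) (uu A t + 1) :=
          uu_rec hnat hcol (by omega)
        rw [Nat.count_succ]
        rcases hclass t ht with h | h
        · have hqf : ¬ q t := by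
            intro hqs
            have h2 := hqs.2
            have := hlu t (by omega)
            omega
          rw [if_neg hqf]
          have : uu A (t + 1) = uu A t + 1 := by
            rw [huurec, h]
            have := hlu t (by omega)
            omega
          omega
        · have hqt : q t := ⟨ht, h⟩
          rw [if_pos hqt]
          have : uu A (t + 1) = uu A t + 2 := by
            rw [huurec, h]; omega
          omega
    have hblock : ∀ t, T2 ≤ t → q t → mm t + 1 ∈ Rset A (t + 1) := by
      intro t ht hqt
      have hmG := hmmem t ht
      have hmult : mm t < uu A t := hmG.2.1
      have hlt : mm t + 1 < cc A (t + 1) := by rw [hqt.2]; omega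
      rcases below_cc hlt with h | h
      · exact h
      · exfalso
        rw [dlow_succ] at h
        obtain ⟨z, hz, he⟩ := h
        have : z = mm t := by omega
        exact hmG.2.2 (this ▸ hz)
    -- junk bound
    obtain ⟨B2, hB2⟩ := (rfin hcol T2).bddAbove
    set T3 := T2 + B2 + uu A T2 + 3 with hT3def
    have hdecomp : ∀ t, T3 ≤ t → q t →
        ∃ s, T2 ≤ s ∧ s < t ∧ q s ∧ uu A s + 2 = mm t + 1 := by
      intro t ht hqt
      have hmm : mm t = mm T2 + (t - T2) := hmlin t (by omega)
      have hmbig : B2 + 1 < mm t + 1 ∧ uu A T2 < mm t + 1 := by omega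
      have hmem := hblock t (by omega) hqt
      rcases Rsub hnat hcol hT2mx (show T2 ≤ t by omega) hmem with h | ⟨s, hs1, hs2, he⟩
      · have := hB2 h
        omega
      · rcases eq_or_lt_of_le hs1 with rfl | hgt
        · exfalso
          have : cc A T2 ≤ uu A T2 := le_uu hcol (cc_mem_D hnat hcol hT2mx)
          omega
        · have hs' : T2 ≤ s - 1 := by omega
          have hseq : s - 1 + 1 = s := by omega
          rcases hclass (s - 1) hs' with h | h
          · exfalso
            have h1 : ell A (s - 1) ≤ ell A t :=
              ellmono hnat hcol (by omega) (by omega)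
            have h2 : ell A t < mm t := (hmmem t (by omega)).1
            rw [hseq] at h
            omega
          · refine ⟨s - 1, hs', by omega, ⟨hs', h⟩, ?_⟩
            rw [hseq] at h
            omega
    -- Nat.nth machinery
    set n : ℕ → ℕ := fun k => Nat.nth q k with hndef
    have hnmem : ∀ k, q (n k) := Nat.nth_mem_of_infinite hqinf
    have hnsm : StrictMono n := Nat.nth_strictMono hqinf
    have hcntn : ∀ k, Nat.count q (n k) = k := Nat.count_nth_of_infinite hqinf
    have hsp : ∀ k, n (k + 1) ≤ n k + 2 := by
      intro k
      have h1 := hnmem k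
      obtain ⟨s0, hq0, hlb, hub⟩ : ∃ s0, q s0 ∧ n k < s0 ∧ s0 ≤ n k + 2 := by
        rcases hq_or (n k + 1) (by have := h1.1; omega) with h | h
        · exact ⟨n k + 1, h, by omega, by omega⟩
        · exact ⟨n k + 2, h, by omega, by omega⟩
      have hnc : n (Nat.count q s0) = s0 := Nat.nth_count hq0
      have hgt : k < Nat.count q s0 := by
        by_contra hle
        push_neg at hle
        have := hnsm.monotone hle
        omega
      have h5 : n (k + 1) ≤ n (Nat.count q s0) := hnsm.monotone hgt
      omega
    have hsp2 : ∀ j k, j ≤ k → n k ≤ n j + 2 * (k - j) := by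
      intro j k h
      induction k, h using Nat.le_induction with
      | base => omega
      | succ k hk ih =>
        have := hsp k
        omega
    have hmuT2 : mm T2 < uu A T2 := (hmmem T2 le_rfl).2.1
    -- the injection
    set jf : ℕ → ℕ := fun k => sInf {j | j < k ∧ uu A (n j) + 2 = mm (n k) + 1} with hjfdef
    have hjf : ∀ k, T3 ≤ k → jf k < k ∧ uu A (n (jf k)) + 2 = mm (n k) + 1 := by
      intro k hk
      have hnk : T3 ≤ n k := le_trans hk hnsm.le_apply
      obtain ⟨s, hs1, hs2, hqs, he⟩ := hdecomp (n k) hnk (hnmem k)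
      have hnc : n (Nat.count q s) = s := Nat.nth_count hqs
      have hjlt : Nat.count q s < k := by
        by_contra hle
        push_neg at hle
        have := hnsm.monotone hle
        omega
      have hne : ({j | j < k ∧ uu A (n j) + 2 = mm (n k) + 1} : Set ℕ).Nonempty :=
        ⟨Nat.count q s, hjlt, by rw [hnc]; exact he⟩
      exact Nat.sInf_mem hne
    have hbound : ∀ k, T3 ≤ k → 3 * jf k + 2 ≤ 2 * k := by
      intro k hk
      obtain ⟨hlt, heq⟩ := hjf k hk
      have hT2nj : T2 ≤ n (jf k) := (hnmem (jf k)).1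
      have hT2nk : T2 ≤ n k := (hnmem k).1
      have h1 : uu A (n (jf k)) = uu A T2 + (n (jf k) - T2) + jf k := by
        rw [ucount (n (jf k)) hT2nj, hcntn (jf k)]
      have h2 : mm (n k) = mm T2 + (n k - T2) := hmlin (n k) hT2nk
      have h3 : n k ≤ n (jf k) + 2 * (k - jf k) := hsp2 (jf k) k (by omega)
      omega
    -- final cardinality contradiction
    have hinjOn : Set.InjOn jf (Finset.Icc T3 (3 * T3 + 12)) := by
      intro k hk k' hk' he
      simp only [Finset.coe_Icc, Set.mem_Icc] at hk hk'
      obtain ⟨h1, e1⟩ := hjf k hk.1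
      obtain ⟨h2, e2⟩ := hjf k' hk'.1
      rw [he] at e1
      have hmk : mm (n k) = mm (n k') := by omega
      have hT2nj : T2 ≤ n k := (hnmem k).1
      have hT2nk : T2 ≤ n k' := (hnmem k').1
      have g1 : mm (n k) = mm T2 + (n k - T2) := hmlin (n k) hT2nj
      have g2 : mm (n k') = mm T2 + (n k' - T2) := hmlin (n k') hT2nk
      have : n k = n k' := by omega
      exact hnsm.injective this
    have hmaps : ∀ k ∈ Finset.Icc T3 (3 * T3 + 12), jf k ∈ Finset.range (2 * T3 + 8) := by
      intro k hk
      simp only [Finset.mem_Icc] at hk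
      have := hbound k hk.1
      simp only [Finset.mem_range]
      omega
    have hcard := Finset.card_le_card_of_injOn jf hmaps hinjOn
    rw [Nat.card_Icc, Finset.card_range] at hcard
    omega
  -- conclusion : all columns from T2 on are saturated
  refine ⟨T2, hT2mx, fun t' ht' => ?_⟩
  have ht'mx : mx ≤ t' := by omega
  have hGe : Gset A t' = ∅ := by
    have := hconst t' ht'
    rw [hV0] at this
    exact (Set.ncard_eq_zero (gfin t')).mp this
  intro y
  constructor
  · intro hy
    exact ⟨ell_le hy, le_uu hcol hy⟩
  · rintro ⟨h1, h2⟩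
    by_contra hnd
    have hy1 : y ≠ ell A t' := by
      intro he; exact hnd (he ▸ ell_mem hnat hcol ht'mx)
    have hy2 : y ≠ uu A t' := by
      intro he; exact hnd (he ▸ uu_mem hnat hcol ht'mx)
    have : y ∈ Gset A t' := ⟨by omega, by omega, hnd⟩
    rw [hGe] at this
    exact this
end

section
/- Let t₀ be a natural column of an altered Wythoff game such that t₀ and all subsequent columns are saturated. Then for every t > t₀, the bitstring S_t is obtained from S_{t−1} by applying the Wythoff update. -/
-- `row_t[y]` as a boolean: TRUE iff some column `x ≤ t` has a P-position in row `y`.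
open Classical in
noncomputable def rowB (A : Set (ℕ × ℕ)) (t y : ℕ) : Bool :=
  decide (∃ x ≤ t, (x, y) ∈ A)

/-- The bitstring `S_t = (row_t[ℓ_t], …, row_t[u_t])`. -/
noncomputable def Sstr (A : Set (ℕ × ℕ)) (t : ℕ) : List Bool :=
  (List.range (uu A t + 1 - ell A t)).map (fun j => rowB A t (ell A t + j))

/-- The Wythoff update of a bitstring: if the first character is `0`, change it
to `1` and append `0`; if the first character is `1`, remove it and append `01`. -/
def wupdate : List Bool → List Bool
  | [] => []
  | false :: rest => true :: (rest ++ [false])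
  | true :: rest => rest ++ [false, true]

section Aux

variable {P N A : Set (ℕ × ℕ)} {mx my : ℕ}

/-- Membership in `A` for natural columns. -/
lemma natA (hbox : P ∪ N ⊆ Set.Iio mx ×ˢ Set.Iio my)
    (hA : ∀ p : ℕ × ℕ, p ∈ A ↔ (p ∈ P ∨ (p ∉ N ∧ ∀ q, WMove p q → q ∉ A)))
    {x y : ℕ} (hx : mx ≤ x) :
    (x, y) ∈ A ↔ (∀ x' < x, (x', y) ∉ A) ∧ (∀ y' < y, (x, y') ∉ A) ∧
      (∀ k, 0 < k → k ≤ x → k ≤ y → (x - k, y - k) ∉ A) := by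
  have hP : (x, y) ∉ P := by
    intro h
    have := (hbox (Set.mem_union_left _ h)).1
    simp only [Set.mem_Iio] at this; omega
  have hN : (x, y) ∉ N := by
    intro h
    have := (hbox (Set.mem_union_right _ h)).1
    simp only [Set.mem_Iio] at this; omega
  rw [hA]
  simp only [hP, hN, false_or, not_false_iff, true_and]
  constructor
  · intro h
    exact ⟨fun x' hx' => h (x', y) (Or.inl ⟨hx', rfl⟩),
           fun y' hy' => h (x, y') (Or.inr (Or.inl ⟨rfl, hy'⟩)),
           fun k hk hkx hky => h (x - k, y - k) (Or.inr (Or.inr ⟨k, hk, hkx, hky, rfl, rfl⟩))⟩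
  · rintro ⟨h1, h2, h3⟩ ⟨a, b⟩ hq
    rcases hq with ⟨h, h'⟩ | ⟨h, h'⟩ | ⟨k, hk, hkx, hky, e1, e2⟩
    · simp only at h h'; subst h'; exact h1 a h
    · simp only at h h'; subst h; exact h2 b h'
    · simp only at e1 e2; subst e1; subst e2; exact h3 k hk hkx hky

/-- Basic consequences of saturation. -/
lemma sat_basic {t : ℕ} (hsatt : Saturated A t) :
    diag A t (ell A t) ∧ diag A t (uu A t) ∧ ell A t ≤ uu A t := by
  have hne : {y | diag A t y}.Nonempty := by
    by_contra h
    rw [Set.not_nonempty_iff_eq_empty] at h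
    have h0 : diag A t 0 := by
      rw [hsatt 0]
      unfold ell uu
      rw [h]
      simp [Nat.sInf_empty]
    rw [Set.eq_empty_iff_forall_notMem] at h
    exact h 0 h0
  have hbdd : BddAbove {y | diag A t y} := by
    by_contra h
    obtain ⟨y, hy, hy'⟩ := (not_bddAbove_iff.mp h) (uu A t)
    exact absurd ((hsatt y).1 hy).2 (by omega)
  have hl : diag A t (ell A t) := Nat.sInf_mem hne
  have hu : diag A t (uu A t) := Nat.sSup_mem hne hbdd
  exact ⟨hl, hu, ((hsatt _).1 hl).2⟩

/-- Every row below `ℓ_t` is occupied. -/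
lemma rows_below (hbox : P ∪ N ⊆ Set.Iio mx ×ˢ Set.Iio my)
    (hA : ∀ p : ℕ × ℕ, p ∈ A ↔ (p ∈ P ∨ (p ∉ N ∧ ∀ q, WMove p q → q ∉ A)))
    {t : ℕ} (hmx : mx ≤ t) (hsatt : Saturated A t) :
    ∀ y < ell A t, ∃ x ≤ t, (x, y) ∈ A := by
  intro y hy
  by_contra h
  push_neg at h
  have hmem : (t, y) ∈ A := by
    rw [natA hbox hA hmx]
    refine ⟨fun x' hx' => h x' hx'.le, ?_, ?_⟩
    · intro y' hy' hmem'
      have hd : diag A t y' := ⟨0, Nat.zero_le _, Nat.zero_le _, by simpa using hmem'⟩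
      have := ((hsatt y').1 hd).1
      omega
    · intro k hk hkt hky hmem'
      have hd : diag A t y := ⟨k, hkt, hky, hmem'⟩
      have := ((hsatt y).1 hd).1
      omega
  exact h t le_rfl hmem

/-- Every row above `u_t` is empty up to column `t`. -/
lemma rows_above {t : ℕ} (hsatt : Saturated A t) :
    ∀ y, uu A t < y → ∀ x ≤ t, (x, y) ∉ A := by
  intro y hy x hx hmem
  have hd : diag A t (y + (t - x)) := by
    refine ⟨t - x, by omega, by omega, ?_⟩
    have h1 : t - (t - x) = x := by omega
    have h2 : y + (t - x) - (t - x) = y := by omega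
    rw [h1, h2]; exact hmem
  have := ((hsatt _).1 hd).2
  omega

/-- The diagonal at column `t+1`. -/
lemma diag_succ {t y : ℕ} :
    diag A (t + 1) y ↔ ((t + 1, y) ∈ A ∨ (1 ≤ y ∧ diag A t (y - 1))) := by
  constructor
  · rintro ⟨k, hk1, hk2, hm⟩
    cases k with
    | zero => left; simpa using hm
    | succ k' =>
      right
      refine ⟨by omega, k', by omega, by omega, ?_⟩
      have h1 : t - k' = t + 1 - (k' + 1) := by omega
      have h2 : y - 1 - k' = y - (k' + 1) := by omega
      rw [h1, h2]; exact hm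
  · rintro (hm | ⟨hy, k, hk1, hk2, hm⟩)
    · exact ⟨0, by omega, by omega, by simpa using hm⟩
    · refine ⟨k + 1, by omega, by omega, ?_⟩
      have h1 : t + 1 - (k + 1) = t - k := by omega
      have h2 : y - (k + 1) = y - 1 - k := by omega
      rw [h1, h2]; exact hm
/-- If row `ℓ_t` is empty, the unique A-position in column `t+1` is at `ℓ_t`. -/
lemma col_succ_zero (hbox : P ∪ N ⊆ Set.Iio mx ×ˢ Set.Iio my)
    (hA : ∀ p : ℕ × ℕ, p ∈ A ↔ (p ∈ P ∨ (p ∉ N ∧ ∀ q, WMove p q → q ∉ A)))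
    {t : ℕ} (hmx : mx ≤ t) (hsatt : Saturated A t)
    (h0 : ¬ ∃ x ≤ t, (x, ell A t) ∈ A) :
    ∀ y, ((t + 1, y) ∈ A ↔ y = ell A t) := by
  intro y
  induction y using Nat.strong_induction_on with
  | _ y IH =>
    rcases lt_trichotomy y (ell A t) with hy | hy | hy
    · constructor
      · intro hm
        rw [natA hbox hA (by omega)] at hm
        obtain ⟨x, hx, hxm⟩ := rows_below hbox hA hmx hsatt y hy
        exact absurd hxm (hm.1 x (by omega))
      · intro h; omega
    · subst hy
      constructor
      · intro _; rfl
      · intro _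
        rw [natA hbox hA (by omega)]
        refine ⟨?_, ?_, ?_⟩
        · intro x' hx' hxm
          exact h0 ⟨x', by omega, hxm⟩
        · intro y' hy' hym
          have := (IH y' hy').1 hym
          omega
        · intro k hk hkt hky hm
          have hd : diag A t (ell A t - 1) := by
            refine ⟨k - 1, by omega, by omega, ?_⟩
            have h1 : t - (k - 1) = t + 1 - k := by omega
            have h2 : ell A t - 1 - (k - 1) = ell A t - k := by omega
            rw [h1, h2]; exact hm
          have := ((hsatt _).1 hd).1
          omega
    · constructor
      · intro hm
        rw [natA hbox hA (by omega)] at hm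
        exact absurd ((IH (ell A t) hy).2 rfl) (hm.2.1 (ell A t) hy)
      · intro h; omega

/-- If row `ℓ_t` is occupied, the unique A-position in column `t+1` is at `u_t + 2`. -/
lemma col_succ_one (hbox : P ∪ N ⊆ Set.Iio mx ×ˢ Set.Iio my)
    (hA : ∀ p : ℕ × ℕ, p ∈ A ↔ (p ∈ P ∨ (p ∉ N ∧ ∀ q, WMove p q → q ∉ A)))
    {t : ℕ} (hmx : mx ≤ t) (hsatt : Saturated A t)
    (h1 : ∃ x ≤ t, (x, ell A t) ∈ A) :
    ∀ y, ((t + 1, y) ∈ A ↔ y = uu A t + 2) := by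
  have hlu : ell A t ≤ uu A t := (sat_basic hsatt).2.2
  intro y
  induction y using Nat.strong_induction_on with
  | _ y IH =>
    rcases lt_trichotomy y (uu A t + 2) with hy | hy | hy
    · have hne : y ≠ uu A t + 2 := by omega
      simp only [hne, iff_false]
      intro hm
      rw [natA hbox hA (by omega)] at hm
      rcases lt_trichotomy y (ell A t) with h' | h' | h'
      · obtain ⟨x, hx, hxm⟩ := rows_below hbox hA hmx hsatt y h'
        exact absurd hxm (hm.1 x (by omega))
      · subst h'
        obtain ⟨x, hx, hxm⟩ := h1
        exact absurd hxm (hm.1 x (by omega))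
      · -- ell A t < y ≤ uu A t + 1 : diagonal move into A
        have hd : diag A t (y - 1) := (hsatt (y - 1)).2 ⟨by omega, by omega⟩
        obtain ⟨k, hk1, hk2, hkm⟩ := hd
        refine hm.2.2 (k + 1) (by omega) (by omega) (by omega) ?_
        have e1 : t + 1 - (k + 1) = t - k := by omega
        have e2 : y - (k + 1) = y - 1 - k := by omega
        rw [e1, e2]; exact hkm
    · subst hy
      constructor
      · intro _; rfl
      · intro _
        rw [natA hbox hA (by omega)]
        refine ⟨?_, ?_, ?_⟩
        · intro x' hx' hxm
          exact rows_above hsatt (uu A t + 2) (by omega) x' (by omega) hxm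
        · intro y' hy' hym
          have := (IH y' hy').1 hym
          omega
        · intro k hk hkt hky hm
          have hd : diag A t (uu A t + 1) := by
            refine ⟨k - 1, by omega, by omega, ?_⟩
            have e1 : t - (k - 1) = t + 1 - k := by omega
            have e2 : uu A t + 1 - (k - 1) = uu A t + 2 - k := by omega
            rw [e1, e2]; exact hm
          have := ((hsatt _).1 hd).2
          omega
    · have hne : y ≠ uu A t + 2 := by omega
      simp only [hne, iff_false]
      intro hm
      rw [natA hbox hA (by omega)] at hm
      exact absurd ((IH (uu A t + 2) hy).2 rfl) (hm.2.1 (uu A t + 2) hy)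
lemma diagset_zero (hbox : P ∪ N ⊆ Set.Iio mx ×ˢ Set.Iio my)
    (hA : ∀ p : ℕ × ℕ, p ∈ A ↔ (p ∈ P ∨ (p ∉ N ∧ ∀ q, WMove p q → q ∉ A)))
    {t : ℕ} (hmx : mx ≤ t) (hsatt : Saturated A t)
    (h0 : ¬ ∃ x ≤ t, (x, ell A t) ∈ A) :
    {y | diag A (t + 1) y} = Set.Icc (ell A t) (uu A t + 1) := by
  have hlu : ell A t ≤ uu A t := (sat_basic hsatt).2.2
  ext y
  simp only [Set.mem_setOf_eq, Set.mem_Icc]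
  rw [diag_succ, col_succ_zero hbox hA hmx hsatt h0]
  constructor
  · rintro (h | ⟨hy, hd⟩)
    · omega
    · have := (hsatt _).1 hd; omega
  · intro ⟨h1, h2⟩
    rcases eq_or_lt_of_le h1 with h | h
    · exact Or.inl h.symm
    · exact Or.inr ⟨by omega, (hsatt _).2 ⟨by omega, by omega⟩⟩

lemma diagset_one (hbox : P ∪ N ⊆ Set.Iio mx ×ˢ Set.Iio my)
    (hA : ∀ p : ℕ × ℕ, p ∈ A ↔ (p ∈ P ∨ (p ∉ N ∧ ∀ q, WMove p q → q ∉ A)))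
    {t : ℕ} (hmx : mx ≤ t) (hsatt : Saturated A t)
    (h1 : ∃ x ≤ t, (x, ell A t) ∈ A) :
    {y | diag A (t + 1) y} = Set.Icc (ell A t + 1) (uu A t + 2) := by
  have hlu : ell A t ≤ uu A t := (sat_basic hsatt).2.2
  ext y
  simp only [Set.mem_setOf_eq, Set.mem_Icc]
  rw [diag_succ, col_succ_one hbox hA hmx hsatt h1]
  constructor
  · rintro (h | ⟨hy, hd⟩)
    · omega
    · have := (hsatt _).1 hd; omega
  · intro ⟨ha, hb⟩
    rcases eq_or_lt_of_le hb with h | h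
    · exact Or.inl h
    · exact Or.inr ⟨by omega, (hsatt _).2 ⟨by omega, by omega⟩⟩

lemma map_range_left {α : Type*} (f : ℕ → α) (n : ℕ) :
    (List.range (n + 1)).map f = f 0 :: (List.range n).map (fun j => f (j + 1)) := by
  rw [List.range_succ_eq_map, List.map_cons, List.map_map]
  rfl

lemma map_range_right {α : Type*} (f : ℕ → α) (n : ℕ) :
    (List.range (n + 1)).map f = (List.range n).map f ++ [f n] := by
  rw [List.range_succ, List.map_append]
  rfl
end Aux

lemma list_case_zero (f g : ℕ → Bool) (n : ℕ)
    (h0 : f 0 = false) (hg0 : g 0 = true)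
    (hmid : ∀ j < n, g (j + 1) = f (j + 1)) (hend : g (n + 1) = false) :
    (List.range (n + 2)).map g = wupdate ((List.range (n + 1)).map f) := by
  rw [map_range_left f n, h0]
  rw [map_range_right g (n + 1), map_range_left g n, hg0, hend]
  simp only [wupdate, List.cons_append]
  congr 2
  exact List.map_congr_left fun j hj => hmid j (List.mem_range.mp hj)

lemma list_case_one (f g : ℕ → Bool) (n : ℕ)
    (h0 : f 0 = true)
    (hmid : ∀ j < n, g j = f (j + 1)) (hn : g n = false) (hn1 : g (n + 1) = true) :
    (List.range (n + 2)).map g = wupdate ((List.range (n + 1)).map f) := by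
  rw [map_range_left f n, h0]
  rw [map_range_right g (n + 1), map_range_right g n, hn, hn1]
  simp only [wupdate, List.append_assoc, List.singleton_append]
  congr 1
  exact List.map_congr_left fun j hj => hmid j (List.mem_range.mp hj)

/-- String Update Lemma -/
theorem string_update_lemma (P N A : Set (ℕ × ℕ)) (mx my : ℕ)
    (hPfin : P.Finite) (hNfin : N.Finite) (hdisj : Disjoint P N)
    (hbox : P ∪ N ⊆ Set.Iio mx ×ˢ Set.Iio my)
    (hA : ∀ p : ℕ × ℕ, p ∈ A ↔ (p ∈ P ∨ (p ∉ N ∧ ∀ q, WMove p q → q ∉ A)))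
    (t₀ : ℕ) (ht₀ : mx ≤ t₀) (hsat : ∀ t', t₀ ≤ t' → Saturated A t') :
    ∀ t, t₀ ≤ t → Sstr A (t + 1) = wupdate (Sstr A t) := by
  intro t ht
  have hmx : mx ≤ t := le_trans ht₀ ht
  have hsatt := hsat t ht
  have hlu : ell A t ≤ uu A t := (sat_basic hsatt).2.2
  by_cases hcase : ∃ x ≤ t, (x, ell A t) ∈ A
  · -- first bit is 1
    have hcol := col_succ_one hbox hA hmx hsatt hcase
    have hl' : ell A (t + 1) = ell A t + 1 := by
      show sInf {y | diag A (t + 1) y} = ell A t + 1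
      rw [diagset_one hbox hA hmx hsatt hcase]
      exact csInf_Icc (by omega)
    have hu' : uu A (t + 1) = uu A t + 2 := by
      show sSup {y | diag A (t + 1) y} = uu A t + 2
      rw [diagset_one hbox hA hmx hsatt hcase]
      exact csSup_Icc (by omega)
    have hrow_eq : ∀ y, y ≠ uu A t + 2 → rowB A (t + 1) y = rowB A t y := by
      intro y hy
      unfold rowB
      rw [decide_eq_decide]
      constructor
      · rintro ⟨x, hx, hm⟩
        rcases Nat.lt_or_ge x (t + 1) with h | h
        · exact ⟨x, by omega, hm⟩
        · have hxe : x = t + 1 := by omega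
          subst hxe
          exact absurd ((hcol y).1 hm) hy
      · rintro ⟨x, hx, hm⟩
        exact ⟨x, by omega, hm⟩
    have h0 : rowB A t (ell A t) = true := by
      unfold rowB
      simp only [decide_eq_true_eq]
      exact hcase
    have hmid : ∀ j < uu A t - ell A t,
        rowB A (t + 1) (ell A t + 1 + j) = rowB A t (ell A t + (j + 1)) := by
      intro j hj
      rw [hrow_eq _ (by omega)]
      congr 1
      omega
    have hn : rowB A (t + 1) (ell A t + 1 + (uu A t - ell A t)) = false := by
      rw [hrow_eq _ (by omega)]
      have e : ell A t + 1 + (uu A t - ell A t) = uu A t + 1 := by omega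
      rw [e]
      unfold rowB
      simp only [decide_eq_false_iff_not]
      rintro ⟨x, hx, hm⟩
      exact rows_above hsatt (uu A t + 1) (by omega) x hx hm
    have hn1 : rowB A (t + 1) (ell A t + 1 + (uu A t - ell A t + 1)) = true := by
      have e : ell A t + 1 + (uu A t - ell A t + 1) = uu A t + 2 := by omega
      rw [e]
      unfold rowB
      simp only [decide_eq_true_eq]
      exact ⟨t + 1, le_rfl, (hcol _).2 rfl⟩
    unfold Sstr
    rw [hl', hu']
    rw [show uu A t + 2 + 1 - (ell A t + 1) = (uu A t - ell A t) + 2 from by omega,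
        show uu A t + 1 - ell A t = (uu A t - ell A t) + 1 from by omega]
    exact list_case_one _ _ _ h0 hmid hn hn1
  · -- first bit is 0
    have hcol := col_succ_zero hbox hA hmx hsatt hcase
    have hl' : ell A (t + 1) = ell A t := by
      show sInf {y | diag A (t + 1) y} = ell A t
      rw [diagset_zero hbox hA hmx hsatt hcase]
      exact csInf_Icc (by omega)
    have hu' : uu A (t + 1) = uu A t + 1 := by
      show sSup {y | diag A (t + 1) y} = uu A t + 1
      rw [diagset_zero hbox hA hmx hsatt hcase]
      exact csSup_Icc (by omega)
    have hrow_eq : ∀ y, y ≠ ell A t → rowB A (t + 1) y = rowB A t y := by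
      intro y hy
      unfold rowB
      rw [decide_eq_decide]
      constructor
      · rintro ⟨x, hx, hm⟩
        rcases Nat.lt_or_ge x (t + 1) with h | h
        · exact ⟨x, by omega, hm⟩
        · have hxe : x = t + 1 := by omega
          subst hxe
          exact absurd ((hcol y).1 hm) hy
      · rintro ⟨x, hx, hm⟩
        exact ⟨x, by omega, hm⟩
    have h0 : rowB A t (ell A t) = false := by
      unfold rowB
      simp only [decide_eq_false_iff_not]
      exact hcase
    have hg0 : rowB A (t + 1) (ell A t) = true := by
      unfold rowB
      simp only [decide_eq_true_eq]
      exact ⟨t + 1, le_rfl, (hcol _).2 rfl⟩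
    have hmid : ∀ j < uu A t - ell A t,
        rowB A (t + 1) (ell A t + (j + 1)) = rowB A t (ell A t + (j + 1)) := by
      intro j hj
      exact hrow_eq _ (by omega)
    have hend : rowB A (t + 1) (ell A t + (uu A t - ell A t + 1)) = false := by
      rw [hrow_eq _ (by omega)]
      have e : ell A t + (uu A t - ell A t + 1) = uu A t + 1 := by omega
      rw [e]
      unfold rowB
      simp only [decide_eq_false_iff_not]
      rintro ⟨x, hx, hm⟩
      exact rows_above hsatt (uu A t + 1) (by omega) x hx hm
    unfold Sstr
    rw [hl', hu']
    rw [show uu A t + 1 + 1 - ell A t = (uu A t - ell A t) + 2 from by omega,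
        show uu A t + 1 - ell A t = (uu A t - ell A t) + 1 from by omega]
    exact list_case_zero _ _ _ h0 hg0 hmid hend
end

section
/- Let A be the set of P-positions of an altered Wythoff game with alteration sets contained in [0, m_x−1] × [0, m_y−1]. Then every natural column t ≥ m_x contains exactly one P-position, i.e., there is exactly one y with (t,y) ∈ A; moreover this y satisfies y ≤ m_y + 2t. -/
/-- Every natural column `t ≥ m_x` of an altered Wythoff game contains exactly
one P-position, and that P-position has height at most `m_y + 2t`. -/
theorem natural_column_unique_P (P N A : Set (ℕ × ℕ)) (mx my : ℕ)
    (hPfin : P.Finite) (hNfin : N.Finite) (hdisj : Disjoint P N)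
    (hbox : P ∪ N ⊆ Set.Iio mx ×ˢ Set.Iio my)
    (hA : ∀ p : ℕ × ℕ, p ∈ A ↔ (p ∈ P ∨ (p ∉ N ∧ ∀ q, WMove p q → q ∉ A)))
    (t : ℕ) (ht : mx ≤ t) :
    (∃! y : ℕ, (t, y) ∈ A) ∧ (∀ y : ℕ, (t, y) ∈ A → y ≤ my + 2 * t) := by
  -- positions outside the box are not in P nor in N
  have hnotP : ∀ x y : ℕ, my ≤ y → ((x, y) : ℕ × ℕ) ∉ P := by
    intro x y hy h
    have := hbox (Or.inl h)
    simp only [Set.mem_prod, Set.mem_Iio] at this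
    omega
  have hnotN : ∀ x y : ℕ, my ≤ y → ((x, y) : ℕ × ℕ) ∉ N := by
    intro x y hy h
    have := hbox (Or.inr h)
    simp only [Set.mem_prod, Set.mem_Iio] at this
    omega
  -- Key lemma: every non-P element of A in column x has height ≤ my + 2x.
  have key : ∀ x : ℕ, ∀ g : ℕ, (x, g) ∈ A → ((x, g) : ℕ × ℕ) ∉ P → g ≤ my + 2 * x := by
    intro x
    induction x using Nat.strong_induction_on with
    | _ x IH =>
      intro g hg hgP
      by_contra hlt
      push_neg at hlt
      have hmoves : ∀ q, WMove (x, g) q → q ∉ A := by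
        rcases (hA (x, g)).1 hg with h | h
        · exact absurd h hgP
        · exact h.2
      -- consider the position (x, my + 2x); it is not in A, P, N
      have hy'A : (x, my + 2 * x) ∉ A :=
        hmoves (x, my + 2 * x) (Or.inr (Or.inl ⟨rfl, hlt⟩))
      -- so it has a move into A
      have hex : ∃ q, WMove (x, my + 2 * x) q ∧ q ∈ A := by
        by_contra hno
        push_neg at hno
        exact hy'A ((hA (x, my + 2 * x)).2
          (Or.inr ⟨hnotN x _ (by omega), fun q hq => hno q hq⟩))
      obtain ⟨⟨qx, qy⟩, hq, hqA⟩ := hex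
      rcases hq with ⟨h1, h2⟩ | ⟨h1, h2⟩ | ⟨k, hk0, hkx, hky, h1, h2⟩
      · -- horizontal move: blocker in column qx < x at height my + 2x
        simp only at h1 h2
        subst h2
        have hqP : ((qx, my + 2 * x) : ℕ × ℕ) ∉ P := hnotP _ _ (by omega)
        have := IH qx h1 _ hqA hqP
        omega
      · -- vertical move: blocker in column x below g, impossible
        simp only at h1 h2
        exact hmoves (qx, qy) (Or.inr (Or.inl ⟨h1, by omega⟩)) hqA
      · -- diagonal move
        simp only at h1 h2 hkx hky
        subst h1; subst h2
        have hqP : ((x - k, my + 2 * x - k) : ℕ × ℕ) ∉ P := hnotP _ _ (by omega)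
        have := IH (x - k) (by omega) _ hqA hqP
        omega
  -- the column t is fully outside the box
  have hmovesCol : ∀ y : ℕ, (t, y) ∈ A → ∀ q, WMove (t, y) q → q ∉ A := by
    intro y hy
    rcases (hA (t, y)).1 hy with h | h
    · have := hbox (Or.inl h)
      simp only [Set.mem_prod, Set.mem_Iio] at this
      omega
    · exact h.2
  -- bound
  have hbound : ∀ y : ℕ, (t, y) ∈ A → y ≤ my + 2 * t := by
    intro y hy
    by_cases hP : ((t, y) : ℕ × ℕ) ∈ P
    · have := hbox (Or.inl hP)
      simp only [Set.mem_prod, Set.mem_Iio] at this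
      omega
    · exact key t y hy hP
  -- existence
  have hexists : ∃ y : ℕ, (t, y) ∈ A := by
    by_contra hempty
    push_neg at hempty
    have hy0A : (t, my + 2 * t + 1) ∉ A := hempty _
    have hex : ∃ q, WMove (t, my + 2 * t + 1) q ∧ q ∈ A := by
      by_contra hno
      push_neg at hno
      exact hy0A ((hA (t, my + 2 * t + 1)).2
        (Or.inr ⟨hnotN t _ (by omega), fun q hq => hno q hq⟩))
    obtain ⟨⟨qx, qy⟩, hq, hqA⟩ := hex
    rcases hq with ⟨h1, h2⟩ | ⟨h1, h2⟩ | ⟨k, hk0, hkx, hky, h1, h2⟩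
    · simp only at h1 h2
      subst h2
      have hqP : ((qx, my + 2 * t + 1) : ℕ × ℕ) ∉ P := hnotP _ _ (by omega)
      have := key qx _ hqA hqP
      omega
    · simp only at h1 h2
      exact hempty qy (h1 ▸ hqA)
    · simp only at h1 h2 hkx hky
      subst h1; subst h2
      have hqP : ((t - k, my + 2 * t + 1 - k) : ℕ × ℕ) ∉ P := hnotP _ _ (by omega)
      have := key (t - k) _ hqA hqP
      omega
  obtain ⟨y, hy⟩ := hexists
  refine ⟨⟨y, hy, ?_⟩, hbound⟩
  intro z hz
  rcases lt_trichotomy z y with h | h | h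
  · exact absurd hz (hmovesCol y hy (t, z) (Or.inr (Or.inl ⟨rfl, h⟩)))
  · exact h
  · exact absurd hy (hmovesCol z hz (t, y) (Or.inr (Or.inl ⟨rfl, h⟩)))
end

section
/- Let S and T be two arbitrary bitstrings of the same length, and define the sequences S = S_0, S_1, S_2, … and T = T_0, T_1, T_2, … by repeatedly applying the Wythoff update to each. Then there exists a time t such that S_t and T_t are balanced. -/
/-- Two bitstrings are balanced if they have the same length and the same
number of ones. -/
def BalancedBits (S T : List Bool) : Prop :=
  S.length = T.length ∧ S.count true = T.count true

def blk : Bool → List Bool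
  | false => [false, false, true]
  | true => [false, true]

def sig : List Bool → List Bool
  | [] => []
  | b :: R => blk b ++ sig R

def zc (X : List Bool) : ℕ := X.count false

def cost (X : List Bool) : ℕ := X.length + zc X

def zeta : List Bool → ℕ → ℕ
  | _, 0 => 0
  | [], _ + 1 => 0
  | true :: R, t + 1 => zeta R t
  | false :: _, 1 => 1
  | false :: R, t + 2 => 1 + zeta R t

@[simp] lemma zeta_zero (X : List Bool) : zeta X 0 = 0 := by
  match X with
  | [] => rfl
  | true :: R => rfl
  | false :: R => rfl
@[simp] lemma zeta_nil (t : ℕ) : zeta [] t = 0 := by cases t <;> rfl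
@[simp] lemma zeta_true (R : List Bool) (t : ℕ) : zeta (true :: R) (t+1) = zeta R t := rfl
@[simp] lemma zeta_false_one (R : List Bool) : zeta (false :: R) 1 = 1 := rfl
@[simp] lemma zeta_false (R : List Bool) (t : ℕ) : zeta (false :: R) (t+2) = 1 + zeta R t := rfl

@[simp] lemma zc_nil : zc [] = 0 := rfl
lemma zc_cons (b : Bool) (R : List Bool) : zc (b :: R) = (if b then 0 else 1) + zc R := by
  cases b <;> simp [zc, List.count_cons] <;> omega

@[simp] lemma zc_false_cons (R : List Bool) : zc (false :: R) = zc R + 1 := by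
  simp [zc_cons]; omega
@[simp] lemma zc_true_cons (R : List Bool) : zc (true :: R) = zc R := by simp [zc_cons]

lemma zc_append (A B : List Bool) : zc (A ++ B) = zc A + zc B := by
  simp [zc, List.count_append]

@[simp] lemma cost_nil : cost [] = 0 := rfl
lemma cost_true_cons (R : List Bool) : cost (true :: R) = cost R + 1 := by
  simp [cost]; omega
lemma cost_false_cons (R : List Bool) : cost (false :: R) = cost R + 2 := by
  simp [cost]; omega

lemma zeta_le_zc (X : List Bool) (t : ℕ) : zeta X t ≤ zc X := by
  induction X generalizing t with
  | nil => simp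
  | cons b R ih =>
    cases b
    · match t with
      | 0 => simp
      | 1 => simp
      | (t+2) => simp [zeta_false]; have := ih t; omega
    · match t with
      | 0 => simp
      | (t+1) => simp [zeta_true]; exact ih t

lemma zeta_le_t (X : List Bool) (t : ℕ) : zeta X t ≤ t := by
  induction X generalizing t with
  | nil => simp
  | cons b R ih =>
    cases b
    · match t with
      | 0 => simp
      | 1 => simp
      | (t+2) => simp [zeta_false]; have := ih t; omega
    · match t with
      | 0 => simp
      | (t+1) => simp [zeta_true]; have := ih t; omega

lemma zeta_mono (X : List Bool) : Monotone (zeta X) := by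
  have key : ∀ t, zeta X t ≤ zeta X (t+1) := by
    intro t
    induction X generalizing t with
    | nil => simp
    | cons b R ih =>
      cases b
      · match t with
        | 0 => simp
        | 1 => simp [zeta_false (t := 0)]
        | (t+2) => have := ih t; simp [zeta_false] at *; omega
      · match t with
        | 0 => simp
        | (t+1) => simpa using ih t
  exact monotone_nat_of_le_succ key

lemma zeta_step2 (X : List Bool) (t : ℕ) : zeta X (t+2) ≤ zeta X t + 1 := by
  induction X generalizing t with
  | nil => simp
  | cons b R ih =>
    cases b
    · match t with
      | 0 => simpa using zeta_le_t R 0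
      | 1 => simp [zeta_false]; have := zeta_le_t R 1; omega
      | (t+2) => simp [zeta_false]; have := ih t; omega
    · match t with
      | 0 =>
        simp only [zeta_true, zeta_zero]
        match R with
        | [] => simp
        | true :: R' => simpa using zeta_le_t R' 0
        | false :: R' => simp
      | (t+1) => simpa using ih t

lemma zeta_step1 (X : List Bool) (t : ℕ) : zeta X (t+1) ≤ zeta X t + 1 := by
  have h := zeta_mono X (show t+1 ≤ t+2 by omega)
  have := zeta_step2 X t
  omega

lemma zeta_window (X : List Bool) (a d : ℕ) : zeta X (a + d) ≤ zeta X a + (d+1)/2 := by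
  induction d using Nat.strong_induction_on generalizing a with
  | _ d ih =>
    match d with
    | 0 => simp
    | 1 => simpa using zeta_step1 X a
    | (d+2) =>
      have h1 : zeta X (a + d + 2) ≤ zeta X (a + d) + 1 := zeta_step2 X (a+d)
      have h2 := ih d (by omega) a
      have : (d + 2 + 1)/2 = (d+1)/2 + 1 := by omega
      have harr : a + (d+2) = a + d + 2 := by omega
      rw [harr, this]
      omega

-- append lemmas
lemma zeta_append_left (A B : List Bool) (t : ℕ) (ht : t ≤ cost A) :
    zeta (A ++ B) t = zeta A t := by
  induction A generalizing t with
  | nil => simp at ht; simp [ht]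
  | cons b R ih =>
    cases b
    · match t with
      | 0 => simp
      | 1 => simp
      | (t+2) =>
        rw [cost_false_cons] at ht
        simp only [List.cons_append, zeta_false]
        rw [ih t (by omega)]
    · match t with
      | 0 => simp
      | (t+1) =>
        rw [cost_true_cons] at ht
        simp only [List.cons_append, zeta_true]
        rw [ih t (by omega)]

lemma zeta_append_right (A B : List Bool) (u : ℕ) :
    zeta (A ++ B) (cost A + u) = zc A + zeta B u := by
  induction A generalizing u with
  | nil => simp
  | cons b R ih =>
    cases b
    · rw [cost_false_cons]
      have : cost R + 2 + u = (cost R + u) + 2 := by omega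
      simp only [List.cons_append, this, zeta_false, ih u, zc_false_cons]
      omega
    · rw [cost_true_cons]
      have : cost R + 1 + u = (cost R + u) + 1 := by omega
      simp only [List.cons_append, this, zeta_true, ih u, zc_true_cons]

-- sig lemmas
@[simp] lemma sig_nil : sig [] = [] := rfl
@[simp] lemma sig_cons (b : Bool) (R : List Bool) : sig (b :: R) = blk b ++ sig R := rfl

lemma zc_sig (X : List Bool) : zc (sig X) = X.length + zc X := by
  induction X with
  | nil => simp
  | cons b R ih =>
    have hf : zc (blk false) = 2 := rfl
    have ht : zc (blk true) = 1 := rfl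
    cases b
    · rw [sig_cons, zc_append, hf, ih, zc_false_cons]; simp; omega
    · rw [sig_cons, zc_append, ht, ih, zc_true_cons]; simp; omega

lemma len_sig (X : List Bool) : (sig X).length = 2 * X.length + zc X := by
  induction X with
  | nil => simp
  | cons b R ih =>
    cases b <;> simp [ih, blk] <;> omega

lemma count_true_sig (X : List Bool) : (sig X).count true = X.length := by
  induction X with
  | nil => simp
  | cons b R ih =>
    cases b <;> simp [List.count_append, ih, blk]

lemma cost_sig (X : List Bool) : cost (sig X) = 3 * X.length + 2 * zc X := by
  simp [cost, len_sig, zc_sig]; omega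

lemma cost_blk_true : cost (blk true) = 3 := rfl
lemma cost_blk_false : cost (blk false) = 5 := rfl

@[simp] lemma wupdate_true (R : List Bool) : wupdate (true :: R) = R ++ [false, true] := rfl
@[simp] lemma wupdate_false (R : List Bool) : wupdate (false :: R) = true :: (R ++ [false]) := rfl

lemma sig_pass (X C : List Bool) : wupdate^[cost X] (X ++ C) = C ++ sig X := by
  induction X generalizing C with
  | nil => simp
  | cons b R ih =>
    cases b
    · rw [cost_false_cons, show cost R + 2 = cost R + 1 + 1 by omega]
      rw [Function.iterate_succ_apply, Function.iterate_succ_apply]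
      have s1 : wupdate (false :: R ++ C) = true :: (R ++ C ++ [false]) := rfl
      rw [s1]
      have s2 : wupdate (true :: (R ++ C ++ [false])) = R ++ (C ++ [false, false, true]) := by
        simp
      rw [s2, ih]
      simp [blk]
    · rw [cost_true_cons, Function.iterate_succ_apply]
      have s1 : wupdate (true :: R ++ C) = R ++ (C ++ [false, true]) := by simp
      rw [s1, ih]
      simp [blk]

lemma count_pass (X : List Bool) : ∀ (C : List Bool) (t : ℕ), t ≤ cost X →
    (wupdate^[t] (X ++ C)).count true = (X ++ C).count true + zeta X t := by
  induction X with
  | nil => intro C t ht; simp at ht; simp [ht]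
  | cons b R ih =>
    intro C t ht
    cases b
    · rw [cost_false_cons] at ht
      match t with
      | 0 => simp
      | 1 =>
        rw [Function.iterate_one]
        simp [List.count_append, List.count_cons]
      | (t+2) =>
        rw [show t + 2 = t + 1 + 1 by omega, Function.iterate_succ_apply,
          Function.iterate_succ_apply]
        have s1 : wupdate (false :: R ++ C) = true :: (R ++ C ++ [false]) := rfl
        rw [s1]
        have s2 : wupdate (true :: (R ++ C ++ [false])) = R ++ (C ++ [false, false, true]) := by
          simp
        rw [s2, ih (C ++ [false, false, true]) t (by omega)]
        simp [List.count_append, List.count_cons, zeta_false]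
        omega
    · rw [cost_true_cons] at ht
      match t with
      | 0 => simp
      | (t+1) =>
        rw [Function.iterate_succ_apply]
        have s1 : wupdate (true :: R ++ C) = R ++ (C ++ [false, true]) := by simp
        rw [s1, ih (C ++ [false, true]) t (by omega)]
        simp [List.count_append, List.count_cons, zeta_true]
        omega

lemma transfer (X : List Bool) : ∀ t : ℕ, t ≤ cost X →
    zeta (sig X) (2*t + (t - zeta X t)) = t := by
  induction X with
  | nil => intro t ht; simp at ht; simp [ht]
  | cons b R ih =>
    intro t ht
    cases b
    · rw [cost_false_cons] at ht
      match t with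
      | 0 => simp
      | 1 =>
        have : 2*1 + (1 - zeta (false :: R) 1) = 2 := by simp
        rw [this, sig_cons]
        rw [zeta_append_left (blk false) (sig R) 2 (by rw [cost_blk_false]; omega)]
        rfl
      | (t+2) =>
        have hz := zeta_le_t R t
        have harg : 2*(t+2) + ((t+2) - zeta (false :: R) (t+2))
            = cost (blk false) + (2*t + (t - zeta R t)) := by
          rw [zeta_false, cost_blk_false]; omega
        rw [harg, sig_cons, zeta_append_right]
        rw [ih t (by omega)]
        have : zc (blk false) = 2 := rfl
        omega
    · rw [cost_true_cons] at ht
      match t with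
      | 0 => simp
      | (t+1) =>
        have hz := zeta_le_t R t
        have harg : 2*(t+1) + ((t+1) - zeta (true :: R) (t+1))
            = cost (blk true) + (2*t + (t - zeta R t)) := by
          rw [zeta_true, cost_blk_true]; omega
        rw [harg, sig_cons, zeta_append_right]
        rw [ih t (by omega)]
        have : zc (blk true) = 1 := rfl
        omega

lemma nostart (X : List Bool) : ∀ t : ℕ, 1 ≤ t → t ≤ cost X →
    zeta (sig X) (2*t + (t - zeta X t) - 1) = zeta (sig X) (2*t + (t - zeta X t)) := by
  induction X with
  | nil => intro t h1 ht; simp [cost] at ht; omega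
  | cons b R ih =>
    intro t h1 ht
    cases b
    · rw [cost_false_cons] at ht
      match t with
      | 1 =>
        have e1 : 2*1 + (1 - zeta (false :: R) 1) = 2 := by simp
        rw [e1, sig_cons]
        rw [zeta_append_left (blk false) (sig R) 2 (by rw [cost_blk_false]; omega),
          zeta_append_left (blk false) (sig R) 1 (by rw [cost_blk_false]; omega)]
        rfl
      | (t+2) =>
        have hz := zeta_le_t R t
        match t with
        | 0 =>
          -- t+2 = 2, zeta (false::R) 2 = 1 + zeta R 0 = 1, arg = 4 + 1 = 5... 2*2+(2-1)=5
          have e1 : 2*2 + (2 - zeta (false :: R) 2) = 5 := by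
            rw [show (2:ℕ) = 0 + 2 by rfl, zeta_false]; simp
          have hR : zeta (sig (false :: R)) 5 = 2 := by
            rw [sig_cons, show (5:ℕ) = cost (blk false) + 0 by rw [cost_blk_false],
              zeta_append_right]
            simp [show zc (blk false) = 2 from rfl]
          have hL : zeta (sig (false :: R)) 4 = 2 := by
            rw [sig_cons,
              zeta_append_left (blk false) (sig R) 4 (by rw [cost_blk_false]; omega)]
            rfl
          rw [e1, show (5:ℕ)-1 = 4 by rfl, hL, hR]
        | (s+1) =>
          -- t = s+1 ≥ 1: recurse
          have harg : 2*(s+3) + ((s+3) - zeta (false :: R) (s+3))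
              = cost (blk false) + (2*(s+1) + ((s+1) - zeta R (s+1))) := by
            rw [show s+3 = (s+1)+2 by omega, zeta_false, cost_blk_false]
            have := zeta_le_t R (s+1)
            omega
          have hargm : 2*(s+3) + ((s+3) - zeta (false :: R) (s+3)) - 1
              = cost (blk false) + (2*(s+1) + ((s+1) - zeta R (s+1)) - 1) := by
            rw [show s+3 = (s+1)+2 by omega, zeta_false, cost_blk_false]
            have := zeta_le_t R (s+1)
            omega
          rw [show s+1+2 = s+3 by omega] at *
          rw [hargm, harg, sig_cons, zeta_append_right, zeta_append_right]
          rw [ih (s+1) (by omega) (by omega)]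
    · rw [cost_true_cons] at ht
      match t with
      | 1 =>
        have e1 : 2*1 + (1 - zeta (true :: R) 1) = 3 := by simp [zeta_true]
        have hR : zeta (sig (true :: R)) 3 = 1 := by
          rw [sig_cons, show (3:ℕ) = cost (blk true) + 0 by rw [cost_blk_true],
            zeta_append_right]
          simp [show zc (blk true) = 1 from rfl]
        have hL : zeta (sig (true :: R)) 2 = 1 := by
          rw [sig_cons,
            zeta_append_left (blk true) (sig R) 2 (by rw [cost_blk_true]; omega)]
          rfl
        rw [e1, show (3:ℕ)-1 = 2 by rfl, hL, hR]
      | (t+2) =>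
        have hz := zeta_le_t R (t+1)
        have harg : 2*(t+2) + ((t+2) - zeta (true :: R) (t+2))
            = cost (blk true) + (2*(t+1) + ((t+1) - zeta R (t+1))) := by
          rw [zeta_true, cost_blk_true]; omega
        have hargm : 2*(t+2) + ((t+2) - zeta (true :: R) (t+2)) - 1
            = cost (blk true) + (2*(t+1) + ((t+1) - zeta R (t+1)) - 1) := by
          rw [zeta_true, cost_blk_true]; omega
        rw [hargm, harg, sig_cons, zeta_append_right, zeta_append_right]
        rw [ih (t+1) (by omega) (by omega)]

lemma fibr (m : ℕ) : Nat.fib (m+2) = Nat.fib m + Nat.fib (m+1) := Nat.fib_add_two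

lemma count_len (X : List Bool) : X.count true + X.count false = X.length := by
  induction X with
  | nil => simp
  | cons b R ih => cases b <;> simp [List.count_cons] <;> omega

section chain

variable (S : List Bool)

def Wk (k : ℕ) : List Bool := sig^[k] S

def ocS : ℕ := S.count true

def xk : ℕ → ℕ
  | 0 => zc S
  | (k+1) => ocS S * Nat.fib (2*k+2) + zc S * Nat.fib (2*k+1)

@[simp] lemma Wk_zero : Wk S 0 = S := rfl
lemma Wk_succ (k : ℕ) : Wk S (k+1) = sig (Wk S k) := Function.iterate_succ_apply' sig k S

lemma lenzc_Wk (k : ℕ) :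
    (Wk S k).length = ocS S * Nat.fib (2*k+1) + zc S * Nat.fib (2*k+2) ∧
    zc (Wk S k) = ocS S * Nat.fib (2*k) + zc S * Nat.fib (2*k+1) := by
  induction k with
  | zero =>
    constructor
    · simp only [Wk_zero, Nat.mul_zero, Nat.zero_add, Nat.fib_one, Nat.fib_two, mul_one]
      have := count_len S
      simp only [ocS, zc]
      omega
    · simp [Nat.fib_one]
  | succ k ih =>
    obtain ⟨ihl, ihz⟩ := ih
    have h0 : Nat.fib (2*k+2) = Nat.fib (2*k) + Nat.fib (2*k+1) := fibr _
    have h1 : Nat.fib (2*k+3) = Nat.fib (2*k+1) + Nat.fib (2*k+2) := by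
      rw [show 2*k+3 = (2*k+1)+2 by omega, fibr, show 2*k+1+1 = 2*k+2 by omega]
    have h2 : Nat.fib (2*k+4) = Nat.fib (2*k+2) + Nat.fib (2*k+3) := by
      rw [show 2*k+4 = (2*k+2)+2 by omega, fibr, show 2*k+2+1 = 2*k+3 by omega]
    constructor
    · rw [Wk_succ, len_sig, ihl, ihz]
      simp only [show (2*(k+1)+1 : ℕ) = 2*k+3 by omega, show (2*(k+1)+2 : ℕ) = 2*k+4 by omega,
        show (2*k+2+1 : ℕ) = 2*k+3 by omega, show (2*k+3+1 : ℕ) = 2*k+4 by omega]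
      rw [h2, h1, h0]
      ring
    · rw [Wk_succ, zc_sig, ihl, ihz]
      simp only [show (2*(k+1) : ℕ) = 2*k+2 by omega, show (2*(k+1)+1 : ℕ) = 2*k+3 by omega,
        show (2*k+2+1 : ℕ) = 2*k+3 by omega]
      rw [h1, h0]
      ring

lemma len_Wk (k : ℕ) :
    (Wk S k).length = ocS S * Nat.fib (2*k+1) + zc S * Nat.fib (2*k+2) :=
  (lenzc_Wk S k).1

lemma zc_Wk (k : ℕ) :
    zc (Wk S k) = ocS S * Nat.fib (2*k) + zc S * Nat.fib (2*k+1) :=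
  (lenzc_Wk S k).2

lemma cost_Wk (k : ℕ) :
    cost (Wk S k) = ocS S * Nat.fib (2*k+2) + zc S * Nat.fib (2*k+3) := by
  have h0 : Nat.fib (2*k+2) = Nat.fib (2*k) + Nat.fib (2*k+1) := fibr _
  have h1 : Nat.fib (2*k+3) = Nat.fib (2*k+1) + Nat.fib (2*k+2) := by
    rw [show 2*k+3 = (2*k+1)+2 by omega, fibr, show 2*k+1+1 = 2*k+2 by omega]
  rw [cost, len_Wk, zc_Wk, h1, h0]
  ring

lemma xk_succ (k : ℕ) : xk S (k+1) = ocS S * Nat.fib (2*k+2) + zc S * Nat.fib (2*k+1) := rfl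

lemma xk_le_cost (k : ℕ) : xk S (k+1) ≤ cost (Wk S k) := by
  rw [cost_Wk, xk_succ]
  have h : Nat.fib (2*k+1) ≤ Nat.fib (2*k+3) := Nat.fib_mono (by omega)
  have := Nat.mul_le_mul_left (zc S) h
  omega

lemma xk_identity (k : ℕ) : xk S (k+2) + xk S k = 3 * xk S (k+1) := by
  match k with
  | 0 =>
    rw [show (0:ℕ)+2 = 1+1 by rfl, xk_succ, xk_succ, show xk S 0 = zc S from rfl]
    have h4 : Nat.fib 4 = 3 := by decide
    have h3 : Nat.fib 3 = 2 := by decide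
    rw [show 2*1+2 = 4 by omega, show 2*1+1 = 3 by omega, show 2*0+2 = 2 by omega,
      show 2*0+1 = 1 by omega, h4, h3, Nat.fib_two, Nat.fib_one]
    ring
  | (k+1) =>
    rw [show k+1+2 = (k+2)+1 by omega, xk_succ, xk_succ, xk_succ]
    have e1 : Nat.fib (2*(k+2)+2) + Nat.fib (2*k+2) = 3 * Nat.fib (2*(k+1)+2) := by
      have a1 : Nat.fib (2*k+4) = Nat.fib (2*k+2) + Nat.fib (2*k+3) := by
        rw [show 2*k+4 = (2*k+2)+2 by omega, fibr, show 2*k+2+1 = 2*k+3 by omega]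
      have a2 : Nat.fib (2*k+5) = Nat.fib (2*k+3) + Nat.fib (2*k+4) := by
        rw [show 2*k+5 = (2*k+3)+2 by omega, fibr, show 2*k+3+1 = 2*k+4 by omega]
      have a3 : Nat.fib (2*k+6) = Nat.fib (2*k+4) + Nat.fib (2*k+5) := by
        rw [show 2*k+6 = (2*k+4)+2 by omega, fibr, show 2*k+4+1 = 2*k+5 by omega]
      rw [show 2*(k+2)+2 = 2*k+6 by omega, show 2*(k+1)+2 = 2*k+4 by omega]
      omega
    have e2 : Nat.fib (2*(k+2)+1) + Nat.fib (2*k+1) = 3 * Nat.fib (2*(k+1)+1) := by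
      have a1 : Nat.fib (2*k+3) = Nat.fib (2*k+1) + Nat.fib (2*k+2) := by
        rw [show 2*k+3 = (2*k+1)+2 by omega, fibr, show 2*k+1+1 = 2*k+2 by omega]
      have a2 : Nat.fib (2*k+4) = Nat.fib (2*k+2) + Nat.fib (2*k+3) := by
        rw [show 2*k+4 = (2*k+2)+2 by omega, fibr, show 2*k+2+1 = 2*k+3 by omega]
      have a3 : Nat.fib (2*k+5) = Nat.fib (2*k+3) + Nat.fib (2*k+4) := by
        rw [show 2*k+5 = (2*k+3)+2 by omega, fibr, show 2*k+3+1 = 2*k+4 by omega]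
      rw [show 2*(k+2)+1 = 2*k+5 by omega, show 2*(k+1)+1 = 2*k+3 by omega]
      omega
    calc ocS S * Nat.fib (2*(k+2)+2) + zc S * Nat.fib (2*(k+2)+1)
          + (ocS S * Nat.fib (2*k+2) + zc S * Nat.fib (2*k+1))
        = ocS S * (Nat.fib (2*(k+2)+2) + Nat.fib (2*k+2))
          + zc S * (Nat.fib (2*(k+2)+1) + Nat.fib (2*k+1)) := by ring
      _ = ocS S * (3 * Nat.fib (2*(k+1)+2)) + zc S * (3 * Nat.fib (2*(k+1)+1)) := by
          rw [e1, e2]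
      _ = 3 * (ocS S * Nat.fib (2*(k+1)+2) + zc S * Nat.fib (2*(k+1)+1)) := by ring

def uk (k : ℕ) : ℕ := zeta (Wk S k) (xk S (k+1))

def dk (k : ℕ) : ℕ := xk S k - uk S k

lemma xk_mono (k : ℕ) : xk S k ≤ xk S (k+1) := by
  match k with
  | 0 =>
    show zc S ≤ ocS S * Nat.fib 2 + zc S * Nat.fib 1
    rw [Nat.fib_two, Nat.fib_one]; omega
  | (k+1) =>
    rw [xk_succ, xk_succ]
    have h1 : Nat.fib (2*k+2) ≤ Nat.fib (2*(k+1)+2) := Nat.fib_mono (by omega)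
    have h2 : Nat.fib (2*k+1) ≤ Nat.fib (2*(k+1)+1) := Nat.fib_mono (by omega)
    have := Nat.mul_le_mul_left (ocS S) h1
    have := Nat.mul_le_mul_left (zc S) h2
    omega

lemma chain (k : ℕ) : uk S k ≤ xk S k ∧
    zeta (Wk S (k+1)) (xk S (k+2) + dk S k) = xk S (k+1) := by
  induction k with
  | zero =>
    have hu : uk S 0 ≤ xk S 0 := zeta_le_zc S (xk S 1)
    refine ⟨hu, ?_⟩
    have htr := transfer S (xk S 1) (by simpa using xk_le_cost S 0)
    have hid : xk S 2 + xk S 0 = 3 * xk S 1 := by simpa using xk_identity S 0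
    have hmono : xk S 0 ≤ xk S 1 := by simpa using xk_mono S 0
    have harg : 2 * xk S 1 + (xk S 1 - zeta S (xk S 1)) = xk S 2 + dk S 0 := by
      have huu : zeta S (xk S 1) = uk S 0 := rfl
      rw [huu]
      unfold dk
      have h0 : uk S 0 ≤ xk S 0 := hu
      omega
    rw [harg] at htr
    rw [show Wk S 1 = sig S from Wk_succ S 0 |>.trans (by rw [Wk_zero])]
    exact htr
  | succ k ih =>
    obtain ⟨ihu, ihz⟩ := ih
    have hu : uk S (k+1) ≤ xk S (k+1) := by
      have hmono := zeta_mono (Wk S (k+1)) (show xk S (k+2) ≤ xk S (k+2) + dk S k by omega)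
      have huu : uk S (k+1) = zeta (Wk S (k+1)) (xk S (k+2)) := rfl
      omega
    refine ⟨hu, ?_⟩
    have htr := transfer (Wk S (k+1)) (xk S (k+2)) (xk_le_cost S (k+1))
    have hid : xk S (k+3) + xk S (k+1) = 3 * xk S (k+2) := by
      have := xk_identity S (k+1)
      simpa [show k+1+2 = k+3 by omega, show k+1+1 = k+2 by omega] using this
    have hmono : xk S (k+1) ≤ xk S (k+2) := by
      simpa [show k+1+1 = k+2 by omega] using xk_mono S (k+1)
    have harg : 2 * xk S (k+2) + (xk S (k+2) - zeta (Wk S (k+1)) (xk S (k+2)))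
        = xk S (k+3) + dk S (k+1) := by
      have huu : zeta (Wk S (k+1)) (xk S (k+2)) = uk S (k+1) := rfl
      rw [huu]
      unfold dk
      have huu2 : uk S (k+1) ≤ xk S (k+1) := hu
      omega
    rw [harg] at htr
    rw [← Wk_succ] at htr
    exact htr

lemma dk_next_zero (k : ℕ) (hS : S ≠ []) (h : dk S k ≤ 1) : dk S (k+1) = 0 := by
  obtain ⟨hu, hz⟩ := chain S k
  rcases Nat.le_one_iff_eq_zero_or_eq_one.mp h with h0 | h1
  · -- d = 0 : direct
    rw [h0, Nat.add_zero] at hz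
    have : uk S (k+1) = xk S (k+1) := hz
    unfold dk
    omega
  · -- d = 1 : use nostart
    have hx1 : 1 ≤ xk S (k+1) := by
      have hlen : 1 ≤ S.length := by
        cases S with
        | nil => exact absurd rfl hS
        | cons a L => simp
      have hcl := count_len S
      have : ocS S + zc S = S.length := by simpa [ocS, zc] using hcl
      match k with
      | 0 =>
        show 1 ≤ ocS S * Nat.fib 2 + zc S * Nat.fib 1
        rw [Nat.fib_two, Nat.fib_one]
        omega
      | (m+1) =>
        rw [xk_succ]
        have f1 : 0 < Nat.fib (2*(m+1)+2) := Nat.fib_pos.mpr (by omega)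
        have f2 : 0 < Nat.fib (2*(m+1)+1) := Nat.fib_pos.mpr (by omega)
        have g1 : ocS S ≤ ocS S * Nat.fib (2*(m+1)+2) := Nat.le_mul_of_pos_right _ f1
        have g2 : zc S ≤ zc S * Nat.fib (2*(m+1)+1) := Nat.le_mul_of_pos_right _ f2
        omega
    have hns := nostart (Wk S k) (xk S (k+1)) hx1 (xk_le_cost S k)
    have hid : xk S (k+2) + xk S k = 3 * xk S (k+1) := xk_identity S k
    have huk : zeta (Wk S k) (xk S (k+1)) = uk S k := rfl
    have hd1 : xk S k - uk S k = 1 := h1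
    have hu0 : uk S k ≤ xk S k := (chain S k).1
    have harg : 2 * xk S (k+1) + (xk S (k+1) - zeta (Wk S k) (xk S (k+1)))
        = xk S (k+2) + 1 := by
      rw [huk]
      have h2 : xk S k ≤ xk S (k+1) := xk_mono S k
      omega
    rw [harg] at hns
    rw [← Wk_succ] at hns
    -- hns : zeta (Wk S (k+1)) (xk S (k+2) + 1 - 1) = zeta (Wk S (k+1)) (xk S (k+2) + 1)
    have e1 : xk S (k+2) + 1 - 1 = xk S (k+2) := by omega
    rw [e1] at hns
    rw [h1] at hz
    have heq : uk S (k+1) = xk S (k+1) := by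
      have huu : uk S (k+1) = zeta (Wk S (k+1)) (xk S (k+2)) := rfl
      rw [huu, hns]
      simpa [show k+1+2 = k+2+1 by omega] using hz
    unfold dk
    omega

lemma dk_decrease (k : ℕ) (h : 2 ≤ dk S k) : dk S (k+1) + 1 ≤ dk S k := by
  obtain ⟨hu, hz⟩ := chain S k
  have hwin := zeta_window (Wk S (k+1)) (xk S (k+2)) (dk S k)
  rw [hz] at hwin
  have huk : uk S (k+1) = zeta (Wk S (k+1)) (xk S (k+2)) := rfl
  have hu1 : uk S (k+1) ≤ xk S (k+1) := (chain S (k+1)).1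
  have hdk : dk S k = xk S k - uk S k := rfl
  unfold dk
  omega

lemma dk_eventually_zero (hS : S ≠ []) : ∀ k, dk S k + k ≤ zc S ∨ dk S k = 0 := by
  intro k
  induction k with
  | zero =>
    left
    have : dk S 0 ≤ xk S 0 := Nat.sub_le _ _
    simpa [show xk S 0 = zc S from rfl] using this
  | succ k ih =>
    by_cases hd : dk S k ≤ 1
    · right; exact dk_next_zero S k hS hd
    · push_neg at hd
      have hdec := dk_decrease S k (by omega)
      rcases ih with h | h
      · left; omega
      · omega

lemma dk_zero_of_ge (hS : S ≠ []) (k : ℕ) (hk : zc S ≤ k) : dk S k = 0 := by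
  induction k with
  | zero =>
    have : dk S 0 ≤ xk S 0 := Nat.sub_le _ _
    have hx0 : xk S 0 = zc S := rfl
    omega
  | succ k ih =>
    by_cases h : zc S ≤ k
    · exact dk_next_zero S k hS (by rw [ih h]; omega)
    · have hk' : zc S = k + 1 := by omega
      rcases dk_eventually_zero S hS (k+1) with h1 | h1
      · by_cases h2 : dk S (k+1) = 0
        · exact h2
        · omega
      · exact h1

def Ak : ℕ → ℕ
  | 0 => 0
  | (k+1) => cost (Wk S k) + Ak k

lemma iter_Ak (k : ℕ) : wupdate^[Ak S k] S = Wk S k := by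
  induction k with
  | zero => rfl
  | succ k ih =>
    show wupdate^[cost (Wk S k) + Ak S k] S = Wk S (k+1)
    rw [Function.iterate_add_apply, ih, Wk_succ]
    have := sig_pass (Wk S k) []
    simpa using this

lemma Ak_closed (k : ℕ) :
    Ak S k + (ocS S + zc S) = ocS S * Nat.fib (2*k+1) + zc S * Nat.fib (2*k+2) := by
  induction k with
  | zero => simp [Ak, Nat.fib_one, Nat.fib_two]
  | succ k ih =>
    show cost (Wk S k) + Ak S k + (ocS S + zc S) = _
    rw [cost_Wk]
    have h1 : Nat.fib (2*k+3) = Nat.fib (2*k+1) + Nat.fib (2*k+2) := by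
      rw [show 2*k+3 = (2*k+1)+2 by omega, fibr, show 2*k+1+1 = 2*k+2 by omega]
    have h2 : Nat.fib (2*k+4) = Nat.fib (2*k+2) + Nat.fib (2*k+3) := by
      rw [show 2*k+4 = (2*k+2)+2 by omega, fibr, show 2*k+2+1 = 2*k+3 by omega]
    simp only [show (2*(k+1)+1 : ℕ) = 2*k+3 by omega, show (2*(k+1)+2 : ℕ) = 2*k+4 by omega]
    rw [h2, h1]
    simp only [Nat.mul_add]
    omega

end chain

lemma wupdate_ne_nil {X : List Bool} (hX : X ≠ []) : wupdate X ≠ [] := by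
  match X with
  | true :: R => simp
  | false :: R => simp

lemma wupdate_len {X : List Bool} (hX : X ≠ []) : (wupdate X).length = X.length + 1 := by
  match X with
  | true :: R => simp
  | false :: R => simp

lemma iterate_len (t : ℕ) {X : List Bool} (hX : X ≠ []) :
    (wupdate^[t] X).length = X.length + t := by
  induction t generalizing X with
  | zero => simp
  | succ t ih =>
    rw [Function.iterate_succ_apply, ih (wupdate_ne_nil hX), wupdate_len hX]
    omega

theorem master (S : List Bool) (hS : S ≠ []) :
    (wupdate^[S.length * Nat.fib (2*S.length+3) - S.length] S).count true
      = S.length * Nat.fib (2*S.length+1) := by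
  set n := S.length with hn
  have hpos : 1 ≤ n := by
    cases S with
    | nil => exact absurd rfl hS
    | cons a L => simp [hn]
  have hoz : ocS S + zc S = n := by
    have := count_len S
    simpa [ocS, zc, hn] using this
  -- the canonical time
  have hdz : dk S n = 0 := by
    have h1 : dk S (zc S) = 0 := dk_zero_of_ge S hS (zc S) le_rfl
    -- propagate from zc S up to n
    have : ∀ m, dk S (zc S + m) = 0 := by
      intro m
      induction m with
      | zero => simpa using h1
      | succ m ih =>
        have := dk_next_zero S (zc S + m) hS (by rw [ih]; omega)
        simpa [show zc S + (m+1) = (zc S + m) + 1 by omega] using this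
    have hzn : zc S ≤ n := by omega
    have := this (n - zc S)
    simpa [show zc S + (n - zc S) = n by omega] using this
  -- count at the key time
  have hukxk : uk S n = xk S n := by
    have h1 : dk S n = 0 := hdz
    have h2 : uk S n ≤ xk S n := (chain S n).1
    unfold dk at h1
    omega
  -- time decomposition
  have hiter : wupdate^[xk S (n+1) + Ak S n] S = wupdate^[xk S (n+1)] (Wk S n) := by
    rw [Function.iterate_add_apply, iter_Ak]
  have hcount : (wupdate^[xk S (n+1)] (Wk S n)).count true
      = (Wk S n).count true + uk S n := by
    have := count_pass (Wk S n) [] (xk S (n+1)) (xk_le_cost S n)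
    simpa [uk] using this
  -- count of Wk S n
  obtain ⟨m, hm⟩ : ∃ m, n = m + 1 := ⟨n - 1, by omega⟩
  have hcw : (Wk S n).count true = ocS S * Nat.fib (2*m+1) + zc S * Nat.fib (2*m+2) := by
    rw [hm, Wk_succ, count_true_sig, len_Wk]
  -- final count value
  have hfc : (wupdate^[xk S (n+1) + Ak S n] S).count true = n * Nat.fib (2*n+1) := by
    rw [hiter, hcount, hcw, hukxk]
    have hxn : xk S n = ocS S * Nat.fib (2*m+2) + zc S * Nat.fib (2*m+1) := by
      rw [hm]; rfl
    rw [hxn]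
    have h1 : Nat.fib (2*m+3) = Nat.fib (2*m+1) + Nat.fib (2*m+2) := by
      rw [show 2*m+3 = (2*m+1)+2 by omega, fibr, show 2*m+1+1 = 2*m+2 by omega]
    rw [show 2*n+1 = 2*m+3 by omega, h1]
    have hexp : n * (Nat.fib (2*m+1) + Nat.fib (2*m+2))
        = ocS S * (Nat.fib (2*m+1) + Nat.fib (2*m+2))
          + zc S * (Nat.fib (2*m+1) + Nat.fib (2*m+2)) := by
      rw [← hoz]; ring
    rw [hexp]
    simp only [Nat.mul_add]
    omega
  -- the time equals n * fib (2n+3) - n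
  have htime : xk S (n+1) + Ak S n + n = n * Nat.fib (2*n+3) := by
    have hA := Ak_closed S n
    rw [hoz] at hA
    have hx : xk S (n+1) = ocS S * Nat.fib (2*n+2) + zc S * Nat.fib (2*n+1) := rfl
    have h1 : Nat.fib (2*n+3) = Nat.fib (2*n+1) + Nat.fib (2*n+2) := by
      rw [show 2*n+3 = (2*n+1)+2 by omega, fibr, show 2*n+1+1 = 2*n+2 by omega]
    rw [hx, h1]
    have hexp : n * (Nat.fib (2*n+1) + Nat.fib (2*n+2))
        = ocS S * (Nat.fib (2*n+1) + Nat.fib (2*n+2))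
          + zc S * (Nat.fib (2*n+1) + Nat.fib (2*n+2)) := by
      rw [← hoz]; ring
    rw [hexp]
    simp only [Nat.mul_add]
    omega
  have hteq : n * Nat.fib (2*n+3) - n = xk S (n+1) + Ak S n := by omega
  rw [hteq]
  exact hfc


/-- Starting from two arbitrary bitstrings of the same length and repeatedly
applying the Wythoff update to both, there is a time at which the two strings
become balanced. -/
theorem eventually_balanced (S T : List Bool) (hlen : S.length = T.length) :
    ∃ t : ℕ, BalancedBits (wupdate^[t] S) (wupdate^[t] T) := by
  by_cases hS : S = []
  · have hT : T = [] := by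
      apply List.length_eq_zero_iff.mp
      rw [← hlen, hS]
      rfl
    exact ⟨0, by simp [hS, hT, BalancedBits]⟩
  · have hT : T ≠ [] := by
      intro h
      apply hS
      apply List.length_eq_zero_iff.mp
      rw [hlen, h]
      rfl
    refine ⟨S.length * Nat.fib (2*S.length+3) - S.length, ?_, ?_⟩
    · rw [iterate_len _ hS, iterate_len _ hT, hlen]
    · have h1 := master S hS
      have h2 := master T hT
      rw [← hlen] at h2
      rw [h1, h2]
end

section
/- Let S be a bitstring and let S′ be any prefix of w(S) that does not end in a 0 (the empty prefix included). Then there exists a prefix σ of S satisfying w(σ) = S′; in particular, if S′ is the empty prefix then σ is the empty prefix. -/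
/-- The substitution `w`, simultaneously replacing each `0` by `001` and each
`1` by `01`. -/
def wsub (S : List Bool) : List Bool :=
  S.flatMap (fun b => if b then [false, true] else [false, false, true])

lemma wsub_cons (b : Bool) (S : List Bool) :
    wsub (b :: S) = (if b then [false, true] else [false, false, true]) ++ wsub S := by
  simp [wsub]

/-- For any prefix `S'` of `w(S)` not ending in a zero, there is a prefix `σ`
of `S` with `w(σ) = S'`; in particular if `S'` is empty then so is `σ`. -/
theorem prefix_of_wsub (S S' : List Bool)
    (hpre : S' <+: wsub S) (hend : S'.getLast? ≠ some false) :
    ∃ σ : List Bool, σ <+: S ∧ wsub σ = S' ∧ (S' = [] → σ = []) := by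
  induction S generalizing S' with
  | nil =>
    simp [wsub] at hpre
    exact ⟨[], by simp [wsub, hpre]⟩
  | cons b S ih =>
    rw [wsub_cons] at hpre
    set blk : List Bool := if b then [false, true] else [false, false, true] with hblk
    rcases List.prefix_or_prefix_of_prefix hpre (List.prefix_append blk (wsub S)) with h | h
    · -- S' is a prefix of blk
      have hS' : S' = [] ∨ S' = blk := by
        obtain ⟨t, ht⟩ := h
        cases b <;> simp only [hblk, if_true, if_false] at ht ⊢ <;>
          rcases S' with _ | ⟨_|_, _ | ⟨_|_, _ | ⟨_|_, l⟩⟩⟩ <;> simp_all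
      rcases hS' with rfl | rfl
      · exact ⟨[], by simp [wsub]⟩
      · refine ⟨[b], List.prefix_iff_eq_take.mpr (by simp), ?_, by cases b <;> simp [hblk]⟩
        simp [wsub, hblk]
    · -- blk is a prefix of S'
      obtain ⟨t, ht⟩ := h
      have htpre : t <+: wsub S := by
        obtain ⟨u, hu⟩ := hpre
        rw [← ht, List.append_assoc] at hu
        exact ⟨u, List.append_cancel_left hu⟩
      have htend : t.getLast? ≠ some false := by
        rcases t with _ | ⟨c, t⟩
        · simp
        · rw [← ht] at hend
          rwa [List.getLast?_append_of_ne_nil blk (by simp)] at hend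
      obtain ⟨σ, hσ1, hσ2, _⟩ := ih t htpre htend
      refine ⟨b :: σ, List.cons_prefix_cons.mpr ⟨rfl, hσ1⟩, ?_, ?_⟩
      · rw [wsub_cons, ← hblk, hσ2, ht]
      · intro h; rw [← ht] at h; cases b <;> simp [hblk] at h
end

section
/- For any nonempty bitstring S, applying the Wythoff update 2·0_S + 1_S times to S yields exactly w(S), where 0_S and 1_S are the number of zeros and ones of S respectively. -/
lemma wupdate_aux : ∀ (S T : List Bool),
    wupdate^[2 * S.count false + S.count true] (S ++ T) = T ++ wsub S := by
  intro S
  induction S with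
  | nil => intro T; simp [wsub]
  | cons b S ih =>
    intro T
    cases b with
    | false =>
      have hn : 2 * (false :: S).count false + (false :: S).count true
          = (2 * S.count false + S.count true) + 2 := by
        simp [List.count_cons]; ring
      rw [hn, Function.iterate_add_apply]
      have h2 : wupdate^[2] ((false :: S) ++ T) = S ++ (T ++ [false, false, true]) := by
        show wupdate (wupdate (false :: (S ++ T))) = _
        simp [wupdate]
      rw [h2, ih]
      simp [wsub]
    | true =>
      have hn : 2 * (true :: S).count false + (true :: S).count true
          = (2 * S.count false + S.count true) + 1 := by
        simp [List.count_cons]; ring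
      rw [hn, Function.iterate_add_apply]
      have h1 : wupdate^[1] ((true :: S) ++ T) = S ++ (T ++ [false, true]) := by
        show wupdate (true :: (S ++ T)) = _
        simp [wupdate]
      rw [h1, ih]
      simp [wsub]

/-- Applying the Wythoff update `2·0_S + 1_S` times to a nonempty bitstring `S`
yields exactly `w(S)`. -/
theorem wupdate_iterate_eq_wsub (S : List Bool) (hS : S ≠ []) :
    wupdate^[2 * S.count false + S.count true] S = wsub S := by
  simpa using wupdate_aux S []
end

section
/- Let S and T be balanced bitstrings. If the unit of area (x,y) is between w(S) and w(T), then the unit of area (x−y−1, 2y−x+1) is between S and T. -/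
/-- `(x, y)` is below `S` if some prefix of `S` has at most `x` zeros and at
least `y + 1` ones. -/
def Below (S : List Bool) (x y : ℤ) : Prop :=
  ∃ n ≤ S.length, ((S.take n).count false : ℤ) ≤ x ∧ y + 1 ≤ ((S.take n).count true : ℤ)

/-- `(x, y)` is above `S` if some prefix of `S` has at most `y` ones and at
least `x + 1` zeros. -/
def Above (S : List Bool) (x y : ℤ) : Prop :=
  ∃ n ≤ S.length, ((S.take n).count true : ℤ) ≤ y ∧ x + 1 ≤ ((S.take n).count false : ℤ)

/-- `(x, y)` is between `S` and `T` if it is above one and below the other. -/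
def Between (S T : List Bool) (x y : ℤ) : Prop :=
  (Above S x y ∧ Below T x y) ∨ (Below S x y ∧ Above T x y)

lemma key_below : ∀ (S : List Bool) (n : ℕ),
    ∃ k ≤ S.length,
      2 * (S.take k).count false + (S.take k).count true ≤ ((wsub S).take n).count false ∧
      ((wsub S).take n).count true ≤ (S.take k).count false + (S.take k).count true := by
  intro S
  induction S with
  | nil => intro n; exact ⟨0, by simp [wsub]⟩
  | cons b S ih =>
    intro n
    cases b with
    | true =>
      match n with
      | 0 => exact ⟨0, by simp⟩
      | 1 => exact ⟨0, by simp [wsub_cons]⟩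
      | (m + 2) =>
        obtain ⟨k, hk, h1, h2⟩ := ih m
        refine ⟨k + 1, by simpa using hk, ?_, ?_⟩ <;>
          · simp [wsub_cons, List.count_cons]
            omega
    | false =>
      match n with
      | 0 => exact ⟨0, by simp⟩
      | 1 => exact ⟨0, by simp [wsub_cons]⟩
      | 2 => exact ⟨0, by simp [wsub_cons]⟩
      | (m + 3) =>
        obtain ⟨k, hk, h1, h2⟩ := ih m
        refine ⟨k + 1, by simpa using hk, ?_, ?_⟩ <;>
          · simp [wsub_cons, List.count_cons]
            omega

lemma key_above : ∀ (S : List Bool) (n : ℕ),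
    ∃ k ≤ S.length,
      ((wsub S).take n).count false ≤ 2 * (S.take k).count false + (S.take k).count true ∧
      (S.take k).count false + (S.take k).count true ≤ ((wsub S).take n).count true + 1 := by
  intro S
  induction S with
  | nil => intro n; exact ⟨0, by simp [wsub]⟩
  | cons b S ih =>
    intro n
    cases b with
    | true =>
      match n with
      | 0 => exact ⟨0, by simp⟩
      | 1 => exact ⟨1, by simp [wsub_cons]⟩
      | (m + 2) =>
        obtain ⟨k, hk, h1, h2⟩ := ih m
        refine ⟨k + 1, by simpa using hk, ?_, ?_⟩ <;>
          · simp [wsub_cons, List.count_cons]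
            omega
    | false =>
      match n with
      | 0 => exact ⟨0, by simp⟩
      | 1 => exact ⟨1, by simp [wsub_cons]⟩
      | 2 => exact ⟨1, by simp [wsub_cons]⟩
      | (m + 3) =>
        obtain ⟨k, hk, h1, h2⟩ := ih m
        refine ⟨k + 1, by simpa using hk, ?_, ?_⟩ <;>
          · simp [wsub_cons, List.count_cons]
            omega

lemma below_w (S : List Bool) (x y : ℤ) (h : Below (wsub S) x y) :
    Below S (x - y - 1) (2 * y - x + 1) := by
  obtain ⟨n, hn, hZ, hO⟩ := h
  obtain ⟨k, hk, h1, h2⟩ := key_below S n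
  exact ⟨k, hk, by omega, by omega⟩

lemma above_w (S : List Bool) (x y : ℤ) (h : Above (wsub S) x y) :
    Above S (x - y - 1) (2 * y - x + 1) := by
  obtain ⟨n, hn, hO, hZ⟩ := h
  obtain ⟨k, hk, h1, h2⟩ := key_above S n
  exact ⟨k, hk, by omega, by omega⟩

/-- If `(x, y)` is between `w(S)` and `w(T)` for balanced bitstrings `S` and
`T`, then `(x − y − 1, 2y − x + 1)` is between `S` and `T`. -/
theorem between_of_between_wsub (S T : List Bool) (hbal : BalancedBits S T)
    (x y : ℤ) (h : Between (wsub S) (wsub T) x y) :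
    Between S T (x - y - 1) (2 * y - x + 1) := by
  rcases h with ⟨ha, hb⟩ | ⟨hb, ha⟩
  · exact Or.inl ⟨above_w S x y ha, below_w T x y hb⟩
  · exact Or.inr ⟨below_w S x y hb, above_w T x y ha⟩
end

section
/- Let S and T be balanced bitstrings. Then the following are equivalent: (i) for all units of area (x,y) and (x′,y′) between S and T, if (x,y) ≠ (x′,y′) then x ≠ x′ and y ≠ y′; (ii) S and T differ by defects. Moreover, if S and T differ by defects, then the number of defects equals the area between S and T. -/
/-- A defect of balanced bitstrings `S` and `T` (1-indexed) is an index
`1 ≤ i ≤ |S| − 1` such that the length-`(i−1)` prefixes are balanced,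
`S[i] ≠ T[i]`, `S[i] ≠ S[i+1]`, and `S[i+1] ≠ T[i+1]`. -/
def IsDefect (S T : List Bool) (i : ℕ) : Prop :=
  1 ≤ i ∧ i + 1 ≤ S.length ∧
  BalancedBits (S.take (i - 1)) (T.take (i - 1)) ∧
  S.getD (i - 1) false ≠ T.getD (i - 1) false ∧
  S.getD (i - 1) false ≠ S.getD i false ∧
  S.getD i false ≠ T.getD i false

/-- `S` and `T` differ by defects if they are balanced and every index where
they differ is part of a defect. -/
def DifferByDefects (S T : List Bool) : Prop :=
  BalancedBits S T ∧
  ∀ i, 1 ≤ i → i ≤ S.length → S.getD (i - 1) false ≠ T.getD (i - 1) false →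
    IsDefect S T (i - 1) ∨ IsDefect S T i

namespace DefectsAux

/-- integer count of ones in the length-`n` prefix -/
def cnt (P : List Bool) (n : ℕ) : ℤ := ((P.take n).count true : ℤ)

lemma count_tf (l : List Bool) : l.count true + l.count false = l.length := by
  induction l with
  | nil => simp
  | cons a l ih => cases a <;> simp [List.count_cons] <;> omega

lemma cnt_nonneg (P : List Bool) (n : ℕ) : 0 ≤ cnt P n := Int.ofNat_nonneg _

lemma zcount (P : List Bool) {n : ℕ} (h : n ≤ P.length) :
    (((P.take n).count false : ℕ) : ℤ) = (n : ℤ) - cnt P n := by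
  have h1 := count_tf (P.take n)
  have h2 : (P.take n).length = n := by rw [List.length_take]; omega
  rw [h2] at h1
  unfold cnt
  omega

lemma cnt_mono (P : List Bool) {m n : ℕ} (h : m ≤ n) : cnt P m ≤ cnt P n := by
  unfold cnt
  have h1 : P.take m = (P.take n).take m := by
    rw [List.take_take, min_eq_left h]
  have h2 : List.Sublist ((P.take n).take m) (P.take n) := List.take_sublist _ _
  rw [h1]
  exact_mod_cast h2.count_le true

lemma cnt_succ (P : List Bool) (n : ℕ) :
    cnt P (n + 1) = cnt P n + ((P[n]?.toList.count true : ℕ) : ℤ) := by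
  unfold cnt
  rw [List.take_succ, List.count_append]
  push_cast
  ring

lemma optcount01 (o : Option Bool) : o.toList.count true ≤ 1 := by
  cases o with
  | none => simp
  | some b => cases b <;> simp

lemma cnt_step (P : List Bool) (n : ℕ) :
    cnt P n ≤ cnt P (n + 1) ∧ cnt P (n + 1) ≤ cnt P n + 1 := by
  rw [cnt_succ]
  have h1 := optcount01 (P[n]?)
  omega

lemma cnt_add_le (P : List Bool) (m k : ℕ) : cnt P (m + k) ≤ cnt P m + k := by
  induction k with
  | zero => simp
  | succ k ih =>
    have h := (cnt_step P (m + k)).2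
    have : m + (k + 1) = (m + k) + 1 := by omega
    rw [this]
    push_cast
    omega

lemma cnt_le_add {P : List Bool} {m n : ℕ} (h : m ≤ n) :
    cnt P n ≤ cnt P m + ((n - m : ℕ) : ℤ) := by
  have := cnt_add_le P m (n - m)
  rwa [Nat.add_sub_cancel' h] at this

lemma cnt_ge_len {P : List Bool} {n : ℕ} (h : P.length ≤ n) :
    cnt P n = (P.count true : ℤ) := by
  unfold cnt
  rw [List.take_of_length_le h]

lemma cnt_succ_getD {P : List Bool} {n : ℕ} (h : n < P.length) :
    cnt P (n + 1) = cnt P n + (if P.getD n false then 1 else 0) := by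
  rw [cnt_succ, List.getElem?_eq_getElem h, List.getD_eq_getElem P false h]
  cases P[n] <;> simp

/-- prefix ones-count difference -/
def Df (S T : List Bool) (n : ℕ) : ℤ := cnt S n - cnt T n

/-- the "isolated defects" shape condition on `Df`. -/
def Pg (S T : List Bool) : Prop :=
  ∀ n, Df S T n ≠ 0 → Df S T (n - 1) = 0 ∧ Df S T (n + 1) = 0

variable {S T : List Bool}

lemma Df_zero : Df S T 0 = 0 := by simp [Df, cnt]

lemma Df_ge (hbal : BalancedBits S T) {n : ℕ} (h : S.length ≤ n) : Df S T n = 0 := by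
  have hT : T.length ≤ n := hbal.1 ▸ h
  rw [Df, cnt_ge_len h, cnt_ge_len hT, hbal.2]
  ring

lemma Df_lt (hbal : BalancedBits S T) {n : ℕ} (h : Df S T n ≠ 0) : n < S.length := by
  by_contra hc
  exact h (Df_ge hbal (le_of_not_gt hc))

lemma Df_pos (h : Df S T n ≠ 0) : 1 ≤ n := by
  by_contra hc
  have : n = 0 := by omega
  exact h (this ▸ Df_zero)

lemma getD_ne_iff (hbal : BalancedBits S T) {i : ℕ} (h : i < S.length) :
    (S.getD i false ≠ T.getD i false) ↔ Df S T (i + 1) ≠ Df S T i := by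
  have hT : i < T.length := hbal.1 ▸ h
  have hS1 := cnt_succ_getD h
  have hT1 := cnt_succ_getD hT
  unfold Df
  cases hs : S.getD i false <;> cases ht : T.getD i false <;> simp_all <;> omega

lemma balanced_take_iff (hbal : BalancedBits S T) (k : ℕ) :
    BalancedBits (S.take k) (T.take k) ↔ Df S T k = 0 := by
  unfold BalancedBits Df cnt
  constructor
  · rintro ⟨-, h⟩
    omega
  · intro h
    refine ⟨?_, by omega⟩
    rw [List.length_take, List.length_take, hbal.1]

lemma bits_key (a a' b b' : Bool) (h1 : a ≠ a') (h3 : b ≠ b') :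
    (((if a then (1:ℤ) else 0) - (if a' then 1 else 0)) +
      ((if b then 1 else 0) - (if b' then 1 else 0)) = 0) ↔ a ≠ b := by
  cases a <;> cases a' <;> cases b <;> cases b' <;> simp_all

lemma isDefect_iff (hbal : BalancedBits S T) (i : ℕ) :
    IsDefect S T i ↔ 1 ≤ i ∧ i + 1 ≤ S.length ∧
      Df S T (i - 1) = 0 ∧ Df S T i ≠ 0 ∧ Df S T (i + 1) = 0 := by
  unfold IsDefect
  constructor
  · rintro ⟨h1, h2, hb, hd1, hd2, hd3⟩
    obtain ⟨j, rfl⟩ : ∃ j, i = j + 1 := ⟨i - 1, by omega⟩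
    simp only [Nat.add_sub_cancel] at *
    have hjS : j < S.length := by omega
    have hj1S : j + 1 < S.length := by omega
    have hb' : Df S T j = 0 := (balanced_take_iff hbal j).1 hb
    have k1 : Df S T (j + 1) ≠ Df S T j := (getD_ne_iff hbal hjS).1 hd1
    have k2 : Df S T (j + 2) ≠ Df S T (j + 1) := (getD_ne_iff hbal hj1S).1 hd3
    refine ⟨h1, h2, hb', fun h0 => k1 (by rw [h0, hb']), ?_⟩
    -- compute Df (j+2)
    have e1 := cnt_succ_getD hjS
    have e2 := cnt_succ_getD hj1S
    have e3 := cnt_succ_getD (hbal.1 ▸ hjS : j < T.length)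
    have e4 := cnt_succ_getD (hbal.1 ▸ hj1S : j + 1 < T.length)
    have hsum : Df S T (j + 2) =
        ((if S.getD j false then (1:ℤ) else 0) - (if T.getD j false then 1 else 0)) +
        ((if S.getD (j+1) false then (1:ℤ) else 0) - (if T.getD (j+1) false then 1 else 0)) := by
      have : Df S T (j + 2) = Df S T j +
          (((if S.getD j false then (1:ℤ) else 0) - (if T.getD j false then 1 else 0)) +
          ((if S.getD (j+1) false then (1:ℤ) else 0) - (if T.getD (j+1) false then 1 else 0))) := by
        unfold Df
        rw [show j + 2 = (j + 1) + 1 from rfl, e2, e4, e1, e3]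
        ring
      rw [this, hb']
      ring
    rw [hsum]
    exact ((bits_key _ _ _ _ hd1 hd3).2 hd2)
  · rintro ⟨h1, h2, hd1, hd2, hd3⟩
    obtain ⟨j, rfl⟩ : ∃ j, i = j + 1 := ⟨i - 1, by omega⟩
    simp only [Nat.add_sub_cancel] at *
    have hjS : j < S.length := by omega
    have hj1S : j + 1 < S.length := by omega
    have hb : Df S T j = 0 := hd1
    have k1 : S.getD j false ≠ T.getD j false := by
      rw [getD_ne_iff hbal hjS]; omega
    have hd3' : Df S T (j + 1 + 1) = 0 := hd3
    have k2 : S.getD (j+1) false ≠ T.getD (j+1) false := by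
      rw [getD_ne_iff hbal hj1S]
      omega
    refine ⟨h1, h2, (balanced_take_iff hbal j).2 hd1, k1, ?_, k2⟩
    have e1 := cnt_succ_getD hjS
    have e2 := cnt_succ_getD hj1S
    have e3 := cnt_succ_getD (hbal.1 ▸ hjS : j < T.length)
    have e4 := cnt_succ_getD (hbal.1 ▸ hj1S : j + 1 < T.length)
    have hsum : Df S T (j + 2) =
        ((if S.getD j false then (1:ℤ) else 0) - (if T.getD j false then 1 else 0)) +
        ((if S.getD (j+1) false then (1:ℤ) else 0) - (if T.getD (j+1) false then 1 else 0)) := by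
      have : Df S T (j + 2) = Df S T j +
          (((if S.getD j false then (1:ℤ) else 0) - (if T.getD j false then 1 else 0)) +
          ((if S.getD (j+1) false then (1:ℤ) else 0) - (if T.getD (j+1) false then 1 else 0))) := by
        unfold Df
        rw [show j + 2 = (j + 1) + 1 from rfl, e2, e4, e1, e3]
        ring
      rw [this, hb]
      ring
    rw [← bits_key _ _ _ _ k1 k2, ← hsum]
    exact hd3

lemma differ_iff (hbal : BalancedBits S T) : DifferByDefects S T ↔ Pg S T := by
  constructor
  · intro h n
    induction n using Nat.strong_induction_on with
    | _ n ih =>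
      intro hn
      have hn1 : 1 ≤ n := Df_pos hn
      have hnL : n < S.length := Df_lt hbal hn
      by_cases hc : Df S T n = Df S T (n - 1)
      · have hprev : Df S T (n - 1) ≠ 0 := by rw [← hc]; exact hn
        have hn2 : 2 ≤ n := by
          by_contra h2
          have hn1' : n = 1 := by omega
          subst hn1'
          norm_num at hprev
          exact hprev Df_zero
        have := ih (n - 1) (by omega) hprev
        have heq : n - 1 + 1 = n := by omega
        rw [heq] at this
        exact absurd this.2 hn
      · have hd : S.getD (n - 1) false ≠ T.getD (n - 1) false := by
          rw [getD_ne_iff hbal (by omega : n - 1 < S.length)]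
          have heq : n - 1 + 1 = n := by omega
          rw [heq]
          exact hc
        rcases h.2 n hn1 (by omega) hd with hdef | hdef
        · rw [isDefect_iff hbal] at hdef
          obtain ⟨g1, -, -, -, g5⟩ := hdef
          have heq : n - 1 + 1 = n := by omega
          rw [heq] at g5
          exact absurd g5 hn
        · rw [isDefect_iff hbal] at hdef
          exact ⟨hdef.2.2.1, hdef.2.2.2.2⟩
  · intro hP
    refine ⟨hbal, ?_⟩
    intro i h1 hiL hdiff
    rw [getD_ne_iff hbal (by omega : i - 1 < S.length)] at hdiff
    have heq : i - 1 + 1 = i := by omega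
    rw [heq] at hdiff
    by_cases hz : Df S T i = 0
    · have hprev : Df S T (i - 1) ≠ 0 := by
        intro h0; rw [h0, hz] at hdiff; exact hdiff rfl
      obtain ⟨g1, g2⟩ := hP (i - 1) hprev
      rw [heq] at g2
      left
      rw [isDefect_iff hbal]
      have h2 : 2 ≤ i := by
        by_contra hlt
        have : i = 1 := by omega
        subst this
        norm_num at hprev
        exact hprev Df_zero
      exact ⟨by omega, by omega, g1, hprev, by rwa [heq]⟩
    · obtain ⟨g1, g2⟩ := hP i hz
      right
      rw [isDefect_iff hbal]
      have := Df_lt hbal hz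
      exact ⟨h1, by omega, g1, hz, g2⟩

/-- oriented between characterization helper -/
lemma below_above_aux (hlen : S.length = T.length) (hcnt : S.count true = T.count true)
    {x y : ℤ} (h1 : Below S x y) (h2 : Above T x y) :
    ∃ c : ℕ, c ≤ S.length ∧ x + y + 1 = (c : ℤ) ∧ cnt T c ≤ y ∧ y + 1 ≤ cnt S c := by
  obtain ⟨n, hn, hz, ho⟩ := h1
  obtain ⟨m, hm, ho', hz'⟩ := h2
  replace ho : y + 1 ≤ cnt S n := ho
  replace ho' : cnt T m ≤ y := ho'
  have hzS := zcount S hn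
  have hzT := zcount T hm
  have hx0 : 0 ≤ x := le_trans (Int.ofNat_nonneg _) hz
  have hy0 : 0 ≤ y := le_trans (cnt_nonneg T m) ho'
  have hc0 : 0 ≤ x + y + 1 := by omega
  set c : ℕ := (x + y + 1).toNat with hcdef
  have hc : (c : ℤ) = x + y + 1 := Int.toNat_of_nonneg hc0
  have hSn : cnt S n ≤ (S.count true : ℤ) := by
    rw [← cnt_ge_len (le_refl S.length)]; exact cnt_mono S hn
  have hTm : cnt T T.length ≤ cnt T m + ((T.length - m : ℕ) : ℤ) := cnt_le_add hm
  have hTlen : cnt T T.length = (T.count true : ℤ) := cnt_ge_len (le_refl _)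
  have hcL : c ≤ S.length := by
    have hcast : ((T.length - m : ℕ) : ℤ) = (T.length : ℤ) - m := by
      push_cast [Nat.cast_sub hm]; ring
    have hlen' : (S.length : ℤ) = (T.length : ℤ) := by exact_mod_cast hlen
    have hcnt' : (S.count true : ℤ) = (T.count true : ℤ) := by exact_mod_cast hcnt
    -- x + 1 ≤ m - cnt T m ≤ T.length - count true T ; y + 1 ≤ count true S
    have : (c : ℤ) ≤ (S.length : ℤ) := by omega
    exact_mod_cast this
  refine ⟨c, hcL, hc.symm, ?_, ?_⟩
  · rcases le_or_gt m c with hmc | hmc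
    · have hmono := cnt_le_add (P := T) hmc
      have hcast : ((c - m : ℕ) : ℤ) = (c : ℤ) - m := by push_cast [Nat.cast_sub hmc]; ring
      omega
    · have := cnt_mono T (le_of_lt hmc)
      omega
  · rcases le_or_gt n c with hnc | hnc
    · have := cnt_mono S hnc
      omega
    · have := cnt_le_add (P := S) (le_of_lt hnc)
      have hcast : ((n - c : ℕ) : ℤ) = (n : ℤ) - c := by
        push_cast [Nat.cast_sub (le_of_lt hnc)]; ring
      omega

lemma between_of (hbal : BalancedBits S T) {c : ℕ} (hc : c ≤ S.length) {x y : ℤ}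
    (hxy : x + y + 1 = (c : ℤ))
    (h1 : min (cnt S c) (cnt T c) ≤ y) (h2 : y + 1 ≤ max (cnt S c) (cnt T c)) :
    Between S T x y := by
  have hcT : c ≤ T.length := hbal.1 ▸ hc
  have hzS := zcount S hc
  have hzT := zcount T hcT
  rcases le_total (cnt T c) (cnt S c) with hor | hor
  · right
    rw [min_eq_right hor] at h1
    rw [max_eq_left hor] at h2
    exact ⟨⟨c, hc, by omega, by exact_mod_cast h2⟩, ⟨c, hcT, by exact_mod_cast h1, by omega⟩⟩
  · left
    rw [min_eq_left hor] at h1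
    rw [max_eq_right hor] at h2
    exact ⟨⟨c, hc, by exact_mod_cast h1, by omega⟩, ⟨c, hcT, by omega, by exact_mod_cast h2⟩⟩

lemma between_iff (hbal : BalancedBits S T) (x y : ℤ) :
    Between S T x y ↔ ∃ c : ℕ, c ≤ S.length ∧ x + y + 1 = (c : ℤ) ∧
      min (cnt S c) (cnt T c) ≤ y ∧ y + 1 ≤ max (cnt S c) (cnt T c) := by
  constructor
  · rintro (⟨ha, hb⟩ | ⟨hb, ha⟩)
    · obtain ⟨c, hc, h1, h2, h3⟩ := below_above_aux hbal.1.symm hbal.2.symm hb ha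
      refine ⟨c, by rw [hbal.1]; exact hc, h1, ?_, ?_⟩
      · exact le_trans (min_le_left _ _) h2
      · exact le_trans h3 (le_max_right _ _)
    · obtain ⟨c, hc, h1, h2, h3⟩ := below_above_aux hbal.1 hbal.2 hb ha
      refine ⟨c, hc, h1, ?_, ?_⟩
      · exact le_trans (min_le_right _ _) h2
      · exact le_trans h3 (le_max_left _ _)
  · rintro ⟨c, hc, hxy, h1, h2⟩
    exact between_of hbal hc hxy h1 h2

lemma min_spread (h : Df S T c ≠ 0) :
    min (cnt S c) (cnt T c) + 1 ≤ max (cnt S c) (cnt T c) := by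
  unfold Df at h; omega

lemma between_iff_P (hbal : BalancedBits S T) (hP : Pg S T) (x y : ℤ) :
    Between S T x y ↔ ∃ c : ℕ, Df S T c ≠ 0 ∧
      x = (c : ℤ) - 1 - min (cnt S c) (cnt T c) ∧ y = min (cnt S c) (cnt T c) := by
  rw [between_iff hbal]
  constructor
  · rintro ⟨c, hc, hxy, h1, h2⟩
    have hDf : Df S T c ≠ 0 := by unfold Df; omega
    refine ⟨c, hDf, ?_, ?_⟩ <;>
    · obtain ⟨b, rfl⟩ : ∃ b, c = b + 1 := ⟨c - 1, by have := Df_pos hDf; omega⟩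
      have hprev : Df S T b = 0 := by have := (hP _ hDf).1; simpa using this
      have hsS := cnt_step S b
      have hsT := cnt_step T b
      unfold Df at hprev
      omega
  · rintro ⟨c, hDf, hx, hy⟩
    have hcL := Df_lt hbal hDf
    have := min_spread hDf
    exact ⟨c, le_of_lt hcL, by omega, by omega, by omega⟩

lemma mono_key (hbal : BalancedBits S T) (hP : Pg S T) {c c' : ℕ} (hcc : c < c')
    (h1 : Df S T c ≠ 0) (h2 : Df S T c' ≠ 0) :
    min (cnt S c) (cnt T c) < min (cnt S c') (cnt T c') ∧
    (c : ℤ) - 1 - min (cnt S c) (cnt T c) < (c' : ℤ) - 1 - min (cnt S c') (cnt T c') := by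
  have hnext : Df S T (c + 1) = 0 := (hP c h1).2
  have hcc2 : c + 2 ≤ c' := by
    rcases Nat.lt_or_ge (c + 1) c' with h | h
    · omega
    · have hce : c' = c + 1 := by omega
      rw [hce] at h2; exact absurd hnext h2
  have hsS := cnt_step S c
  have hsT := cnt_step T c
  obtain ⟨b, rfl⟩ : ∃ b, c' = b + 1 := ⟨c' - 1, by omega⟩
  have hprev : Df S T b = 0 := by have := (hP _ h2).1; simpa using this
  have hsS' := cnt_step S b
  have hsT' := cnt_step T b
  have hm1 : cnt S (c + 1) ≤ cnt S (b + 1) := cnt_mono S (by omega)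
  have hm2 : cnt T (c + 1) ≤ cnt T (b + 1) := cnt_mono T (by omega)
  have hz1 : cnt S (b + 1) ≤ cnt S (c + 1) + ((b + 1 - (c + 1) : ℕ) : ℤ) :=
    cnt_le_add (by omega)
  have hz2 : cnt T (b + 1) ≤ cnt T (c + 1) + ((b + 1 - (c + 1) : ℕ) : ℤ) :=
    cnt_le_add (by omega)
  have hcast : ((b + 1 - (c + 1) : ℕ) : ℤ) = (b : ℤ) - c := by omega
  unfold Df at h1 h2 hnext hprev
  constructor
  · omega
  · omega

lemma A_to_P (hbal : BalancedBits S T)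
    (hA : ∀ x y x' y' : ℤ, Between S T x y → Between S T x' y' →
      (x, y) ≠ (x', y') → x ≠ x' ∧ y ≠ y') :
    Pg S T := by
  have key : ∀ c : ℕ, Df S T c ≠ 0 → Df S T (c + 1) ≠ 0 → False := by
    intro c h1 h2
    have hc1L : c + 1 < S.length := Df_lt hbal h2
    have hsS := cnt_step S c
    have hsT := cnt_step T c
    have hlt1 := min_spread h1
    have hlt2 := min_spread h2
    by_cases hcase : min (cnt S (c+1)) (cnt T (c+1)) + 1 ≤ max (cnt S c) (cnt T c)
    · -- shared row
      have b1 : Between S T ((c : ℤ) - 1 - min (cnt S (c+1)) (cnt T (c+1)))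
          (min (cnt S (c+1)) (cnt T (c+1))) :=
        between_of hbal (show c ≤ S.length by omega) (by ring) (by omega) hcase
      have b2 : Between S T ((c : ℤ) - min (cnt S (c+1)) (cnt T (c+1)))
          (min (cnt S (c+1)) (cnt T (c+1))) :=
        between_of hbal (show c + 1 ≤ S.length by omega) (by push_cast; ring) (by omega)
          (by omega)
      have hne : ((c : ℤ) - 1 - min (cnt S (c+1)) (cnt T (c+1)),
          min (cnt S (c+1)) (cnt T (c+1))) ≠
          ((c : ℤ) - min (cnt S (c+1)) (cnt T (c+1)), min (cnt S (c+1)) (cnt T (c+1))) := by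
        intro h
        rw [Prod.mk.injEq] at h
        omega
      exact absurd rfl (hA _ _ _ _ b1 b2 hne).2
    · -- shared column
      have b1 : Between S T ((c : ℤ) - 1 - min (cnt S c) (cnt T c))
          (min (cnt S c) (cnt T c)) :=
        between_of hbal (show c ≤ S.length by omega) (by ring) (by omega) (by omega)
      have b2 : Between S T ((c : ℤ) - 1 - min (cnt S c) (cnt T c))
          (min (cnt S c) (cnt T c) + 1) :=
        between_of hbal (show c + 1 ≤ S.length by omega) (by push_cast; omega) (by omega)
          (by omega)
      have hne : (((c : ℤ) - 1 - min (cnt S c) (cnt T c)), min (cnt S c) (cnt T c)) ≠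
          (((c : ℤ) - 1 - min (cnt S c) (cnt T c)), min (cnt S c) (cnt T c) + 1) := by
        intro h
        rw [Prod.mk.injEq] at h
        omega
      exact absurd rfl (hA _ _ _ _ b1 b2 hne).1
  intro n hn
  constructor
  · by_contra h
    obtain ⟨b, rfl⟩ : ∃ b, n = b + 1 := ⟨n - 1, by have := Df_pos hn; omega⟩
    have hb : Df S T b ≠ 0 := by simpa using h
    exact key b hb hn
  · by_contra h
    exact key n hn h

lemma P_to_A (hbal : BalancedBits S T) (hP : Pg S T) :
    ∀ x y x' y' : ℤ, Between S T x y → Between S T x' y' →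
      (x, y) ≠ (x', y') → x ≠ x' ∧ y ≠ y' := by
  intro x y x' y' hB1 hB2 hne
  obtain ⟨c, hc1, hcx, hcy⟩ := (between_iff_P hbal hP x y).1 hB1
  obtain ⟨c', hc'1, hcx', hcy'⟩ := (between_iff_P hbal hP x' y').1 hB2
  rcases lt_trichotomy c c' with h | h | h
  · have := mono_key hbal hP h hc1 hc'1
    constructor <;> omega
  · subst h
    exact absurd (by rw [hcx, hcy, hcx', hcy']) hne
  · have := mono_key hbal hP h hc'1 hc1
    constructor <;> omega

lemma count_eq (hbal : BalancedBits S T) (hP : Pg S T) :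
    {i : ℕ | IsDefect S T i}.ncard = {p : ℤ × ℤ | Between S T p.1 p.2}.ncard := by
  have hset1 : {i : ℕ | IsDefect S T i} = {c : ℕ | Df S T c ≠ 0} := by
    ext i
    simp only [Set.mem_setOf_eq, isDefect_iff hbal]
    constructor
    · rintro ⟨-, -, -, h, -⟩; exact h
    · intro h
      have := Df_lt hbal h
      exact ⟨Df_pos h, by omega, (hP i h).1, h, (hP i h).2⟩
  have hset2 : {p : ℤ × ℤ | Between S T p.1 p.2} =
      (fun c : ℕ => ((c : ℤ) - 1 - min (cnt S c) (cnt T c), min (cnt S c) (cnt T c))) ''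
        {c : ℕ | Df S T c ≠ 0} := by
    ext p
    simp only [Set.mem_setOf_eq, Set.mem_image, between_iff_P hbal hP p.1 p.2]
    constructor
    · rintro ⟨c, h1, h2, h3⟩
      exact ⟨c, h1, by rw [Prod.ext_iff]; exact ⟨h2.symm, h3.symm⟩⟩
    · rintro ⟨c, h1, h2⟩
      exact ⟨c, h1, by rw [← h2], by rw [← h2]⟩
  rw [hset1, hset2, Set.ncard_image_of_injOn]
  intro c1 _ c2 _ h
  rw [Prod.ext_iff] at h
  simp only at h
  have : (c1 : ℤ) = c2 := by omega
  exact_mod_cast this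

end DefectsAux

/-- For balanced `S` and `T`: no two distinct units of area between `S` and `T`
share a coordinate iff `S` and `T` differ by defects; and if they differ by
defects, the number of defects equals the area between `S` and `T`. -/
theorem differ_by_defects_iff (S T : List Bool) (hbal : BalancedBits S T) :
    ((∀ x y x' y' : ℤ, Between S T x y → Between S T x' y' →
        (x, y) ≠ (x', y') → x ≠ x' ∧ y ≠ y') ↔ DifferByDefects S T) ∧
    (DifferByDefects S T →
      {i : ℕ | IsDefect S T i}.ncard = {p : ℤ × ℤ | Between S T p.1 p.2}.ncard) := by
  constructor
  · constructor
    · intro hA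
      rw [DefectsAux.differ_iff hbal]
      exact DefectsAux.A_to_P hbal hA
    · intro hD
      exact DefectsAux.P_to_A hbal ((DefectsAux.differ_iff hbal).1 hD)
  · intro hD
    exact DefectsAux.count_eq hbal ((DefectsAux.differ_iff hbal).1 hD)
end

section
/- Let g : ℤ² → ℤ² be defined by g(x,y) = (x−y−1, 2y−x+1), and let F_i denote the i-th Fibonacci number with F_1 = F_2 = 1. Then for every positive integer n, g^n(x,y) = (F_{2n−1}·x − F_{2n}·y − F_{2n}, −F_{2n}·x + F_{2n+1}·y + F_{2n+1} − 1). -/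
/-- The map `g(x, y) = (x − y − 1, 2y − x + 1)`. -/
def g (p : ℤ × ℤ) : ℤ × ℤ := (p.1 - p.2 - 1, 2 * p.2 - p.1 + 1)

/-- For every positive integer `n`,
`g^n(x, y) = (F_{2n−1}·x − F_{2n}·y + F_{2n+1}·y + F_{2n+1} − 1)`. -/
theorem g_iterate_fib (n : ℕ) (hn : 0 < n) (x y : ℤ) :
    g^[n] (x, y) =
      ((Nat.fib (2 * n - 1) : ℤ) * x - (Nat.fib (2 * n) : ℤ) * y - (Nat.fib (2 * n) : ℤ),
       -(Nat.fib (2 * n) : ℤ) * x + (Nat.fib (2 * n + 1) : ℤ) * y +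
         (Nat.fib (2 * n + 1) : ℤ) - 1) := by
  induction n with
  | zero => exact absurd hn (by simp)
  | succ m ih =>
    rcases Nat.eq_zero_or_pos m with hm | hm
    · subst hm; simp [g, Nat.fib]; ring
    · rw [Function.iterate_succ_apply', ih hm]
      have h1 : 2 * (m + 1) - 1 = 2 * m + 1 := by omega
      have h2 : 2 * (m + 1) = 2 * m + 2 := by ring
      have h3 : 2 * (m + 1) + 1 = 2 * m + 3 := by ring
      have h4 : 2 * m - 1 + 1 = 2 * m := by omega
      rw [h1, h2, g]
      have f1 : (Nat.fib (2 * m + 2) : ℤ) = Nat.fib (2 * m) + Nat.fib (2 * m + 1) := by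
        rw [Nat.fib_add_two]; push_cast; ring
      have f2 : (Nat.fib (2 * m + 2 + 1) : ℤ) = Nat.fib (2 * m + 1) + Nat.fib (2 * m + 2) := by
        rw [show 2*m+2+1 = (2*m+1)+2 from rfl, Nat.fib_add_two]; push_cast; ring
      have f0 : (Nat.fib (2 * m + 1) : ℤ) = Nat.fib (2 * m - 1) + Nat.fib (2 * m) := by
        rw [show 2*m+1 = (2*m-1)+2 by omega, Nat.fib_add_two, h4]; push_cast; ring
      simp only [Prod.mk.injEq]
      constructor <;> (rw [f1]; try rw [f2, f1]) <;> rw [f0] <;> ring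
end

section
/- Let S and T be balanced bitstrings and let n = |S| + 1. Then w^n(S) and w^n(T) differ by defects. -/
namespace WsubAux

/-- integer count of trues in the length-`i` prefix -/
def cnt (S : List Bool) (i : ℕ) : ℤ := ((S.take i).count true : ℤ)

/-- position of the end of the `i`-th block of `wsub S` -/
def ell (S : List Bool) (i : ℕ) : ℤ := 3 * i - cnt S i

lemma cnt_zero (S : List Bool) : cnt S 0 = 0 := by simp [cnt]

lemma cnt_succ (S : List Bool) (i : ℕ) :
    cnt S (i + 1) = cnt S i + (if S.getD i false then 1 else 0) := by
  unfold cnt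
  rw [List.take_succ, List.count_append]
  rcases h : S[i]? with _ | b
  · have : S.length ≤ i := by
      by_contra hc
      rw [List.getElem?_eq_getElem (by omega : i < S.length)] at h
      exact absurd h (by simp)
    simp [List.getD, h]
  · have hi : i < S.length := by
      by_contra hc
      rw [List.getElem?_eq_none (by omega)] at h; exact absurd h (by simp)
    have : S.getD i false = b := by simp [List.getD, h]
    rcases b with _ | _ <;> simp [this, h]

lemma cnt_nonneg (S : List Bool) (i : ℕ) : 0 ≤ cnt S i := by unfold cnt; positivity

lemma cnt_add_le (S : List Bool) (i d : ℕ) : cnt S (i + d) ≤ cnt S i + d := by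
  induction d with
  | zero => simp
  | succ d ih =>
    rw [show i + (d+1) = (i+d)+1 by ring, cnt_succ]
    push_cast
    split_ifs <;> omega

lemma cnt_mono_add (S : List Bool) (i d : ℕ) : cnt S i ≤ cnt S (i + d) := by
  induction d with
  | zero => simp
  | succ d ih =>
    rw [show i + (d+1) = (i+d)+1 by ring, cnt_succ]
    split_ifs <;> omega

lemma cnt_length (S : List Bool) : cnt S S.length = (S.count true : ℤ) := by
  simp [cnt]

lemma cnt_of_le (S : List Bool) (i : ℕ) (h : S.length ≤ i) :
    cnt S i = (S.count true : ℤ) := by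
  unfold cnt
  rw [List.take_of_length_le h]

lemma cnt_le_count (S : List Bool) (i : ℕ) : cnt S i ≤ (S.count true : ℤ) := by
  rcases le_total i S.length with h | h
  · have := cnt_mono_add S i (S.length - i)
    rwa [show i + (S.length - i) = S.length by omega, cnt_length] at this
  · rw [cnt_of_le S i h]

lemma ell_add_ge (S : List Bool) (i d : ℕ) : ell S i + 2 * d ≤ ell S (i + d) := by
  have := cnt_add_le S i d
  unfold ell
  push_cast
  omega

lemma count_wsub (S : List Bool) : (wsub S).count true = S.length := by
  induction S with
  | nil => simp [wsub]
  | cons b S ih =>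
    rcases b with _ | _ <;> simp [wsub, List.flatMap_cons, List.count_append] at * <;> omega

lemma length_wsub (S : List Bool) : (wsub S).length + S.count true = 3 * S.length := by
  induction S with
  | nil => simp [wsub]
  | cons b S ih =>
    rcases b with _ | _ <;> simp [wsub, List.flatMap_cons, List.count_cons] at * <;> omega

lemma length_wsub_int (S : List Bool) : ((wsub S).length : ℤ) = ell S S.length := by
  have := length_wsub S
  have h2 : S.count true ≤ S.length := List.count_le_length
  unfold ell
  rw [cnt_length]
  omega

/-- key counting formula -/
lemma cnt_wsub (S : List Bool) (p : ℕ) :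
    cnt (wsub S) p =
      (((Finset.Icc 1 S.length).filter (fun i => ell S i ≤ (p : ℤ))).card : ℤ) := by
  induction S using List.reverseRecOn generalizing p with
  | nil => simp [wsub, cnt]
  | append_singleton S b ih =>
    classical
    set m := S.length with hm
    have hws : wsub (S ++ [b]) = wsub S ++ (if b then [false, true] else [false, false, true]) := by
      simp only [wsub, List.flatMap_append, List.flatMap_cons, List.flatMap_nil, List.append_nil]
    have hlen : (S ++ [b]).length = m + 1 := by simp [hm]
    have hL : cnt (wsub (S ++ [b])) p
        = cnt (wsub S) p + ((((if b then [false, true] else [false, false, true] : List Bool).take (p - (wsub S).length)).count true : ℕ) : ℤ) := by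
      rw [hws]
      unfold cnt
      rw [List.take_append, List.count_append]
      push_cast; ring
    have hblk : (((if b then [false, true] else [false, false, true] : List Bool).take (p - (wsub S).length)).count true : ℤ)
        = if ((if b then 2 else 3) : ℕ) ≤ p - (wsub S).length then 1 else 0 := by
      rcases b with _|_ <;> rcases hk : p - (wsub S).length with _|_|_|k <;> simp [hk]
    have hellagree : ∀ i ∈ Finset.Icc 1 m, (ell (S ++ [b]) i ≤ (p:ℤ)) = (ell S i ≤ (p:ℤ)) := by
      intro i hi
      rw [Finset.mem_Icc] at hi
      unfold ell cnt
      rw [List.take_append_of_le_length (by omega)]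
    have h1 : ((wsub S).length : ℤ) = 3 * m - (S.count true : ℤ) := by
      rw [length_wsub_int S]; unfold ell; rw [cnt_length]
    have h2 : ell (S ++ [b]) (m+1) = 3*(m+1) - ((S.count true : ℤ) + (if b then 1 else 0)) := by
      unfold ell cnt
      rw [show (m+1) = (S ++ [b]).length from hlen.symm, List.take_length]
      rcases b with _|_ <;> simp [List.count_append] <;> push_cast <;> ring
    have hnew : (ell (S ++ [b]) (m+1) ≤ (p:ℤ)) ↔ ((if b then 2 else 3) : ℕ) ≤ p - (wsub S).length := by
      rw [h2]
      rcases b with _|_ <;> simp only [if_true, if_false, Bool.false_eq_true] <;> push_cast <;> omega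
    rw [hL, hblk, hlen]
    rw [show Finset.Icc 1 (m+1) = insert (m+1) (Finset.Icc 1 m) from (Finset.insert_Icc_right_eq_Icc_add_one (by omega)).symm]
    rw [Finset.filter_insert, Finset.filter_congr (fun i hi => by rw [hellagree i hi])]
    by_cases hc : ell (S ++ [b]) (m+1) ≤ (p:ℤ)
    · rw [if_pos hc, Finset.card_insert_of_notMem (by simp [Finset.mem_filter, Finset.mem_Icc])]
      rw [ih p, if_pos (hnew.mp hc)]
      push_cast; ring
    · rw [if_neg hc, if_neg (fun h => hc (hnew.mpr h)), ih p]
      ring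

/-- difference of counts of the images as a sum over blocks -/
lemma f_wsub_eq_sum (S T : List Bool) (hlen : S.length = T.length) (p : ℕ) :
    cnt (wsub S) p - cnt (wsub T) p =
      ∑ i ∈ Finset.Icc 1 S.length,
        ((if ell S i ≤ (p:ℤ) then (1:ℤ) else 0) - (if ell T i ≤ (p:ℤ) then 1 else 0)) := by
  rw [cnt_wsub, cnt_wsub, Finset.sum_sub_distrib, ← hlen]
  rw [Finset.card_filter, Finset.card_filter]
  push_cast
  simp

lemma balanced_wsub {S T : List Bool} (h : BalancedBits S T) :
    BalancedBits (wsub S) (wsub T) := by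
  obtain ⟨h1, h2⟩ := h
  constructor
  · have := length_wsub S; have := length_wsub T; omega
  · rw [count_wsub, count_wsub, h1]

lemma decrease_one_sided (S T : List Bool) (hlen : S.length = T.length) (A : ℤ)
    (hA : ∀ i, cnt S i - cnt T i ≤ A) (p : ℕ) :
    cnt (wsub S) p - cnt (wsub T) p ≤ max (A - 1) 1 := by
  classical
  set D := cnt (wsub S) p - cnt (wsub T) p with hD
  rcases le_or_gt D 1 with h | h
  · exact le_trans h (le_max_right _ _)
  · set I := (Finset.Icc 1 S.length).filter
      (fun i => ell S i ≤ (p:ℤ) ∧ ¬ (ell T i ≤ (p:ℤ))) with hI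
    have hcard : D ≤ (I.card : ℤ) := by
      rw [hD, f_wsub_eq_sum S T hlen p, hI, Finset.card_filter]
      push_cast
      apply Finset.sum_le_sum
      intro i _
      split_ifs <;> simp_all <;> omega
    have hne : I.Nonempty := by
      rw [← Finset.card_pos]
      omega
    set i1 := I.min' hne with hi1
    set i2 := I.max' hne with hi2
    have hm1 : i1 ∈ I := I.min'_mem hne
    have hm2 : i2 ∈ I := I.max'_mem hne
    have h12 : i1 ≤ i2 := I.min'_le i2 hm2
    have hsub : I ⊆ Finset.Icc i1 i2 := by
      intro x hx
      rw [Finset.mem_Icc]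
      exact ⟨I.min'_le x hx, I.le_max' x hx⟩
    have hIcard : I.card ≤ i2 - i1 + 1 := by
      have := Finset.card_le_card hsub
      rw [Nat.card_Icc] at this; omega
    rw [hI, Finset.mem_filter] at hm1 hm2
    obtain ⟨-, -, hT1⟩ := hm1
    obtain ⟨-, hS2, -⟩ := hm2
    -- cnt S i2 ≤ cnt S i1 + (i2 - i1)
    have hlip : cnt S i2 ≤ cnt S i1 + ((i2 - i1 : ℕ) : ℤ) := by
      have := cnt_add_le S i1 (i2 - i1)
      rwa [show i1 + (i2 - i1) = i2 by omega] at this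
    have hf : 2 * ((i2 - i1 : ℕ) : ℤ) + 1 ≤ cnt S i1 - cnt T i1 := by
      unfold ell at hS2 hT1
      push_cast at *
      omega
    have := hA i1
    have : D ≤ A - 1 := by push_cast at *; omega
    exact le_trans this (le_max_left _ _)

lemma decrease (S T : List Bool) (hlen : S.length = T.length) (A : ℤ)
    (hA : ∀ i, |cnt S i - cnt T i| ≤ A) (p : ℕ) :
    |cnt (wsub S) p - cnt (wsub T) p| ≤ max (A - 1) 1 := by
  rw [abs_le]
  constructor
  · have := decrease_one_sided T S hlen.symm A (fun i => by have := hA i; rw [abs_le] at this; omega) p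
    omega
  · exact decrease_one_sided S T hlen A (fun i => by have := hA i; rw [abs_le] at this; omega) p

/-- If all prefix differences are at most 1, the images have isolated spikes. -/
lemma isolated_step (S T : List Bool) (hlen : S.length = T.length)
    (h1 : ∀ i, |cnt S i - cnt T i| ≤ 1) (p : ℕ)
    (hne : cnt (wsub S) (p+1) - cnt (wsub T) (p+1) ≠ 0) :
    cnt (wsub S) p - cnt (wsub T) p = 0 ∧
      cnt (wsub S) (p+2) - cnt (wsub T) (p+2) = 0 := by
  classical
  set e : ℕ → ℤ := fun i => min (ell S i) (ell T i) with he
  have hterm : ∀ (q : ℕ) (i : ℕ),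
      ((if ell S i ≤ (q:ℤ) then (1:ℤ) else 0) - (if ell T i ≤ (q:ℤ) then 1 else 0))
        = if (q : ℤ) = e i then cnt S i - cnt T i else 0 := by
    intro q i
    have hfi := h1 i
    rw [abs_le] at hfi
    have hrel : ell T i - ell S i = cnt S i - cnt T i := by unfold ell; ring
    have hmin : e i = min (ell S i) (ell T i) := rfl
    rcases min_cases (ell S i) (ell T i) with ⟨hmv, _⟩ | ⟨hmv, _⟩ <;>
      rw [hmin, hmv] <;> split_ifs <;> omega
  have hegap : ∀ i d : ℕ, e i + 2 * d ≤ e (i + d) := by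
    intro i d
    have hS := ell_add_ge S i d
    have hT := ell_add_ge T i d
    simp only [he]
    omega
  have hsum : ∀ q : ℕ, cnt (wsub S) q - cnt (wsub T) q =
      ∑ i ∈ Finset.Icc 1 S.length, (if (q : ℤ) = e i then cnt S i - cnt T i else 0) := by
    intro q
    rw [f_wsub_eq_sum S T hlen q]
    exact Finset.sum_congr rfl (fun i _ => hterm q i)
  rw [hsum] at hne
  -- find the unique spike index
  obtain ⟨i0, hi0mem, hi0⟩ : ∃ i0 ∈ Finset.Icc 1 S.length,
      ¬ ((if ((p:ℤ)+1) = e i0 then cnt S i0 - cnt T i0 else 0) = 0) := by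
    by_contra hcon
    push_neg at hcon
    exact hne (by push_cast; exact Finset.sum_eq_zero (by intro i hi; have := hcon i hi; push_cast at this ⊢; omega))
  have hi0e : (p:ℤ) + 1 = e i0 := by
    by_contra hc
    rw [if_neg hc] at hi0
    exact hi0 rfl
  have hkey : ∀ (q : ℕ), (q = p ∨ q = p + 2) →
      cnt (wsub S) q - cnt (wsub T) q = 0 := by
    intro q hq
    rw [hsum]
    apply Finset.sum_eq_zero
    intro i hi
    rw [if_neg]
    intro hqe
    rcases hq with hq | hq <;>
    rcases lt_trichotomy i i0 with hlt | heq | hgt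
    all_goals first
      | (subst heq; omega)
      | (have := hegap i (i0 - i);
         rw [show i + (i0 - i) = i0 by omega] at this; omega)
      | (have := hegap i0 (i - i0);
         rw [show i0 + (i - i0) = i by omega] at this; omega)
  exact ⟨hkey p (Or.inl rfl), hkey (p+2) (Or.inr rfl)⟩

lemma differ_of_isolated (U V : List Bool) (hbal : BalancedBits U V)
    (hiso0 : ∀ p : ℕ, cnt U (p+1) - cnt V (p+1) ≠ 0 →
      cnt U p - cnt V p = 0 ∧ cnt U (p+2) - cnt V (p+2) = 0) :
    DifferByDefects U V := by
  obtain ⟨hlen, hcount⟩ := hbal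
  obtain ⟨f, hf⟩ : ∃ f : ℕ → ℤ, ∀ k, f k = cnt U k - cnt V k := ⟨_, fun _ => rfl⟩
  have hiso : ∀ p : ℕ, f (p+1) ≠ 0 → f p = 0 ∧ f (p+2) = 0 := by
    intro p hp
    have := hiso0 p (by rw [hf] at hp; exact hp)
    rw [hf, hf]
    exact this
  have hf0 : f 0 = 0 := by rw [hf]; simp [cnt_zero]
  have hfz : ∀ k, U.length ≤ k → f k = 0 := by
    intro k hk
    rw [hf]
    simp [cnt_of_le U k hk, cnt_of_le V k (by omega : V.length ≤ k), hcount]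
  have hstep : ∀ k, f (k+1) - f k
      = (if U.getD k false then 1 else 0) - (if V.getD k false then 1 else 0) := by
    intro k; rw [hf, hf, cnt_succ, cnt_succ]; ring
  have hdiff : ∀ k, (U.getD k false ≠ V.getD k false) ↔ f (k+1) ≠ f k := by
    intro k
    have h := hstep k
    rcases hU : U.getD k false <;> rcases hV : V.getD k false <;>
      rw [hU, hV] at h <;> norm_num at h ⊢ <;> omega
  have hbalpre : ∀ j, f j = 0 → BalancedBits (U.take j) (V.take j) := by
    intro j hj
    rw [hf] at hj
    constructor
    · simp [hlen]
    · have h : cnt U j = cnt V j := by omega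
      unfold cnt at h
      exact_mod_cast h
  have halt : ∀ j, f j = 0 → f (j+1) ≠ 0 → f (j+2) = 0 →
      U.getD j false ≠ U.getD (j+1) false := by
    intro j e0 e1 e2
    have s1 := hstep j
    have s2 := hstep (j+1)
    have e2' : f (j+1+1) = 0 := e2
    rcases hU : U.getD j false <;> rcases hV : V.getD j false <;>
      rcases hU1 : U.getD (j+1) false <;> rcases hV1 : V.getD (j+1) false <;>
      rw [hU, hV] at s1 <;> rw [hU1, hV1] at s2 <;> norm_num at s1 s2 ⊢ <;> omega
  refine ⟨⟨hlen, hcount⟩, ?_⟩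
  intro i hi1 hil hne
  obtain ⟨j, rfl⟩ : ∃ j, i = j + 1 := ⟨i - 1, by omega⟩
  simp only [Nat.add_sub_cancel] at hne
  have hnef : f (j+1) ≠ f j := (hdiff j).mp hne
  by_cases hcase : f (j+1) ≠ 0
  · -- defect at i = j+1
    right
    obtain ⟨e0, e2⟩ := hiso j hcase
    have hjlen : j + 1 < U.length := by
      by_contra hc
      exact hcase (hfz (j+1) (by omega))
    refine ⟨by omega, by omega, ?_, ?_, ?_, ?_⟩
    · exact hbalpre j e0
    · exact hne
    · exact halt j e0 hcase e2
    · have e2' : f (j+1+1) = 0 := e2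
      exact (hdiff (j+1)).mpr (by omega)
  · -- f (j+1) = 0, so f j ≠ 0 : defect at i - 1 = j
    left
    push_neg at hcase
    have hfj : f j ≠ 0 := by omega
    obtain ⟨k, rfl⟩ : ∃ k, j = k + 1 := by
      rcases j with _ | k
      · exact absurd hf0 hfj
      · exact ⟨k, rfl⟩
    obtain ⟨e0, -⟩ := hiso k hfj
    have hjlen : k + 1 < U.length := by
      by_contra hc
      exact hfj (hfz (k+1) (by omega))
    refine ⟨by omega, by omega, ?_, ?_, ?_, ?_⟩
    · exact hbalpre k e0
    · exact (hdiff k).mpr (by omega)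
    · exact halt k e0 hfj hcase
    · exact (hdiff (k+1)).mpr (by omega)

lemma cnt_le_len (S : List Bool) (i : ℕ) : cnt S i ≤ (S.length : ℤ) :=
  le_trans (cnt_le_count S i) (by exact_mod_cast List.count_le_length)

lemma balanced_iter (S T : List Bool) (h : BalancedBits S T) (k : ℕ) :
    BalancedBits (wsub^[k] S) (wsub^[k] T) := by
  induction k with
  | zero => exact h
  | succ k ih =>
    rw [Function.iterate_succ_apply', Function.iterate_succ_apply']
    exact balanced_wsub ih

lemma bound_iter (S T : List Bool) (h : BalancedBits S T) (k : ℕ) :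
    ∀ i, |cnt (wsub^[k] S) i - cnt (wsub^[k] T) i| ≤ max ((S.length : ℤ) - k) 1 := by
  induction k with
  | zero =>
    intro i
    simp only [Function.iterate_zero, id_eq, Nat.cast_zero, sub_zero]
    have h1 := cnt_nonneg S i
    have h2 := cnt_nonneg T i
    have h3 := cnt_le_len S i
    have h4 := cnt_le_len T i
    have h5 : T.length = S.length := h.1.symm
    rw [abs_le]
    rcases max_cases ((S.length : ℤ)) 1 with ⟨hmax, hle⟩ | ⟨hmax, hle⟩ <;>
      rw [hmax] <;> constructor <;> omega
  | succ k ih =>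
    intro i
    rw [Function.iterate_succ_apply', Function.iterate_succ_apply']
    have hlen : (wsub^[k] S).length = (wsub^[k] T).length := (balanced_iter S T h k).1
    refine le_trans (decrease _ _ hlen (max ((S.length : ℤ) - k) 1) ih i) ?_
    push_cast
    simp only [max_def]
    split_ifs <;> omega

end WsubAux

/-- For balanced bitstrings `S` and `T` and `n = |S| + 1`, the strings
`w^n(S)` and `w^n(T)` differ by defects. -/
theorem wsub_iterate_differ_by_defects (S T : List Bool) (hbal : BalancedBits S T) :
    DifferByDefects (wsub^[S.length + 1] S) (wsub^[S.length + 1] T) := by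
  classical
  have hbalm := WsubAux.balanced_iter S T hbal S.length
  have h1 : ∀ i, |WsubAux.cnt (wsub^[S.length] S) i - WsubAux.cnt (wsub^[S.length] T) i| ≤ 1 := by
    intro i
    have hb := WsubAux.bound_iter S T hbal S.length i
    simpa using hb
  have hiso := fun p => WsubAux.isolated_step _ _ hbalm.1 h1 p
  rw [Function.iterate_succ_apply', Function.iterate_succ_apply']
  exact WsubAux.differ_of_isolated _ _ (WsubAux.balanced_wsub hbalm) hiso
end

section
/- Let S and T be bitstrings that differ by defects. Then w(S) and w(T) also differ by defects, and the number of defects between w(S) and w(T) equals the number of defects between S and T. -/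
lemma balanced_cons {b : Bool} {A B : List Bool} :
    BalancedBits (b::A) (b::B) ↔ BalancedBits A B := by
  simp [BalancedBits, List.count_cons]

lemma defect_cons (b : Bool) (S T : List Bool) (j : ℕ) :
    IsDefect (b::S) (b::T) (j+1) ↔ IsDefect S T j := by
  cases j with
  | zero => simp [IsDefect]
  | succ j =>
    simp only [IsDefect, Nat.add_sub_cancel, List.take_succ_cons, List.getD_cons_succ,
      balanced_cons, List.length_cons]
    constructor <;> rintro ⟨-, h2, h3⟩ <;> exact ⟨by omega, by omega, h3⟩

lemma defect_not_one_cons (b : Bool) (S T : List Bool) :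
    ¬ IsDefect (b::S) (b::T) 1 := by
  simp [IsDefect]

lemma defect_swap (a b : Bool) (hab : a ≠ b) (S T : List Bool) (j : ℕ) :
    IsDefect (a::b::S) (b::a::T) (j+2) ↔ IsDefect S T j := by
  cases j with
  | zero =>
    have : a = !b := by cases a <;> cases b <;> simp_all
    subst this
    cases b <;> simp [IsDefect, BalancedBits]
  | succ j =>
    have hcnt : ∀ X Y : List Bool,
        BalancedBits (a::b::X) (b::a::Y) ↔ BalancedBits X Y := by
      intro X Y
      cases a <;> cases b <;> simp_all [BalancedBits, List.count_cons] <;> omega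
    simp only [IsDefect, Nat.add_sub_cancel, show j+1+2-1 = j+2 by omega,
      List.take_succ_cons, List.getD_cons_succ, hcnt, List.length_cons,
      show j+1+2 = j+1+1+1 by omega]
    constructor <;> rintro ⟨-, h2, h3⟩ <;> exact ⟨by omega, by omega, h3⟩

lemma defect_one_swap (a b : Bool) (hab : a ≠ b) (S T : List Bool) :
    IsDefect (a::b::S) (b::a::T) 1 := by
  cases a <;> cases b <;> simp_all [IsDefect, BalancedBits]

lemma defect_finite (S T : List Bool) : {i : ℕ | IsDefect S T i}.Finite := by
  apply Set.Finite.subset (Set.finite_Iio S.length)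
  intro i hi
  have := hi.2.1
  simpa using by omega

lemma defectSet_cons (b : Bool) (S T : List Bool) :
    {i : ℕ | IsDefect (b::S) (b::T) i} = (fun j => j + 1) '' {i : ℕ | IsDefect S T i} := by
  ext i
  cases i with
  | zero =>
    simp only [Set.mem_setOf_eq, Set.mem_image]
    constructor
    · rintro ⟨h, -⟩; omega
    · rintro ⟨j, -, hj⟩; omega
  | succ j =>
    simp only [Set.mem_setOf_eq, Set.mem_image, defect_cons]
    constructor
    · intro h
      exact ⟨j, h, rfl⟩
    · rintro ⟨k, hk, hkj⟩
      have : k = j := by omega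
      exact this ▸ hk

lemma ncard_defect_cons (b : Bool) (S T : List Bool) :
    {i : ℕ | IsDefect (b::S) (b::T) i}.ncard = {i : ℕ | IsDefect S T i}.ncard := by
  rw [defectSet_cons, Set.ncard_image_of_injective _ (add_left_injective 1)]

lemma defectSet_swap (a b : Bool) (hab : a ≠ b) (S T : List Bool) :
    {i : ℕ | IsDefect (a::b::S) (b::a::T) i} =
      insert 1 ((fun j => j + 2) '' {i : ℕ | IsDefect S T i}) := by
  ext i
  match i with
  | 0 =>
    simp only [Set.mem_setOf_eq, Set.mem_insert_iff, Set.mem_image]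
    constructor
    · rintro ⟨h, -⟩; omega
    · rintro (h | ⟨j, -, hj⟩) <;> omega
  | 1 =>
    simp [defect_one_swap a b hab S T]
  | (j+2) =>
    simp only [Set.mem_setOf_eq, Set.mem_insert_iff, Set.mem_image, defect_swap a b hab]
    constructor
    · intro h; exact Or.inr ⟨j, h, rfl⟩
    · rintro (h | ⟨k, hk, hkj⟩)
      · omega
      · have : k = j := by omega
        exact this ▸ hk

lemma ncard_defect_swap (a b : Bool) (hab : a ≠ b) (S T : List Bool) :
    {i : ℕ | IsDefect (a::b::S) (b::a::T) i}.ncard = {i : ℕ | IsDefect S T i}.ncard + 1 := by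
  rw [defectSet_swap a b hab]
  rw [Set.ncard_insert_of_notMem ?nm ((defect_finite S T).image _),
    Set.ncard_image_of_injective _ (add_left_injective 2)]
  case nm =>
    rintro ⟨j, hj, hj1⟩
    have h1 := hj.1
    have h2 : j + 2 = 1 := hj1
    omega

/-- Inductive characterization: S and T are built from matching characters
and adjacent swapped pairs. -/
inductive SwapRel : List Bool → List Bool → Prop
  | nil : SwapRel [] []
  | cons (b : Bool) {S T : List Bool} : SwapRel S T → SwapRel (b::S) (b::T)
  | swap (a b : Bool) (hab : a ≠ b) {S T : List Bool} :
      SwapRel S T → SwapRel (a::b::S) (b::a::T)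

lemma SwapRel.balanced {S T : List Bool} (h : SwapRel S T) : BalancedBits S T := by
  induction h with
  | nil => exact ⟨rfl, rfl⟩
  | cons b h ih => exact balanced_cons.mpr ih
  | swap a b hab h ih =>
    cases a <;> cases b <;> simp_all [BalancedBits, List.count_cons] <;> omega

lemma SwapRel.differByDefects {S T : List Bool} (h : SwapRel S T) :
    DifferByDefects S T := by
  refine ⟨h.balanced, ?_⟩
  induction h with
  | nil => intro i h1 h2 _; simp at h2; omega
  | @cons b S T h ih =>
    intro i h1 h2 hd
    match i, h1 with
    | 1, _ => simp at hd
    | (j+2), _ =>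
      have hd' : S.getD (j+1-1) false ≠ T.getD (j+1-1) false := by
        simpa using hd
      rcases ih (j+1) (by omega) (by simp at h2; omega) hd' with h' | h'
      · left; simpa using (defect_cons b _ _ j).mpr (by simpa using h')
      · right; exact (defect_cons b _ _ (j+1)).mpr h'
  | @swap a b hab S T h ih =>
    intro i h1 h2 hd
    match i, h1 with
    | 1, _ => right; exact defect_one_swap a b hab _ _
    | 2, _ => left; exact defect_one_swap a b hab _ _
    | (j+3), _ =>
      have hd' : S.getD (j+1-1) false ≠ T.getD (j+1-1) false := by
        simpa using hd
      rcases ih (j+1) (by omega) (by simp at h2 ⊢; omega) hd' with h' | h'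
      · left
        have : IsDefect (a::b::S) (b::a::T) (j+2) :=
          (defect_swap a b hab _ _ j).mpr (by simpa using h')
        simpa using this
      · right
        exact (defect_swap a b hab _ _ (j+1)).mpr h'

lemma differByDefects_swapRel : ∀ n (S T : List Bool), S.length ≤ n →
    DifferByDefects S T → SwapRel S T := by
  intro n
  induction n with
  | zero =>
    intro S T hlen h
    have hT := h.1.1
    match S, T with
    | [], [] => exact SwapRel.nil
    | [], _::_ => simp at hT
    | _::_, _ => simp at hlen
  | succ n ih =>
    intro S T hlen h
    match S, T, h.1.1 with
    | [], [], _ => exact SwapRel.nil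
    | b::S₁, c::T₁, hT =>
      by_cases hbc : b = c
      · subst hbc
        refine SwapRel.cons b (ih S₁ T₁ (by simp at hlen; omega) ⟨?_, ?_⟩)
        · exact balanced_cons.mp h.1
        · intro j h1 h2 hd
          have hd' : (b::S₁).getD (j+1-1) false ≠ (b::T₁).getD (j+1-1) false := by
            match j, h1 with
            | (k+1), _ => simpa using hd
          rcases h.2 (j+1) (by omega) (by simp; omega) hd' with h' | h'
          · left
            match j, h1 with
            | (k+1), _ => exact (defect_cons b _ _ k).mp (by simpa using h')
          · right
            exact (defect_cons b _ _ j).mp h'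
      · -- heads differ: extract the swap structure
        have hd0 : (b::S₁).getD 0 false ≠ (c::T₁).getD 0 false := by simpa using hbc
        rcases h.2 1 le_rfl (by simp) hd0 with h' | h'
        · exact absurd h'.1 (by omega)
        · obtain ⟨-, hlen2, -, -, h5, h6⟩ := h'
          match S₁, T₁, (by simpa using hlen2 : 1 ≤ S₁.length), hT with
          | b'::S₂, c'::T₂, _, hT =>
            simp only [show (1:ℕ)-1 = 0 from rfl, List.getD_cons_zero, List.getD_cons_succ] at h5 h6 hd0
            have hb' : b' = c := by
              cases b <;> cases c <;> cases b' <;>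
                first | rfl | exact absurd rfl hbc | exact absurd rfl h5
            have hc' : c' = b := by
              cases b <;> cases c <;> cases b' <;> cases c' <;>
                first | rfl | exact absurd rfl hbc | exact absurd rfl h5
                      | exact absurd rfl h6
            have hb2 : c = b' := hb'.symm
            have hc2 : b = c' := hc'.symm
            subst hb2; subst hc2
            refine SwapRel.swap b c hbc (ih S₂ T₂ (by simp at hlen; omega) ⟨?_, ?_⟩)
            · have := h.1
              cases b <;> cases c <;> simp_all [BalancedBits, List.count_cons] <;> omega
            · intro j h1 h2 hd
              have hd' : (b::c::S₂).getD (j+2-1) false ≠ (c::b::T₂).getD (j+2-1) false := by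
                match j, h1 with
                | (k+1), _ => simpa using hd
              rcases h.2 (j+2) (by omega) (by simp; omega) hd' with h' | h'
              · left
                match j, h1 with
                | (k+1), _ => exact (defect_swap b c hbc _ _ k).mp (by simpa using h')
              · right
                exact (defect_swap b c hbc _ _ j).mp h'

lemma wsub_nil : wsub [] = [] := rfl

lemma wsub_cons_true (S : List Bool) : wsub (true::S) = false::true::wsub S := by
  simp [wsub]

lemma wsub_cons_false (S : List Bool) : wsub (false::S) = false::false::true::wsub S := by
  simp [wsub]

lemma SwapRel.wsub_rel {S T : List Bool} (h : SwapRel S T) : SwapRel (wsub S) (wsub T) := by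
  induction h with
  | nil => exact SwapRel.nil
  | @cons b S T h ih =>
    cases b
    · rw [wsub_cons_false, wsub_cons_false]
      exact .cons _ (.cons _ (.cons _ ih))
    · rw [wsub_cons_true, wsub_cons_true]
      exact .cons _ (.cons _ ih)
  | @swap a b hab S T h ih =>
    have : a = !b := by cases a <;> cases b <;> simp_all
    subst this
    cases b
    · simp only [Bool.not_false]
      rw [wsub_cons_true, wsub_cons_false, wsub_cons_false, wsub_cons_true]
      exact .cons _ (.swap true false (by simp) (.cons _ (.cons _ ih)))
    · simp only [Bool.not_true]
      rw [wsub_cons_false, wsub_cons_true, wsub_cons_true, wsub_cons_false]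
      exact .cons _ (.swap false true (by simp) (.cons _ (.cons _ ih)))

lemma SwapRel.ncard_eq {S T : List Bool} (h : SwapRel S T) :
    {i : ℕ | IsDefect (wsub S) (wsub T) i}.ncard = {i : ℕ | IsDefect S T i}.ncard := by
  induction h with
  | nil => rfl
  | @cons b S T h ih =>
    rw [ncard_defect_cons]
    cases b
    · rw [wsub_cons_false, wsub_cons_false, ncard_defect_cons, ncard_defect_cons,
        ncard_defect_cons]
      exact ih
    · rw [wsub_cons_true, wsub_cons_true, ncard_defect_cons, ncard_defect_cons]
      exact ih
  | @swap a b hab S T h ih =>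
    rw [ncard_defect_swap a b hab]
    have : a = !b := by cases a <;> cases b <;> simp_all
    subst this
    cases b
    · simp only [Bool.not_false]
      rw [wsub_cons_true, wsub_cons_false, wsub_cons_false, wsub_cons_true,
        ncard_defect_cons, ncard_defect_swap true false (by simp),
        ncard_defect_cons, ncard_defect_cons, ih]
    · simp only [Bool.not_true]
      rw [wsub_cons_false, wsub_cons_true, wsub_cons_true, wsub_cons_false,
        ncard_defect_cons, ncard_defect_swap false true (by simp),
        ncard_defect_cons, ncard_defect_cons, ih]

/-- Defect preservation: if `S` and `T` differ by defects, then `w(S)` and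
`w(T)` differ by defects, and the number of defects is the same. -/
theorem defect_preservation (S T : List Bool) (h : DifferByDefects S T) :
    DifferByDefects (wsub S) (wsub T) ∧
    {i : ℕ | IsDefect (wsub S) (wsub T) i}.ncard = {i : ℕ | IsDefect S T i}.ncard := by
  have hsr : SwapRel S T := differByDefects_swapRel S.length S T le_rfl h
  exact ⟨hsr.wsub_rel.differByDefects, hsr.ncard_eq⟩
end

section
/- The set B of P-positions of the natural (unaltered) Wythoff game equals {(⌊φn⌋, ⌊φ²n⌋) : n ∈ ℕ} ∪ {(⌊φ²n⌋, ⌊φn⌋) : n ∈ ℕ}, where φ = (1+√5)/2. -/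
/-- The golden ratio `φ = (1 + √5)/2`. -/
noncomputable def phi : ℝ := (1 + Real.sqrt 5) / 2

lemma phi_eq : phi = Real.goldenRatio := rfl

noncomputable def wa (n : ℕ) : ℤ := ⌊phi * n⌋
noncomputable def wb (n : ℕ) : ℤ := ⌊phi ^ 2 * n⌋

lemma one_lt_phi : 1 < phi := Real.one_lt_goldenRatio
lemma phi_irr : Irrational phi := Real.goldenRatio_irrational

lemma wb_eq (n : ℕ) : wb n = wa n + n := by
  unfold wa wb
  rw [phi_eq, Real.goldenRatio_sq, add_mul, one_mul]
  rw [show Real.goldenRatio * n + n = Real.goldenRatio * n + (n : ℤ) by push_cast; ring, Int.floor_add_intCast]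

lemma wa_strictMono : StrictMono wa := by
  intro m n h
  unfold wa
  have h1 : phi * m + 1 ≤ phi * n := by
    have : (m : ℝ) + 1 ≤ n := by exact_mod_cast h
    have h1 : phi * ((m:ℝ)+1) ≤ phi * n := mul_le_mul_of_nonneg_left this (le_trans zero_le_one one_lt_phi.le)
    nlinarith [one_lt_phi, h1]
  calc ⌊phi * m⌋ < ⌊phi * m⌋ + 1 := by omega
    _ = ⌊phi * m + (1:ℤ)⌋ := by rw [Int.floor_add_intCast]
    _ = ⌊phi * m + 1⌋ := by norm_num
    _ ≤ ⌊phi * n⌋ := Int.floor_le_floor h1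

lemma wa_zero : wa 0 = 0 := by simp [wa]
lemma wa_nonneg (n : ℕ) : 0 ≤ wa n := by
  have := wa_strictMono.monotone (Nat.zero_le n); rwa [wa_zero] at this
lemma wa_pos {n : ℕ} (h : 0 < n) : 0 < wa n := by
  have := wa_strictMono h; rwa [wa_zero] at this

lemma hconj : Real.HolderConjugate phi (phi ^ 2) := by
  rw [Real.holderConjugate_iff]; constructor
  · exact one_lt_phi
  · rw [phi_eq, Real.goldenRatio_sq]
    have h5 : Real.sqrt 5 ^ 2 = 5 := Real.sq_sqrt (by norm_num)
    have h5' : 1 < Real.sqrt 5 := by nlinarith [Real.sqrt_nonneg 5]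
    field_simp
    nlinarith [h5]

open scoped symmDiff

lemma beatty_main : {x | ∃ k > 0, beattySeq phi k = x} ∆ {x | ∃ k > 0, beattySeq (phi^2) k = x}
    = {n : ℤ | 0 < n} :=
  phi_irr.beattySeq_symmDiff_beattySeq_pos hconj

lemma mem_A {n : ℕ} (h : 0 < n) : wa n ∈ {x | ∃ k > 0, beattySeq phi k = x} :=
  ⟨(n : ℤ), by exact_mod_cast h, by unfold beattySeq wa; rw [mul_comm]; norm_num⟩

lemma mem_B {n : ℕ} (h : 0 < n) : wb n ∈ {x | ∃ k > 0, beattySeq (phi^2) k = x} :=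
  ⟨(n : ℤ), by exact_mod_cast h, by unfold beattySeq wb; rw [mul_comm]; norm_num⟩

lemma wythoff_cover (j : ℤ) (hj : 0 < j) :
    (∃ n : ℕ, 0 < n ∧ j = wa n) ∨ (∃ n : ℕ, 0 < n ∧ j = wb n) := by
  have hmem : j ∈ {x | ∃ k > 0, beattySeq phi k = x} ∆ {x | ∃ k > 0, beattySeq (phi^2) k = x} := by
    rw [beatty_main]; exact hj
  rw [Set.mem_symmDiff] at hmem
  rcases hmem with ⟨⟨k, hk, hkj⟩, -⟩ | ⟨⟨k, hk, hkj⟩, -⟩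
  · left
    refine ⟨k.toNat, by omega, ?_⟩
    rw [← hkj]; unfold beattySeq wa
    rw [mul_comm]
    congr 2
    exact_mod_cast (Int.toNat_of_nonneg hk.le).symm
  · right
    refine ⟨k.toNat, by omega, ?_⟩
    rw [← hkj]; unfold beattySeq wb
    rw [mul_comm]
    congr 2
    exact_mod_cast (Int.toNat_of_nonneg hk.le).symm

lemma wythoff_disjoint {n m : ℕ} (hn : 0 < n) (hm : 0 < m) : wa n ≠ wb m := by
  intro h
  have hpos : 0 < wa n := wa_pos hn
  have hmem : wa n ∈ {x | ∃ k > 0, beattySeq phi k = x} ∆ {x | ∃ k > 0, beattySeq (phi^2) k = x} := by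
    rw [beatty_main]; exact hpos
  rw [Set.mem_symmDiff] at hmem
  rcases hmem with ⟨-, h2⟩ | ⟨-, h2⟩
  · exact h2 (h ▸ mem_B hm)
  · exact h2 (mem_A hn)

lemma wb_strictMono : StrictMono wb := by
  intro a b h
  have h1 := wa_strictMono h
  have h2 := wb_eq a; have h3 := wb_eq b
  have : (a:ℤ) < (b:ℤ) := by exact_mod_cast h
  omega

lemma wa_inj {n m : ℕ} (h : wa n = wa m) : n = m := wa_strictMono.injective h
lemma wb_inj {n m : ℕ} (h : wb n = wb m) : n = m := wb_strictMono.injective h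

lemma I3 {n m : ℕ} (h : wa n = wb m) : n = 0 ∧ m = 0 := by
  rcases Nat.eq_zero_or_pos n with rfl | hn
  · have h1 := wb_eq m
    have h2 := wa_nonneg m
    have h3 := wa_zero
    constructor
    · rfl
    · omega
  rcases Nat.eq_zero_or_pos m with rfl | hm
  · have h1 := wb_eq 0
    have h2 := wa_pos hn
    have h3 := wa_zero
    omega
  · exact absurd h (wythoff_disjoint hn hm)


def SP (x y : ℕ) : Prop :=
  ∃ n : ℕ, ((x:ℤ) = wa n ∧ (y:ℤ) = wb n) ∨ ((x:ℤ) = wb n ∧ (y:ℤ) = wa n)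

lemma SP_closed {x y u v : ℕ} (h : SP x y) (hmv : WMove (x, y) (u, v)) : ¬ SP u v := by
  rintro ⟨m, hm⟩
  obtain ⟨n, hn⟩ := h
  have hbn := wb_eq n
  have hbm := wb_eq m
  have haz := wa_zero
  have hmv' : (u < x ∧ v = y) ∨ (u = x ∧ v < y) ∨
      (∃ k : ℕ, 0 < k ∧ k ≤ x ∧ k ≤ y ∧ u = x - k ∧ v = y - k) := hmv
  rcases hn with ⟨hx, hy⟩ | ⟨hx, hy⟩ <;> rcases hm with ⟨hu, hv⟩ | ⟨hu, hv⟩ <;>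
    rcases hmv' with ⟨h1, h2⟩ | ⟨h1, h2⟩ | ⟨k, hk0, hk1, hk2, hq1, hq2⟩
  -- L L
  · have e : m = n := wb_inj (by omega); subst e; omega
  · have e : m = n := wa_inj (by omega); subst e; omega
  · have e : m = n := by omega
    subst e; omega
  -- L R
  · obtain ⟨e1, e2⟩ := I3 (show wa m = wb n by omega); subst e1; subst e2; omega
  · obtain ⟨e1, e2⟩ := I3 (show wa n = wb m by omega); subst e1; subst e2; omega
  · have e1 : n = 0 := by omega
    have e2 : m = 0 := by omega
    subst e1; subst e2; omega
  -- R L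
  · obtain ⟨e1, e2⟩ := I3 (show wa n = wb m by omega); subst e1; subst e2; omega
  · obtain ⟨e1, e2⟩ := I3 (show wa m = wb n by omega); subst e1; subst e2; omega
  · have e1 : n = 0 := by omega
    have e2 : m = 0 := by omega
    subst e1; subst e2; omega
  -- R R
  · have e : m = n := wa_inj (by omega); subst e; omega
  · have e : m = n := wb_inj (by omega); subst e; omega
  · have e : m = n := by omega
    subst e; omega

lemma SP_zero : SP 0 0 :=
  ⟨0, Or.inl ⟨by simp [wa_zero], by simp [wb_eq, wa_zero]⟩⟩

lemma SP_symm {x y : ℕ} (h : SP x y) : SP y x := by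
  obtain ⟨n, h | h⟩ := h
  · exact ⟨n, Or.inr ⟨h.2, h.1⟩⟩
  · exact ⟨n, Or.inl ⟨h.2, h.1⟩⟩

lemma WMove_swap {x y u v : ℕ} (h : WMove (x, y) (u, v)) : WMove (y, x) (v, u) := by
  rcases h with ⟨h1, h2⟩ | ⟨h1, h2⟩ | ⟨k, hk0, hk1, hk2, hq1, hq2⟩
  · exact Or.inr (Or.inl ⟨h2, h1⟩)
  · exact Or.inl ⟨h2, h1⟩
  · exact Or.inr (Or.inr ⟨k, hk0, hk2, hk1, hq2, hq1⟩)

lemma SP_move_of_le {x y : ℕ} (hxy : x ≤ y) (h : ¬ SP x y) :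
    ∃ u v : ℕ, WMove (x, y) (u, v) ∧ SP u v := by
  rcases Nat.eq_zero_or_pos x with rfl | hx
  · rcases Nat.eq_zero_or_pos y with rfl | hy
    · exact absurd SP_zero h
    · exact ⟨0, 0, Or.inr (Or.inl ⟨rfl, hy⟩), SP_zero⟩
  · have hx' : (0:ℤ) < (x:ℤ) := by exact_mod_cast hx
    rcases wythoff_cover x hx' with ⟨n, hn, hxa⟩ | ⟨n, hn, hxb⟩
    · have hbn := wb_eq n
      rcases lt_trichotomy ((y:ℤ)) (wb n) with hlt | heq | hgt
      · -- diagonal move to (wa d, wb d) with d = y - x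
        have hdn : y - x < n := by omega
        have had : wa (y - x) < wa n := wa_strictMono hdn
        have h0d := wa_nonneg (y - x)
        have hbd := wb_eq (y - x)
        refine ⟨(wa (y - x)).toNat, y - (x - (wa (y - x)).toNat),
          Or.inr (Or.inr ⟨x - (wa (y - x)).toNat, by omega, by omega, by omega, by omega, rfl⟩),
          y - x, Or.inl ⟨by omega, by omega⟩⟩
      · exact absurd ⟨n, Or.inl ⟨hxa, heq⟩⟩ h
      · have h0n := wa_nonneg n
        exact ⟨x, (wb n).toNat, Or.inr (Or.inl ⟨rfl, by omega⟩), n, Or.inl ⟨hxa, by omega⟩⟩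
    · have hbn := wb_eq n
      have h0n := wa_nonneg n
      exact ⟨x, (wa n).toNat, Or.inr (Or.inl ⟨rfl, by omega⟩), n, Or.inr ⟨hxb, by omega⟩⟩

lemma SP_move {x y : ℕ} (h : ¬ SP x y) :
    ∃ u v : ℕ, WMove (x, y) (u, v) ∧ SP u v := by
  rcases le_total x y with hxy | hyx
  · exact SP_move_of_le hxy h
  · obtain ⟨u, v, hm, hs⟩ := SP_move_of_le hyx (fun hs => h (SP_symm hs))
    exact ⟨v, u, WMove_swap hm, SP_symm hs⟩

lemma WMove_sum_lt {x y u v : ℕ} (h : WMove (x, y) (u, v)) : u + v < x + y := by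
  rcases h with ⟨h1, h2⟩ | ⟨h1, h2⟩ | ⟨k, hk0, hk1, hk2, hq1, hq2⟩ <;> omega

theorem wythoff_main (B : Set (ℕ × ℕ))
    (hB : ∀ p : ℕ × ℕ, p ∈ B ↔ ∀ q, WMove p q → q ∉ B) :
    ∀ x y : ℕ, (x, y) ∈ B ↔ SP x y := by
  have key : ∀ s : ℕ, ∀ x y : ℕ, x + y ≤ s → ((x, y) ∈ B ↔ SP x y) := by
    intro s
    induction s with
    | zero =>
      intro x y hxy
      obtain ⟨rfl, rfl⟩ : x = 0 ∧ y = 0 := by omega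
      simp only [SP_zero, iff_true]
      rw [hB]
      rintro ⟨u, v⟩ hq
      exact absurd (WMove_sum_lt hq) (by omega)
    | succ s ih =>
      intro x y hxy
      constructor
      · intro hmem
        by_contra hns
        obtain ⟨u, v, hm, hs⟩ := SP_move hns
        have hlt := WMove_sum_lt hm
        have := (ih u v (by omega)).mpr hs
        exact (hB (x, y)).mp hmem (u, v) hm this
      · intro hs
        rw [hB]
        rintro ⟨u, v⟩ hq hmem
        have hlt := WMove_sum_lt hq
        exact SP_closed hs hq ((ih u v (by omega)).mp hmem)
  exact fun x y => key (x + y) x y le_rfl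

/-- The P-positions of natural Wythoff are exactly the pairs
`{(⌊φn⌋, ⌊φ²n⌋) : n ∈ ℕ} ∪ {(⌊φ²n⌋, ⌊φn⌋) : n ∈ ℕ}`. -/
theorem wythoff_P_positions (B : Set (ℕ × ℕ))
    (hB : ∀ p : ℕ × ℕ, p ∈ B ↔ ∀ q, WMove p q → q ∉ B) :
    ∀ x y : ℕ, (x, y) ∈ B ↔ ∃ n : ℕ,
      ((x : ℤ) = ⌊phi * n⌋ ∧ (y : ℤ) = ⌊phi ^ 2 * n⌋) ∨
      ((x : ℤ) = ⌊phi ^ 2 * n⌋ ∧ (y : ℤ) = ⌊phi * n⌋) := by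
  intro x y
  exact wythoff_main B hB x y
end
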